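/- arXiv:1108.4192 — 10 statements merged into one kernel-verified Lean document; each statement's English description precedes it below -/
import Mathlib

section
/- Let Γ be a countable group and μ ∈ ℝΓ a finitely supported symmetric probability measure on Γ (μ_s ≥ 0 for all s, Σ_{s∈Γ} μ_s = 1, and μ_{s⁻¹} = μ_s for all s). Then Σ_{k=0}^∞ (μ^k)_e < ∞ if and only if Σ_{k=0}^∞ ‖μ^k‖_∞ < ∞. -/
open Filter Topology
open scoped Classical

noncomputable section

/-- `f ∈ ℝΓ` is well-balanced: finitely supported, coefficients sum to `0`,
nonpositive off the identity, symmetric, and with support generating `Γ`. -/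
def WellBalancedR {G : Type*} [Group G] (f : G → ℝ) : Prop :=
  (Function.support f).Finite ∧ (∑ᶠ s : G, f s) = 0 ∧
    (∀ s : G, s ≠ 1 → f s ≤ 0) ∧ (∀ s : G, f s⁻¹ = f s) ∧
    Subgroup.closure (Function.support f) = ⊤

/-- Convolution `(uv)_w = ∑_s u_s v_{s⁻¹ w}` in `ℝΓ`. -/
def convR {G : Type*} [Group G] (u v : G → ℝ) : G → ℝ :=
  fun w => ∑ᶠ s : G, u s * v (s⁻¹ * w)

/-- Convolution powers `u^k` in `ℝΓ`, with `u^0 = δ_e`. -/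
def convPow {G : Type*} [Group G] (u : G → ℝ) : ℕ → G → ℝ
  | 0 => fun s => if s = 1 then 1 else 0
  | k + 1 => convR u (convPow u k)

/-- `μ ∈ ℝΓ` associated to a well-balanced `f`: `μ_e = 0`, `μ_s = -f_s/f_e` for `s ≠ e`. -/
def muOf {G : Type*} [Group G] (f : G → ℝ) : G → ℝ :=
  fun s => if s = 1 then 0 else -(f s) / f 1

/-- `ω_s = f_e⁻¹ ∑_{k≥0} (μ^k)_s`. -/
def omegaOf {G : Type*} [Group G] (f : G → ℝ) : G → ℝ :=
  fun s => (f 1)⁻¹ * ∑' k : ℕ, convPow (muOf f) k s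

section Aux

variable {G : Type*} [Group G]

instance : CoeFun (MonoidAlgebra ℝ G) (fun _ => G → ℝ) := ⟨fun x => x.coeff⟩

/-- The element of the monoid algebra associated to a finitely supported `μ : G → ℝ`. -/
def toMA (μ : G → ℝ) (hfin : (Function.support μ).Finite) : MonoidAlgebra ℝ G :=
  ⟨⟨hfin.toFinset, μ, fun a => by simp⟩⟩

lemma toMA_apply (μ : G → ℝ) (hfin : (Function.support μ).Finite) (s : G) :
    toMA μ hfin s = μ s := rfl

lemma finsum_mu_mul (μ : G → ℝ) (hfin : (Function.support μ).Finite) (v : G → ℝ) :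
    (∑ᶠ s : G, μ s * v s) = ∑ a ∈ hfin.toFinset, μ a * v a := by
  apply finsum_eq_sum_of_support_subset
  intro x hx
  simp only [Finset.coe_sort_coe, Finset.mem_coe, Set.Finite.mem_toFinset,
    Function.mem_support]
  intro h
  apply hx
  simp [Function.mem_support, h] at hx ⊢

lemma convPow_eq (μ : G → ℝ) (hfin : (Function.support μ).Finite) (k : ℕ) :
    convPow μ k = ⇑(toMA μ hfin ^ k) := by
  induction k with
  | zero =>
    funext s
    simp [convPow, MonoidAlgebra.one_def, MonoidAlgebra.coeff_single, Finsupp.single_apply, eq_comm]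
  | succ k ih =>
    funext w
    rw [pow_succ', MonoidAlgebra.coeff_mul_apply_left]
    show (∑ᶠ s : G, μ s * convPow μ k (s⁻¹ * w)) = _
    rw [ih, finsum_mu_mul μ hfin (fun s => (toMA μ hfin ^ k) (s⁻¹ * w))]
    rfl

lemma maPow_nonneg (μ : G → ℝ) (hfin : (Function.support μ).Finite)
    (hpos : ∀ s : G, 0 ≤ μ s) (k : ℕ) : ∀ s : G, 0 ≤ (toMA μ hfin ^ k) s := by
  induction k with
  | zero =>
    intro s
    rw [pow_zero, MonoidAlgebra.one_def, MonoidAlgebra.coeff_single, Finsupp.single_apply]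
    split <;> norm_num
  | succ k ih =>
    intro s
    rw [pow_succ', MonoidAlgebra.coeff_mul_apply_left]
    exact Finset.sum_nonneg fun a _ => mul_nonneg (hpos a) (ih _)

lemma maPow_mass (μ : G → ℝ) (hfin : (Function.support μ).Finite)
    (hsum : (∑ᶠ s : G, μ s) = 1) (k : ℕ) :
    ∑ a ∈ (toMA μ hfin ^ k).coeff.support, (toMA μ hfin ^ k) a = 1 := by
  have hlift : ∀ f : MonoidAlgebra ℝ G,
      MonoidAlgebra.lift ℝ ℝ G 1 f = ∑ a ∈ f.coeff.support, f a := by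
    intro f
    rw [MonoidAlgebra.lift_apply]
    simp [Finsupp.sum]
  have h1 : MonoidAlgebra.lift ℝ ℝ G 1 (toMA μ hfin) = 1 := by
    rw [hlift, ← hsum,
      finsum_eq_sum_of_support_subset μ (s := hfin.toFinset) (by simp)]
    rfl
  rw [← hlift, map_pow, h1, one_pow]

lemma maPow_le_one (μ : G → ℝ) (hfin : (Function.support μ).Finite)
    (hpos : ∀ s : G, 0 ≤ μ s) (hsum : (∑ᶠ s : G, μ s) = 1) (k : ℕ) (s : G) :
    (toMA μ hfin ^ k) s ≤ 1 := by
  by_cases hs : s ∈ (toMA μ hfin ^ k).coeff.support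
  · calc (toMA μ hfin ^ k) s ≤ ∑ a ∈ (toMA μ hfin ^ k).coeff.support, (toMA μ hfin ^ k) a :=
        Finset.single_le_sum (fun a _ => maPow_nonneg μ hfin hpos k a) hs
    _ = 1 := maPow_mass μ hfin hsum k
  · rw [Finsupp.notMem_support_iff.mp hs]; norm_num

lemma maPow_symm (μ : G → ℝ) (hfin : (Function.support μ).Finite)
    (hsymm : ∀ s : G, μ s⁻¹ = μ s) (k : ℕ) :
    ∀ s : G, (toMA μ hfin ^ k) s⁻¹ = (toMA μ hfin ^ k) s := by
  induction k with
  | zero =>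
    intro s
    rw [pow_zero, MonoidAlgebra.one_def]
    simp [MonoidAlgebra.coeff_single, Finsupp.single_apply, eq_comm, inv_eq_one]
  | succ k ih =>
    intro s
    have hLS : (toMA μ hfin ^ (k + 1)) s⁻¹ = (toMA μ hfin * toMA μ hfin ^ k) s⁻¹ := by
      rw [← pow_succ']
    have hRS : (toMA μ hfin ^ (k + 1)) s = (toMA μ hfin ^ k * toMA μ hfin) s := by
      rw [← pow_succ]
    rw [hLS, hRS, MonoidAlgebra.coeff_mul_apply_left, MonoidAlgebra.coeff_mul_apply_right]
    have hL : (toMA μ hfin).coeff.sum (fun a b => b * (toMA μ hfin ^ k) (a⁻¹ * s⁻¹)) =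
        ∑ᶠ a : G, μ a * (toMA μ hfin ^ k) (a⁻¹ * s⁻¹) :=
      (finsum_mu_mul μ hfin (fun a => (toMA μ hfin ^ k) (a⁻¹ * s⁻¹))).symm
    have hR : (toMA μ hfin).coeff.sum (fun a b => (toMA μ hfin ^ k) (s * a⁻¹) * b) =
        ∑ᶠ a : G, μ a * (toMA μ hfin ^ k) (s * a⁻¹) := by
      rw [finsum_mu_mul μ hfin (fun a => (toMA μ hfin ^ k) (s * a⁻¹))]
      exact Finset.sum_congr rfl fun a _ => mul_comm _ _
    rw [hL, hR]
    rw [← finsum_comp_equiv (Equiv.inv G)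
      (f := fun a => μ a * (toMA μ hfin ^ k) (a⁻¹ * s⁻¹))]
    apply finsum_congr
    intro a
    show μ a⁻¹ * (toMA μ hfin ^ k) (a⁻¹⁻¹ * s⁻¹) = _
    rw [hsymm, inv_inv]
    congr 1
    rw [← ih (a * s⁻¹)]
    congr 1
    group

lemma maPow_even_le (μ : G → ℝ) (hfin : (Function.support μ).Finite)
    (hpos : ∀ s : G, 0 ≤ μ s) (hsymm : ∀ s : G, μ s⁻¹ = μ s) (m : ℕ) (s : G) :
    (toMA μ hfin ^ (m + m)) s ≤ (toMA μ hfin ^ (m + m)) 1 := by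
  set F := toMA μ hfin with hF
  have hnn := maPow_nonneg μ hfin hpos
  have hsym := maPow_symm μ hfin hsymm
  set A := (F ^ m).coeff.support with hA
  set B := A ∪ A.image (fun u => s * u⁻¹) with hB
  have expand : ∀ w : G, (F ^ (m + m)) w = ∑ a ∈ A, (F ^ m) a * (F ^ m) (a⁻¹ * w) := by
    intro w
    rw [pow_add, MonoidAlgebra.coeff_mul_apply_left]
    rfl
  have h1 : (F ^ (m + m)) 1 = ∑ a ∈ A, ((F ^ m) a) ^ 2 := by
    rw [expand 1]
    apply Finset.sum_congr rfl
    intro a _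
    rw [mul_one, hsym m a, sq]
  have hBs : (F ^ (m + m)) s = ∑ a ∈ B, (F ^ m) a * (F ^ m) (a⁻¹ * s) := by
    rw [expand s]
    apply Finset.sum_subset Finset.subset_union_left
    intro x _ hx
    rw [Finsupp.notMem_support_iff.mp hx, zero_mul]
  have cs : ((F ^ (m + m)) s) ^ 2 ≤
      (∑ a ∈ B, ((F ^ m) a) ^ 2) * (∑ a ∈ B, ((F ^ m) (a⁻¹ * s)) ^ 2) := by
    rw [hBs]
    exact Finset.sum_mul_sq_le_sq_mul_sq _ _ _
  have e1 : ∑ a ∈ B, ((F ^ m) a) ^ 2 = (F ^ (m + m)) 1 := by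
    rw [h1]
    symm
    apply Finset.sum_subset Finset.subset_union_left
    intro x _ hx
    rw [Finsupp.notMem_support_iff.mp hx]
    ring
  have e2 : ∑ a ∈ B, ((F ^ m) (a⁻¹ * s)) ^ 2 = (F ^ (m + m)) 1 := by
    have hinj : ∀ x ∈ B, ∀ y ∈ B, x⁻¹ * s = y⁻¹ * s → x = y := by
      intro x _ y _ h
      have := mul_right_cancel h
      exact inv_injective this
    rw [← Finset.sum_image (g := fun a => a⁻¹ * s) (f := fun u => ((F ^ m) u) ^ 2) hinj]
    rw [h1]
    symm
    apply Finset.sum_subset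
    · intro u hu
      simp only [Finset.mem_image]
      refine ⟨s * u⁻¹, ?_, by group⟩
      rw [hB]
      apply Finset.mem_union_right
      exact Finset.mem_image_of_mem _ hu
    · intro x _ hx
      rw [Finsupp.notMem_support_iff.mp hx]
      ring
  rw [e1, e2] at cs
  nlinarith [hnn (m + m) s, hnn (m + m) 1]

lemma maPow_le (μ : G → ℝ) (hfin : (Function.support μ).Finite)
    (hpos : ∀ s : G, 0 ≤ μ s) (hsum : (∑ᶠ s : G, μ s) = 1)
    (hsymm : ∀ s : G, μ s⁻¹ = μ s) (k : ℕ) (s : G) :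
    (toMA μ hfin ^ k) s ≤ (toMA μ hfin ^ (2 * (k / 2))) 1 := by
  have hmass1 : ∑ a ∈ hfin.toFinset, μ a = 1 := by
    rw [← hsum]
    have := finsum_mu_mul μ hfin (fun _ => 1)
    simpa using this.symm
  rcases Nat.even_or_odd k with ⟨m, hm⟩ | ⟨m, hm⟩
  · subst hm
    have h2 : 2 * ((m + m) / 2) = m + m := by omega
    rw [h2]
    exact maPow_even_le μ hfin hpos hsymm m s
  · subst hm
    have h2 : 2 * ((2 * m + 1) / 2) = m + m := by omega
    rw [h2]
    have h3 : 2 * m + 1 = (m + m) + 1 := by ring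
    rw [h3, pow_succ', MonoidAlgebra.coeff_mul_apply_left]
    calc (toMA μ hfin).coeff.sum (fun a b => b * (toMA μ hfin ^ (m + m)) (a⁻¹ * s))
        ≤ ∑ a ∈ hfin.toFinset, μ a * (toMA μ hfin ^ (m + m)) 1 := by
          apply Finset.sum_le_sum
          intro a _
          exact mul_le_mul_of_nonneg_left (maPow_even_le μ hfin hpos hsymm m _) (hpos a)
      _ = (∑ a ∈ hfin.toFinset, μ a) * (toMA μ hfin ^ (m + m)) 1 :=
          (Finset.sum_mul _ _ _).symm
      _ = (toMA μ hfin ^ (m + m)) 1 := by rw [hmass1, one_mul]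

lemma summable_half (c : ℕ → ℝ) (hc0 : ∀ n, 0 ≤ c n) (hc : Summable c) :
    Summable fun k => c (k / 2) := by
  have key : ∀ n, ∑ i ∈ Finset.range (2 * n), c (i / 2) = 2 * ∑ i ∈ Finset.range n, c i := by
    intro n
    induction n with
    | zero => simp
    | succ n ih =>
      have h : 2 * (n + 1) = (2 * n) + 1 + 1 := by ring
      rw [h, Finset.sum_range_succ, Finset.sum_range_succ, ih, Finset.sum_range_succ]
      have h1 : 2 * n / 2 = n := by omega
      have h2 : (2 * n + 1) / 2 = n := by omega
      rw [h1, h2]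
      ring
  apply summable_of_sum_range_le (c := 2 * ∑' n, c n) (fun n => hc0 _)
  intro n
  calc ∑ i ∈ Finset.range n, c (i / 2)
      ≤ ∑ i ∈ Finset.range (2 * n), c (i / 2) :=
        Finset.sum_le_sum_of_subset_of_nonneg
          (Finset.range_subset_range.mpr (by omega)) (fun i _ _ => hc0 _)
    _ = 2 * ∑ i ∈ Finset.range n, c i := key n
    _ ≤ 2 * ∑' n, c n := by
        have := Summable.sum_le_tsum (Finset.range n) (fun i _ => hc0 i) hc
        linarith

end Aux

/-- For a finitely supported symmetric probability measure `μ` on a countable group `Γ`,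
`∑_k (μ^k)_e < ∞` iff `∑_k ‖μ^k‖_∞ < ∞`. -/
theorem stmt4 {G : Type*} [Group G] [Countable G]
    (μ : G → ℝ) (hfin : (Function.support μ).Finite)
    (hpos : ∀ s : G, 0 ≤ μ s) (hsum : (∑ᶠ s : G, μ s) = 1)
    (hsymm : ∀ s : G, μ s⁻¹ = μ s) :
    Summable (fun k : ℕ => convPow μ k 1) ↔
      Summable (fun k : ℕ => ⨆ s : G, |convPow μ k s|) := by
  have hne : Nonempty G := ⟨1⟩
  have hconv : ∀ k, convPow μ k = ⇑(toMA μ hfin ^ k) := convPow_eq μ hfin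
  have hnn : ∀ k s, 0 ≤ (toMA μ hfin ^ k) s := maPow_nonneg μ hfin hpos
  have hle1 : ∀ k s, (toMA μ hfin ^ k) s ≤ 1 := maPow_le_one μ hfin hpos hsum
  have hbound : ∀ k s, (toMA μ hfin ^ k) s ≤ (toMA μ hfin ^ (2 * (k / 2))) 1 :=
    maPow_le μ hfin hpos hsum hsymm
  simp only [hconv]
  constructor
  · intro h
    have hinj : Function.Injective (fun m : ℕ => 2 * m) := fun a b hab => by
      simpa using hab
    have hc : Summable (fun m : ℕ => (toMA μ hfin ^ (2 * m)) 1) := by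
      have := h.comp_injective hinj
      exact this
    have hd : Summable (fun k : ℕ => (toMA μ hfin ^ (2 * (k / 2))) 1) :=
      summable_half (fun m => (toMA μ hfin ^ (2 * m)) 1) (fun m => hnn _ 1) hc
    apply Summable.of_nonneg_of_le
      (fun k => Real.iSup_nonneg fun s => abs_nonneg _) _ hd
    intro k
    apply ciSup_le
    intro s
    rw [abs_of_nonneg (hnn k s)]
    exact hbound k s
  · intro h
    apply Summable.of_nonneg_of_le (fun k => hnn k 1) _ h
    intro k
    have hb : BddAbove (Set.range fun s : G => |(toMA μ hfin ^ k) s|) := by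
      refine ⟨1, ?_⟩
      rintro x ⟨s, rfl⟩
      show |(toMA μ hfin ^ k) s| ≤ 1
      rw [abs_of_nonneg (hnn k s)]
      exact hle1 k s
    calc (toMA μ hfin ^ k) 1 = |(toMA μ hfin ^ k) 1| := (abs_of_nonneg (hnn k 1)).symm
      _ ≤ _ := le_ciSup hb 1
end
end

section
/- Let Γ be a countably infinite group, f ∈ ℝΓ well-balanced, μ ∈ ℝΓ given by μ_e = 0 and μ_s = −f_s/f_e for s ≠ e, assume Σ_{k=0}^∞ ‖μ^k‖_∞ < ∞, and set ω_s = f_e^{-1} Σ_{k=0}^∞ (μ^k)_s. Let g : Γ → ℝ tend to 0 along the cofinite filter on Γ, and suppose gf ∈ ℓ¹(Γ), i.e. Σ_{w∈Γ} |(gf)_w| < ∞ where (gf)_w = Σ_{s∈Γ} g_{ws⁻¹} f_s (a finite sum over the support of f). Then (gf)ω = g: for every w ∈ Γ, the series Σ_{t∈Γ} (gf)_t ω_{t⁻¹w} converges absolutely and equals g_w. -/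
open Filter Topology
open scoped Classical Pointwise
open Function

noncomputable section

-- helper: tsum = finsum for finitely supported
lemma myTsumEqFinsum {α : Type*} (x : α → ℝ) (hx : (Function.support x).Finite) :
    ∑' s, x s = ∑ᶠ s, x s := by
  have h1 : ∑' s, x s = ∑ s ∈ hx.toFinset, x s :=
    tsum_eq_sum (fun b hb => by simpa using hb)
  have h2 : ∑ᶠ s, x s = ∑ s ∈ hx.toFinset, x s :=
    finsum_eq_sum_of_support_subset x (by simp)
  rw [h1, h2]

lemma myF1Pos {G : Type*} [Group G] [Nontrivial G] (f : G → ℝ) (hf : WellBalancedR f) :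
    0 < f 1 := by
  obtain ⟨hfin, hsum0, hle, hsymm, hgen⟩ := hf
  by_contra h
  push_neg at h
  have hall : ∀ s, f s ≤ 0 := fun s => by
    by_cases hs : s = 1
    · subst hs; exact h
    · exact hle s hs
  have hsum' : ∑ s ∈ hfin.toFinset, f s = 0 := by
    rw [← finsum_eq_sum_of_support_subset f (by simp)]; exact hsum0
  have hzero : ∀ s, f s = 0 := by
    intro s
    by_cases hs : f s = 0
    · exact hs
    · exact (Finset.sum_eq_zero_iff_of_nonpos (fun i _ => hall i)).mp hsum' s (by simpa using hs)
  have hse : Function.support f = ∅ := by ext s; simp [hzero]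
  rw [hse, Subgroup.closure_empty] at hgen
  exact bot_ne_top hgen

lemma myConvPowProp {G : Type*} [Group G] (μ : G → ℝ) (hμfin : (Function.support μ).Finite)
    (hμnn : ∀ s, 0 ≤ μ s) (hμ1 : ∑ᶠ s, μ s = 1) :
    ∀ k, (Function.support (convPow μ k)).Finite ∧ (∀ s, 0 ≤ convPow μ k s) ∧
      ∑ᶠ s, convPow μ k s = 1 := by
  intro k
  induction k with
  | zero =>
    refine ⟨Set.Finite.subset (Set.finite_singleton 1) ?_, fun s => ?_, ?_⟩
    · intro s hs
      simp only [convPow, Function.mem_support, ne_eq, ite_eq_right_iff] at hs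
      simp only [Set.mem_singleton_iff]
      by_contra hne
      exact hs (fun h => absurd h hne)
    · simp only [convPow]; positivity
    · rw [finsum_eq_single _ (1 : G) (fun x hx => by simp [convPow, hx])]
      simp [convPow]
  | succ k ih =>
    obtain ⟨hvfin, hvnn, hv1⟩ := ih
    set v := convPow μ k with hv
    have hsupp_int : ∀ w : G, (Function.support fun s => μ s * v (s⁻¹ * w)) ⊆ hμfin.toFinset := by
      intro w s hs
      simp only [Function.mem_support] at hs
      simp only [Set.Finite.coe_toFinset, Function.mem_support]
      intro h0; exact hs (by rw [h0, zero_mul])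
    have hconv_eq : ∀ w, convPow μ (k+1) w = ∑ s ∈ hμfin.toFinset, μ s * v (s⁻¹ * w) := by
      intro w
      show convR μ v w = _
      exact finsum_eq_sum_of_support_subset _ (hsupp_int w)
    have hsupp : Function.support (convPow μ (k+1)) ⊆ Function.support μ * Function.support v := by
      intro w hw
      rw [Function.mem_support, hconv_eq] at hw
      obtain ⟨s, _, hs0⟩ := Finset.exists_ne_zero_of_sum_ne_zero hw
      refine ⟨s, by
        simp only [Function.mem_support]; intro h0; exact hs0 (by rw [h0, zero_mul]),
        s⁻¹ * w, by
        simp only [Function.mem_support]; intro h0; exact hs0 (by rw [h0, mul_zero]), by group⟩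
    refine ⟨(hμfin.mul hvfin).subset hsupp, fun w => ?_, ?_⟩
    · rw [hconv_eq]
      exact Finset.sum_nonneg fun s _ => mul_nonneg (hμnn s) (hvnn _)
    · have hWfin : (Function.support μ * Function.support v).Finite := hμfin.mul hvfin
      rw [finsum_eq_sum_of_support_subset _ (show Function.support (convPow μ (k+1)) ⊆
          (hWfin.toFinset : Set G) by simpa using hsupp)]
      calc ∑ w ∈ hWfin.toFinset, convPow μ (k+1) w
          = ∑ w ∈ hWfin.toFinset, ∑ s ∈ hμfin.toFinset, μ s * v (s⁻¹ * w) := by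
            exact Finset.sum_congr rfl fun w _ => hconv_eq w
        _ = ∑ s ∈ hμfin.toFinset, ∑ w ∈ hWfin.toFinset, μ s * v (s⁻¹ * w) := Finset.sum_comm
        _ = ∑ s ∈ hμfin.toFinset, μ s * ∑ w ∈ hWfin.toFinset, v (s⁻¹ * w) := by
            simp [Finset.mul_sum]
        _ = ∑ s ∈ hμfin.toFinset, μ s * 1 := by
            refine Finset.sum_congr rfl fun s hs => ?_
            have hsμ : s ∈ Function.support μ := by simpa using hs
            have : ∑ w ∈ hWfin.toFinset, v (s⁻¹ * w) = ∑ᶠ w, v (s⁻¹ * w) := by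
              refine (finsum_eq_sum_of_support_subset _ ?_).symm
              intro w hw
              simp only [Function.mem_support] at hw
              simp only [Set.Finite.coe_toFinset]
              exact ⟨s, hsμ, s⁻¹ * w, hw, by group⟩
            have he := finsum_comp_equiv (Equiv.mulLeft s⁻¹) (f := v)
            simp only [Equiv.coe_mulLeft] at he
            rw [this, he, hv1]
        _ = 1 := by
            simp only [mul_one]
            rw [← finsum_eq_sum_of_support_subset μ (by simp)]; exact hμ1

lemma myMain {G : Type*} [Group G] (μ : G → ℝ) (hμfin : (Function.support μ).Finite)
    (hμnn : ∀ s, 0 ≤ μ s) (hμ1 : ∑ᶠ s : G, μ s = 1)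
    (hsum : Summable (fun k : ℕ => ⨆ s : G, |convPow μ k s|))
    (g h : G → ℝ) (hg0 : Tendsto g cofinite (𝓝 0))
    (f1 : ℝ) (hf1 : 0 < f1)
    (hdec : ∀ t, h t = f1 * g t - f1 * ∑ᶠ s : G, g (t * s⁻¹) * μ s)
    (hgf : Summable (fun t : G => |h t|)) (w : G) :
    Summable (fun t : G => |h t * (f1⁻¹ * ∑' k : ℕ, convPow μ k (t⁻¹ * w))|) ∧
      (∑' t : G, h t * (f1⁻¹ * ∑' k : ℕ, convPow μ k (t⁻¹ * w))) = g w := by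
  have hP := myConvPowProp μ hμfin hμnn hμ1
  set P : ℕ → G → ℝ := convPow μ with hPdef
  have hPfin : ∀ k, (Function.support (P k)).Finite := fun k => (hP k).1
  have hPnn : ∀ k s, 0 ≤ P k s := fun k => (hP k).2.1
  have hP1 : ∀ k, ∑ᶠ s : G, P k s = 1 := fun k => (hP k).2.2
  have hPle1 : ∀ k s, P k s ≤ 1 := by
    intro k s
    by_cases hs : P k s = 0
    · rw [hs]; exact zero_le_one
    · have hmem : s ∈ (hPfin k).toFinset := by simpa using hs
      calc P k s ≤ ∑ u ∈ (hPfin k).toFinset, P k u :=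
            Finset.single_le_sum (fun i _ => hPnn k i) hmem
        _ = 1 := by rw [← finsum_eq_sum_of_support_subset _ (by simp), hP1 k]
  have habs : ∀ k s, |P k s| = P k s := fun k s => abs_of_nonneg (hPnn k s)
  have hSbdd : ∀ k, BddAbove (Set.range fun s : G => |P k s|) := fun k =>
    ⟨1, by rintro x ⟨s, rfl⟩; show |P k s| ≤ 1; rw [habs]; exact hPle1 k s⟩
  set S : ℕ → ℝ := fun k => ⨆ s : G, |P k s| with hSdef
  have hSle : ∀ k s, P k s ≤ S k := fun k s =>
    (le_abs_self _).trans (le_ciSup (hSbdd k) s)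
  have hSnn : ∀ k, 0 ≤ S k := fun k =>
    le_trans (abs_nonneg (P k 1)) (le_ciSup (hSbdd k) 1)
  have hsumS : Summable S := hsum
  have hS0 : Tendsto S atTop (𝓝 0) := hsumS.tendsto_atTop_zero
  set Cω : ℝ := ∑' k, S k with hCωdef
  have hPsummK : ∀ s, Summable fun k => P k s := fun s =>
    Summable.of_nonneg_of_le (fun k => hPnn k s) (fun k => hSle k s) hsumS
  have hωnn : ∀ s, 0 ≤ ∑' k, P k s := fun s => tsum_nonneg fun k => hPnn k s
  have hωle : ∀ s, (∑' k, P k s) ≤ Cω := fun s =>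
    Summable.tsum_le_tsum (fun k => hSle k s) (hPsummK s) hsumS
  -- finite support of t ↦ x t * P k (t⁻¹ * w')
  have hTfin : ∀ (k : ℕ) (x : G → ℝ) (w' : G),
      (Function.support fun t => x t * P k (t⁻¹ * w')).Finite := by
    intro k x w'
    apply ((hPfin k).image (fun u => w' * u⁻¹)).subset
    intro t ht
    simp only [Function.mem_support] at ht
    have hpk : P k (t⁻¹ * w') ≠ 0 := fun h0 => ht (by rw [h0, mul_zero])
    exact ⟨t⁻¹ * w', hpk, by group⟩
  have hTsum : ∀ (k : ℕ) (x : G → ℝ) (w' : G),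
      Summable fun t => x t * P k (t⁻¹ * w') := fun k x w' =>
    summable_of_finite_support (hTfin k x w')
  have hTfinAbs : ∀ (k : ℕ) (x : G → ℝ) (w' : G),
      (Function.support fun t => |x t * P k (t⁻¹ * w')|).Finite := by
    intro k x w'
    apply (hTfin k x w').subset
    intro t ht
    simp only [Function.mem_support, abs_ne_zero] at ht ⊢
    exact ht
  -- translated total mass
  have htrans : ∀ (k : ℕ) (w' : G), ∑' t : G, P k (t⁻¹ * w') = 1 := by
    intro k w'
    let e : G ≃ G :=
      ⟨fun u => w' * u⁻¹, fun t => t⁻¹ * w', fun u => by group, fun t => by group⟩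
    have he := e.tsum_eq (fun t => P k (t⁻¹ * w'))
    rw [← he]
    have harg : ∀ u : G, (e u)⁻¹ * w' = u := by
      intro u
      show (w' * u⁻¹)⁻¹ * w' = u
      group
    calc ∑' u, P k ((e u)⁻¹ * w') = ∑' u, P k u := by
          exact tsum_congr fun u => by rw [harg]
      _ = 1 := by rw [myTsumEqFinsum _ (hPfin k), hP1 k]
  -- pieces
  set q : G → ℝ := fun t => ∑ᶠ s : G, g (t * s⁻¹) * μ s with hqdef
  set B : ℕ → ℝ := fun k => ∑' t : G, g t * P k (t⁻¹ * w) with hBdef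
  have hB0 : B 0 = g w := by
    have h1 : ∀ t : G, t ≠ w → g t * P 0 (t⁻¹ * w) = 0 := by
      intro t ht
      have : P 0 (t⁻¹ * w) = 0 := by
        show (if t⁻¹ * w = 1 then (1:ℝ) else 0) = 0
        rw [if_neg]
        intro hc
        exact ht (by
          have := congrArg (fun x => t * x) hc
          simpa [mul_assoc] using this.symm)
      rw [this, mul_zero]
    rw [hBdef]
    simp only
    rw [tsum_eq_single w h1]
    show g w * (if w⁻¹ * w = 1 then (1:ℝ) else 0) = g w
    simp
  -- key convolution identity
  have hC2 : ∀ k, (∑' t : G, q t * P k (t⁻¹ * w)) = B (k + 1) := by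
    intro k
    have hsuppμ : ∀ (t : G), (Function.support fun s => g (t * s⁻¹) * μ s * P k (t⁻¹ * w))
        ⊆ Function.support μ := by
      intro t s hs
      simp only [Function.mem_support] at hs ⊢
      intro h0
      exact hs (by rw [h0, mul_zero, zero_mul])
    have hsumF : Summable (fun p : G × G => g (p.1 * p.2⁻¹) * μ p.2 * P k (p.1⁻¹ * w)) := by
      apply summable_of_finite_support
      apply ((((hPfin k).image (fun u => w * u⁻¹)).prod hμfin)).subset
      rintro ⟨t, s⟩ hp
      simp only [Function.mem_support] at hp
      have hμs : μ s ≠ 0 := fun h0 => hp (by rw [h0, mul_zero, zero_mul])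
      have hpk : P k (t⁻¹ * w) ≠ 0 := fun h0 => hp (by rw [h0, mul_zero])
      exact ⟨⟨t⁻¹ * w, hpk, by group⟩, hμs⟩
    have hsumF2 : Summable (fun p : G × G =>
        g p.1 * μ p.2 * P k (p.2⁻¹ * (p.1⁻¹ * w))) := by
      apply summable_of_finite_support
      apply (((hPfin k).prod hμfin).image (fun z : G × G => (w * z.1⁻¹ * z.2⁻¹, z.2))).subset
      rintro ⟨t, s⟩ hp
      simp only [Function.mem_support] at hp
      have hμs : μ s ≠ 0 := fun h0 => hp (by rw [h0, mul_zero, zero_mul])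
      have hpk : P k (s⁻¹ * (t⁻¹ * w)) ≠ 0 := fun h0 => hp (by rw [h0, mul_zero])
      refine ⟨(s⁻¹ * (t⁻¹ * w), s), ⟨hpk, hμs⟩, ?_⟩
      show (w * (s⁻¹ * (t⁻¹ * w))⁻¹ * s⁻¹, s) = (t, s)
      have hw : w * (s⁻¹ * (t⁻¹ * w))⁻¹ * s⁻¹ = t := by group
      rw [hw]
    have step1 : (∑' t : G, q t * P k (t⁻¹ * w)) =
        ∑' t : G, ∑' s : G, g (t * s⁻¹) * μ s * P k (t⁻¹ * w) := by
      apply tsum_congr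
      intro t
      have hq1 : q t * P k (t⁻¹ * w) = ∑ᶠ s : G, g (t * s⁻¹) * μ s * P k (t⁻¹ * w) := by
        rw [hqdef]
        simp only
        rw [finsum_mul]
      rw [hq1, ← myTsumEqFinsum _ ((hμfin.subset (hsuppμ t)))]
    have step2 : (∑' t : G, ∑' s : G, g (t * s⁻¹) * μ s * P k (t⁻¹ * w)) =
        ∑' s : G, ∑' t : G, g (t * s⁻¹) * μ s * P k (t⁻¹ * w) :=
      (Summable.tsum_comm (f := fun t s => g (t * s⁻¹) * μ s * P k (t⁻¹ * w)) hsumF).symm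
    have step3 : ∀ s : G, (∑' t : G, g (t * s⁻¹) * μ s * P k (t⁻¹ * w)) =
        ∑' t : G, g t * μ s * P k (s⁻¹ * (t⁻¹ * w)) := by
      intro s
      rw [← Equiv.tsum_eq (Equiv.mulRight s) (fun t => g (t * s⁻¹) * μ s * P k (t⁻¹ * w))]
      apply tsum_congr
      intro t
      simp only [Equiv.coe_mulRight]
      have h1 : t * s * s⁻¹ = t := by group
      have h2 : (t * s)⁻¹ * w = s⁻¹ * (t⁻¹ * w) := by group
      rw [h1, h2]
    have step4 : (∑' s : G, ∑' t : G, g t * μ s * P k (s⁻¹ * (t⁻¹ * w))) =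
        ∑' t : G, ∑' s : G, g t * μ s * P k (s⁻¹ * (t⁻¹ * w)) := by
      exact Summable.tsum_comm (f := fun t s => g t * μ s * P k (s⁻¹ * (t⁻¹ * w))) hsumF2
    have step5 : ∀ t : G, (∑' s : G, g t * μ s * P k (s⁻¹ * (t⁻¹ * w))) =
        g t * P (k + 1) (t⁻¹ * w) := by
      intro t
      have h1 : ∀ s : G, g t * μ s * P k (s⁻¹ * (t⁻¹ * w)) =
          g t * (μ s * P k (s⁻¹ * (t⁻¹ * w))) := fun s => by ring
      rw [tsum_congr h1, tsum_mul_left]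
      congr 1
      have h2 : P (k + 1) (t⁻¹ * w) = ∑ᶠ s : G, μ s * P k (s⁻¹ * (t⁻¹ * w)) := rfl
      rw [h2, myTsumEqFinsum _ (hμfin.subset (by
        intro s hs
        simp only [Function.mem_support] at hs ⊢
        intro h0
        exact hs (by rw [h0, zero_mul])))]
    rw [step1, step2, tsum_congr step3, step4, tsum_congr step5]
  set A : ℕ → ℝ := fun k => ∑' t : G, h t * P k (t⁻¹ * w) with hAdef
  have hAeq : ∀ k, A k = f1 * B k - f1 * B (k + 1) := by
    intro k
    have h1 : ∀ t, h t * P k (t⁻¹ * w) =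
        f1 * (g t * P k (t⁻¹ * w)) - f1 * (q t * P k (t⁻¹ * w)) := by
      intro t; rw [hdec t]; show _ = _; ring
    rw [hAdef]
    simp only
    rw [tsum_congr h1, Summable.tsum_sub ((hTsum k g w).mul_left f1) ((hTsum k q w).mul_left f1),
      tsum_mul_left, tsum_mul_left, hC2 k]
  have hAbd : ∀ k, |A k| ≤ (∑' t, |h t|) * S k := by
    intro k
    have hs1 : Summable fun t => |h t * P k (t⁻¹ * w)| :=
      summable_of_finite_support (hTfinAbs k h w)
    have h1 : |A k| ≤ ∑' t, |h t * P k (t⁻¹ * w)| := by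
      have h0 := norm_tsum_le_tsum_norm (f := fun t => h t * P k (t⁻¹ * w))
        (by simpa only [Real.norm_eq_abs] using hs1)
      simpa only [Real.norm_eq_abs] using h0
    have h2 : (∑' t, |h t * P k (t⁻¹ * w)|) ≤ ∑' t, |h t| * S k := by
      apply Summable.tsum_le_tsum _ hs1 (hgf.mul_right (S k))
      intro t
      rw [abs_mul, habs]
      exact mul_le_mul_of_nonneg_left (hSle k _) (abs_nonneg _)
    calc |A k| ≤ ∑' t, |h t| * S k := le_trans h1 h2
      _ = (∑' t, |h t|) * S k := tsum_mul_right
  have hAsumm : Summable A :=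
    (Summable.of_nonneg_of_le (fun k => abs_nonneg _) hAbd (hsumS.mul_left _)).of_abs
  -- B tends to 0
  have hB0lim : Tendsto B atTop (𝓝 0) := by
    rw [Metric.tendsto_atTop]
    intro ε hε
    have hev : ∀ᶠ t in cofinite, |g t| < ε / 2 := by
      have := Metric.tendsto_nhds.mp hg0 (ε / 2) (by positivity)
      simpa [Real.dist_eq] using this
    have hK : {t : G | ¬ |g t| < ε / 2}.Finite := Filter.eventually_cofinite.mp hev
    set K := hK.toFinset with hKdef
    set CK : ℝ := ∑ t ∈ K, |g t| with hCKdef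
    have hCK : 0 ≤ CK := Finset.sum_nonneg fun t _ => abs_nonneg _
    set δ : ℝ := (ε / 2) / (CK + 1) with hδdef
    have hδ : 0 < δ := by positivity
    obtain ⟨N, hN⟩ := Metric.tendsto_atTop.mp hS0 δ hδ
    refine ⟨N, fun n hn => ?_⟩
    have hSn : S n < δ := by
      have := hN n hn
      rwa [Real.dist_eq, sub_zero, abs_of_nonneg (hSnn n)] at this
    rw [Real.dist_eq, sub_zero]
    have hs1 : Summable fun t => |g t * P n (t⁻¹ * w)| :=
      summable_of_finite_support (hTfinAbs n g w)
    have habs1 : |B n| ≤ ∑' t, |g t * P n (t⁻¹ * w)| := by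
      have h0 := norm_tsum_le_tsum_norm (f := fun t => g t * P n (t⁻¹ * w))
        (by simpa only [Real.norm_eq_abs] using hs1)
      simpa only [Real.norm_eq_abs] using h0
    have hsum1 : Summable (fun t : G => if t ∈ K then |g t| * S n else 0) := by
      apply summable_of_finite_support
      apply (K.finite_toSet).subset
      intro t ht
      simp only [Function.mem_support] at ht
      by_contra hc
      exact ht (if_neg hc)
    have hsum2 : Summable (fun t : G => (ε / 2) * P n (t⁻¹ * w)) := hTsum n (fun _ => ε / 2) w
    have hle : ∀ t, |g t * P n (t⁻¹ * w)| ≤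
        (if t ∈ K then |g t| * S n else 0) + (ε / 2) * P n (t⁻¹ * w) := by
      intro t
      rw [abs_mul, habs]
      by_cases ht : t ∈ K
      · rw [if_pos ht]
        have h1 : |g t| * P n (t⁻¹ * w) ≤ |g t| * S n :=
          mul_le_mul_of_nonneg_left (hSle n _) (abs_nonneg _)
        have h2 : (0:ℝ) ≤ (ε / 2) * P n (t⁻¹ * w) :=
          mul_nonneg (by positivity) (hPnn n _)
        linarith
      · rw [if_neg ht]
        have hgt : |g t| ≤ ε / 2 := by
          have h3 : t ∉ {t : G | ¬ |g t| < ε / 2} := by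
            intro hc
            exact ht (by rw [hKdef]; simpa using hc)
          simp only [Set.mem_setOf_eq, not_not] at h3
          exact le_of_lt h3
        have := mul_le_mul_of_nonneg_right hgt (hPnn n (t⁻¹ * w))
        linarith
    have hbound : (∑' t, |g t * P n (t⁻¹ * w)|) ≤ CK * S n + ε / 2 := by
      calc (∑' t, |g t * P n (t⁻¹ * w)|)
          ≤ ∑' t, ((if t ∈ K then |g t| * S n else 0) + (ε / 2) * P n (t⁻¹ * w)) :=
            Summable.tsum_le_tsum hle hs1 (hsum1.add hsum2)
        _ = (∑' t, if t ∈ K then |g t| * S n else 0) + ∑' t, (ε / 2) * P n (t⁻¹ * w) :=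
            Summable.tsum_add hsum1 hsum2
        _ = CK * S n + ε / 2 := by
            rw [tsum_eq_sum (s := K) (fun t ht => if_neg ht), tsum_mul_left, htrans n w,
              mul_one]
            congr 1
            rw [hCKdef, Finset.sum_mul]
            exact Finset.sum_congr rfl fun t ht => if_pos ht
    have hfin : CK * S n + ε / 2 < ε := by
      have h1 : CK * S n ≤ CK * δ := mul_le_mul_of_nonneg_left (le_of_lt hSn) hCK
      have h2 : CK * δ < (CK + 1) * δ := mul_lt_mul_of_pos_right (by linarith) hδ
      have h3 : (CK + 1) * δ = ε / 2 := by
        rw [hδdef]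
        field_simp
      linarith
    exact lt_of_le_of_lt (le_trans habs1 hbound) hfin
  -- telescoping
  have htel : ∀ n, (∑ k ∈ Finset.range n, A k) = f1 * g w - f1 * B n := by
    intro n
    calc (∑ k ∈ Finset.range n, A k)
        = ∑ k ∈ Finset.range n, ((fun j => f1 * B j) k - (fun j => f1 * B j) (k + 1)) :=
          Finset.sum_congr rfl fun k _ => hAeq k
      _ = f1 * B 0 - f1 * B n := Finset.sum_range_sub' (fun j => f1 * B j) n
      _ = f1 * g w - f1 * B n := by rw [hB0]
  have hlim1 : Tendsto (fun n => ∑ k ∈ Finset.range n, A k) atTop (𝓝 (∑' k, A k)) :=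
    hAsumm.hasSum.tendsto_sum_nat
  have hlim1' : Tendsto (fun n => f1 * g w - f1 * B n) atTop (𝓝 (∑' k, A k)) :=
    hlim1.congr htel
  have hlim2 : Tendsto (fun n => f1 * g w - f1 * B n) atTop (𝓝 (f1 * g w - f1 * 0)) :=
    tendsto_const_nhds.sub (hB0lim.const_mul f1)
  have hAtsum : (∑' k, A k) = f1 * g w := by
    have := tendsto_nhds_unique hlim1' hlim2
    simpa using this
  constructor
  · apply Summable.of_nonneg_of_le (fun t => abs_nonneg _) _ (hgf.mul_right (f1⁻¹ * Cω))
    intro t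
    rw [abs_mul]
    refine mul_le_mul_of_nonneg_left ?_ (abs_nonneg _)
    rw [abs_mul, abs_of_nonneg (le_of_lt (inv_pos.mpr hf1)), abs_of_nonneg (hωnn _)]
    exact mul_le_mul_of_nonneg_left (hωle _) (le_of_lt (inv_pos.mpr hf1))
  · have e1 : ∀ t, h t * (f1⁻¹ * ∑' k, P k (t⁻¹ * w)) =
        f1⁻¹ * ∑' k, h t * P k (t⁻¹ * w) := by
      intro t
      rw [tsum_mul_left]
      ring
    rw [tsum_congr e1, tsum_mul_left]
    have huncur : Summable (Function.uncurry fun t (k : ℕ) => h t * P k (t⁻¹ * w)) := by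
      apply Summable.of_abs
      apply Summable.of_nonneg_of_le (fun p => abs_nonneg _) _
        (hgf.mul_of_nonneg hsumS (fun t => abs_nonneg _) hSnn)
      rintro ⟨t, k⟩
      show |h t * P k (t⁻¹ * w)| ≤ |h t| * S k
      rw [abs_mul, habs]
      exact mul_le_mul_of_nonneg_left (hSle k _) (abs_nonneg _)
    have hswap : (∑' t : G, ∑' k : ℕ, h t * P k (t⁻¹ * w)) =
        ∑' k : ℕ, ∑' t : G, h t * P k (t⁻¹ * w) :=
      (Summable.tsum_comm (f := fun t (k : ℕ) => h t * P k (t⁻¹ * w)) huncur).symm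
    rw [hswap]
    have : (∑' k : ℕ, ∑' t : G, h t * P k (t⁻¹ * w)) = ∑' k, A k := rfl
    rw [this, hAtsum]
    field_simp

/-- If `g ∈ C₀(Γ)` and `gf ∈ ℓ¹(Γ)` then `(gf)ω = g`. -/
theorem stmt5 {G : Type*} [Group G] [Countable G] [Infinite G]
    (f : G → ℝ) (hf : WellBalancedR f)
    (hsum : Summable (fun k : ℕ => ⨆ s : G, |convPow (muOf f) k s|))
    (g : G → ℝ) (hg0 : Tendsto g cofinite (𝓝 0))
    (hgf : Summable (fun w : G => |∑ᶠ s : G, g (w * s⁻¹) * f s|)) :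
    ∀ w : G,
      Summable (fun t : G => |(∑ᶠ s : G, g (t * s⁻¹) * f s) * omegaOf f (t⁻¹ * w)|) ∧
      (∑' t : G, (∑ᶠ s : G, g (t * s⁻¹) * f s) * omegaOf f (t⁻¹ * w)) = g w := by
  intro w
  have hf1 : 0 < f 1 := myF1Pos f hf
  obtain ⟨hffin, hfsum, hfle, hfsymm, hfgen⟩ := hf
  have hμnn : ∀ s : G, 0 ≤ muOf f s := by
    intro s
    unfold muOf
    split
    · exact le_refl 0
    · rename_i hs
      apply div_nonneg _ (le_of_lt hf1)
      linarith [hfle s hs]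
  have hμsupp : Function.support (muOf f) ⊆ Function.support f := by
    intro s hs
    simp only [Function.mem_support, muOf] at hs ⊢
    intro h0
    apply hs
    split
    · rfl
    · rw [h0]; simp
  have hμfin : (Function.support (muOf f)).Finite := hffin.subset hμsupp
  have hdecf : ∀ s : G, f s = (if s = 1 then f 1 else 0) - f 1 * muOf f s := by
    intro s
    unfold muOf
    by_cases hs : s = 1
    · simp [hs]
    · rw [if_neg hs, if_neg hs]
      field_simp
      ring
  have hμ1 : ∑ᶠ s : G, muOf f s = 1 := by
    have hrep : ∀ s : G, muOf f s =
        (f 1)⁻¹ * (if s = 1 then f 1 else 0) - (f 1)⁻¹ * f s := by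
      intro s
      have h1 := hdecf s
      have h2 : f 1 * muOf f s = (if s = 1 then f 1 else 0) - f s := by linarith
      have h3 : muOf f s = (f 1)⁻¹ * ((if s = 1 then f 1 else 0) - f s) := by
        field_simp
        linarith
      rw [h3]; ring
    rw [finsum_congr hrep]
    have hfin1 : (Function.support fun s : G =>
        (f 1)⁻¹ * (if s = 1 then f 1 else 0)).Finite := by
      apply (Set.finite_singleton (1 : G)).subset
      intro s hs
      simp only [Function.mem_support] at hs
      by_contra hc
      simp only [Set.mem_singleton_iff] at hc
      exact hs (by rw [if_neg hc, mul_zero])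
    have hfin2 : (Function.support fun s : G => (f 1)⁻¹ * f s).Finite := by
      apply hffin.subset
      intro s hs
      simp only [Function.mem_support] at hs ⊢
      intro h0
      exact hs (by rw [h0, mul_zero])
    rw [finsum_sub_distrib hfin1 hfin2]
    have e1 : (∑ᶠ s : G, (f 1)⁻¹ * (if s = 1 then f 1 else 0)) = 1 := by
      rw [finsum_eq_single _ (1 : G) (fun x hx => by rw [if_neg hx, mul_zero])]
      rw [if_pos rfl, inv_mul_cancel₀ (ne_of_gt hf1)]
    have e2 : (∑ᶠ s : G, (f 1)⁻¹ * f s) = 0 := by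
      rw [← mul_finsum _ _, hfsum, mul_zero]
    rw [e1, e2, sub_zero]
  have hdec : ∀ t : G, (∑ᶠ s : G, g (t * s⁻¹) * f s) =
      f 1 * g t - f 1 * ∑ᶠ s : G, g (t * s⁻¹) * muOf f s := by
    intro t
    have h1 : ∀ s : G, g (t * s⁻¹) * f s =
        g (t * s⁻¹) * (if s = 1 then f 1 else 0) - f 1 * (g (t * s⁻¹) * muOf f s) := by
      intro s
      conv_lhs => rw [hdecf s]
      ring
    rw [finsum_congr h1]
    have hfin1 : (Function.support fun s : G =>
        g (t * s⁻¹) * (if s = 1 then f 1 else 0)).Finite := by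
      apply (Set.finite_singleton (1 : G)).subset
      intro s hs
      simp only [Function.mem_support] at hs
      by_contra hc
      simp only [Set.mem_singleton_iff] at hc
      exact hs (by rw [if_neg hc, mul_zero])
    have hfin2 : (Function.support fun s : G =>
        f 1 * (g (t * s⁻¹) * muOf f s)).Finite := by
      apply hμfin.subset
      intro s hs
      simp only [Function.mem_support] at hs ⊢
      intro h0
      exact hs (by rw [h0, mul_zero, mul_zero])
    rw [finsum_sub_distrib hfin1 hfin2]
    have e1 : (∑ᶠ s : G, g (t * s⁻¹) * (if s = 1 then f 1 else 0)) = f 1 * g t := by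
      rw [finsum_eq_single _ (1 : G) (fun x hx => by rw [if_neg hx, mul_zero])]
      rw [if_pos rfl]
      simp [mul_comm]
    have e2 : (∑ᶠ s : G, f 1 * (g (t * s⁻¹) * muOf f s)) =
        f 1 * ∑ᶠ s : G, g (t * s⁻¹) * muOf f s := by
      rw [← mul_finsum _ _]
    rw [e1, e2]
  exact myMain (muOf f) hμfin hμnn hμ1 hsum g
    (fun t => ∑ᶠ s : G, g (t * s⁻¹) * f s) hg0 (f 1) hf1 hdec hgf w
end
end

section
/- Let Γ be a countably infinite group, f ∈ ℝΓ well-balanced, μ ∈ ℝΓ given by μ_e = 0 and μ_s = −f_s/f_e for s ≠ e, assume Σ_{k=0}^∞ ‖μ^k‖_∞ < ∞, and set ω_s = f_e^{-1} Σ_{k=0}^∞ (μ^k)_s. If g : Γ → ℝ tends to 0 along the cofinite filter on Γ and gf = δ_e (that is, for every w ∈ Γ, Σ_{s∈Γ} g_{ws⁻¹} f_s equals 1 if w = e and 0 otherwise), then g = ω. -/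
open Filter Topology
open scoped Classical
open Function
open scoped Pointwise

noncomputable section

lemma convR_support {G : Type*} [Group G] {u v : G → ℝ} :
    support (convR u v) ⊆ support u * support v := by
  intro w hw
  rw [mem_support, convR] at hw
  obtain ⟨s, hs⟩ : ∃ s : G, u s * v (s⁻¹ * w) ≠ 0 := by
    by_contra h
    push_neg at h
    simp [finsum_congr h] at hw
  refine ⟨s, by aesop, s⁻¹ * w, by aesop, by group⟩

lemma convPow_support {G : Type*} [Group G] {u : G → ℝ} (hu : (support u).Finite) :
    ∀ n, (support (convPow u n)).Finite
  | 0 => Set.Finite.subset (Set.finite_singleton 1) (fun s hs => by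
      by_contra h
      simp only [Set.mem_singleton_iff] at h
      simp [convPow, h] at hs)
  | n + 1 => Set.Finite.subset (hu.mul (convPow_support hu n)) convR_support

lemma convPow_nonneg {G : Type*} [Group G] {u : G → ℝ} (hu : ∀ s, 0 ≤ u s) :
    ∀ n s, 0 ≤ convPow u n s
  | 0, s => by simp only [convPow]; positivity
  | n + 1, s => finsum_nonneg (fun t => mul_nonneg (hu t) (convPow_nonneg hu n _))

lemma conv_sum_eq {G : Type*} [Group G] (u v h : G → ℝ)
    (hu : (support u).Finite) (hv : (support v).Finite) :
    ∑ᶠ s : G, h s * convR u v s = ∑ᶠ y : G, (∑ᶠ t : G, h (t * y) * u t) * v y := by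
  classical
  set A := hu.toFinset with hA
  set B := hv.toFinset with hB
  have hAB : support (convR u v) ⊆ ↑(A * B) := by
    refine convR_support.trans ?_
    rw [Finset.coe_mul]; simp [hA, hB]
  have hL : ∑ᶠ s : G, h s * convR u v s = ∑ s ∈ A * B, h s * convR u v s := by
    apply finsum_eq_finset_sum_of_support_subset
    intro s hs
    have : convR u v s ≠ 0 := by
      intro h0; rw [mem_support] at hs; simp [h0] at hs
    exact hAB this
  rw [hL]
  have hconv : ∀ s : G, convR u v s = ∑ t ∈ A, u t * v (t⁻¹ * s) := by
    intro s
    apply finsum_eq_finset_sum_of_support_subset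
    intro t ht
    simp only [mem_support] at ht
    have : u t ≠ 0 := fun h0 => ht (by simp [h0])
    simp [hA, this]
  simp_rw [hconv, Finset.mul_sum]
  rw [Finset.sum_comm]
  have hinner : ∀ t ∈ A, ∑ s ∈ A * B, h s * (u t * v (t⁻¹ * s))
      = ∑ y ∈ B, h (t * y) * (u t * v y) := by
    intro t ht
    have hsub : Finset.image (fun y => t * y) B ⊆ A * B := by
      intro x hx
      simp only [Finset.mem_image] at hx
      obtain ⟨y, hy, rfl⟩ := hx
      exact Finset.mul_mem_mul ht hy
    rw [← Finset.sum_subset hsub, Finset.sum_image (by simp)]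
    · simp
    · intro x hx hnx
      have : v (t⁻¹ * x) = 0 := by
        by_contra h0
        apply hnx
        simp only [Finset.mem_image]
        exact ⟨t⁻¹ * x, by simp [hB, h0], by group⟩
      simp [this]
  rw [Finset.sum_congr rfl hinner, Finset.sum_comm]
  have hR : ∑ᶠ y : G, (∑ᶠ t : G, h (t * y) * u t) * v y
      = ∑ y ∈ B, (∑ t ∈ A, h (t * y) * u t) * v y := by
    have : ∀ y : G, (∑ᶠ t : G, h (t * y) * u t) = ∑ t ∈ A, h (t * y) * u t := by
      intro y
      apply finsum_eq_finset_sum_of_support_subset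
      intro t ht
      simp only [mem_support] at ht
      have : u t ≠ 0 := fun h0 => ht (by simp [h0])
      simp [hA, this]
    simp_rw [this]
    apply finsum_eq_finset_sum_of_support_subset
    intro y hy
    simp only [mem_support] at hy
    have : v y ≠ 0 := fun h0 => hy (by simp [h0])
    simp [hB, this]
  rw [hR]
  congr 1; ext y; rw [Finset.sum_mul]; congr 1; ext t; ring

/-- If `g ∈ C₀(Γ)` and `gf = δ_e` then `g = ω`. -/
theorem stmt6 {G : Type*} [Group G] [Countable G] [Infinite G]
    (f : G → ℝ) (hf : WellBalancedR f)
    (hsum : Summable (fun k : ℕ => ⨆ s : G, |convPow (muOf f) k s|))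
    (g : G → ℝ) (hg0 : Tendsto g cofinite (𝓝 0))
    (hgf : ∀ w : G, (∑ᶠ s : G, g (w * s⁻¹) * f s) = if w = 1 then 1 else 0) :
    g = omegaOf f := by
  obtain ⟨hfin, hsum0, hnonpos, hsymm, hgen⟩ := hf
  set μ := muOf f with hμ
  have hμsupp : support μ ⊆ support f := by
    intro s hs
    rw [mem_support] at hs ⊢
    intro h0
    apply hs
    simp [hμ, muOf, h0]
  have hμfin : (support μ).Finite := hfin.subset hμsupp
  have f1pos : 0 < f 1 := by
    by_contra hcon
    push_neg at hcon
    have hall : ∀ s ∈ hfin.toFinset, f s ≤ 0 := by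
      intro s _
      by_cases hs : s = 1
      · subst hs; exact hcon
      · exact hnonpos s hs
    have hsum' : ∑ s ∈ hfin.toFinset, f s = 0 := by
      rw [← finsum_eq_finset_sum_of_support_subset f (by simp)]
      exact hsum0
    have hz : ∀ s ∈ hfin.toFinset, f s = 0 :=
      (Finset.sum_eq_zero_iff_of_nonpos hall).mp hsum'
    have hsupp : support f = ∅ := by
      ext s
      simp only [mem_support, Set.mem_empty_iff_false, iff_false, not_not]
      by_contra h0
      exact h0 (hz s (by simp [h0]))
    rw [hsupp, Subgroup.closure_empty] at hgen
    exact (bot_ne_top : (⊥ : Subgroup G) ≠ ⊤) hgen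
  have f1ne : f 1 ≠ 0 := ne_of_gt f1pos
  have fdecomp : ∀ s, f s = f 1 * ((if s = 1 then 1 else 0) - μ s) := by
    intro s
    by_cases hs : s = 1
    · simp [hμ, muOf, hs]
    · simp only [hμ, muOf, hs, if_neg hs, ite_false]
      field_simp
      ring
  have hμnonneg : ∀ s, 0 ≤ μ s := by
    intro s
    by_cases hs : s = 1
    · simp [hμ, muOf, hs]
    · simp only [hμ, muOf, if_neg hs]
      apply div_nonneg _ f1pos.le
      linarith [hnonpos s hs]
  have keyid : ∀ w : G, (∑ᶠ s : G, g (w * s⁻¹) * μ s)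
      = g w - (f 1)⁻¹ * (if w = 1 then 1 else 0) := by
    intro w
    have hδfin : (support fun s : G => f 1 * (g (w * s⁻¹) * (if s = 1 then (1:ℝ) else 0))).Finite := by
      apply Set.Finite.subset (Set.finite_singleton 1)
      intro s hs
      rw [mem_support] at hs
      by_contra h1
      simp only [Set.mem_singleton_iff] at h1
      simp [h1] at hs
    have hμfin' : (support fun s : G => f 1 * (g (w * s⁻¹) * μ s)).Finite := by
      apply hμfin.subset
      intro s hs
      rw [mem_support] at hs ⊢
      intro h0; exact hs (by simp [h0])
    have point : ∀ s : G, g (w * s⁻¹) * f s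
        = f 1 * (g (w * s⁻¹) * (if s = 1 then (1:ℝ) else 0))
            - f 1 * (g (w * s⁻¹) * μ s) := by
      intro s
      rw [fdecomp s]
      ring
    have hgfw := hgf w
    rw [finsum_congr point, finsum_sub_distrib hδfin hμfin'] at hgfw
    have e2 : ∑ᶠ s : G, f 1 * (g (w * s⁻¹) * (if s = 1 then (1:ℝ) else 0)) = f 1 * g w := by
      rw [finsum_eq_single _ 1 (by intro x hx; simp [hx])]
      simp
    have e3 : ∑ᶠ s : G, f 1 * (g (w * s⁻¹) * μ s)
        = f 1 * ∑ᶠ s : G, g (w * s⁻¹) * μ s := by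
      rw [mul_finsum]
    rw [e2, e3] at hgfw
    have expand : f 1 * (g w - (f 1)⁻¹ * (if w = 1 then (1:ℝ) else 0))
        = f 1 * g w - (if w = 1 then (1:ℝ) else 0) := by
      rw [mul_sub, ← mul_assoc, mul_inv_cancel₀ f1ne, one_mul]
    apply mul_left_cancel₀ f1ne
    rw [expand]
    linarith
  set P : ℕ → G → ℝ := convPow μ with hP
  have Pfin : ∀ n, (support (P n)).Finite := convPow_support hμfin
  have Pnn : ∀ n s, 0 ≤ P n s := convPow_nonneg hμnonneg
  have μsum : ∑ᶠ s : G, μ s = 1 := by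
    have hδfin : (support fun s : G => f 1 * (if s = 1 then (1:ℝ) else 0)).Finite := by
      apply Set.Finite.subset (Set.finite_singleton 1)
      intro s hs
      rw [mem_support] at hs
      by_contra h1
      simp only [Set.mem_singleton_iff] at h1
      simp [h1] at hs
    have hμfin' : (support fun s : G => f 1 * μ s).Finite := by
      apply hμfin.subset
      intro s hs
      rw [mem_support] at hs ⊢
      intro h0; exact hs (by simp [h0])
    have point : ∀ s : G, f 1 * (if s = 1 then (1:ℝ) else 0) - f 1 * μ s = f s := by
      intro s
      rw [fdecomp s]
      ring
    have e1 : (0:ℝ) = ∑ᶠ s : G, (f 1 * (if s = 1 then (1:ℝ) else 0) - f 1 * μ s) :=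
      (hsum0.symm).trans (finsum_congr point).symm
    rw [finsum_sub_distrib hδfin hμfin'] at e1
    rw [finsum_eq_single _ 1 (by intro x hx; simp [hx]), ← mul_finsum _ _] at e1
    norm_num at e1
    apply mul_left_cancel₀ f1ne
    rw [mul_one]
    linarith
  have Psum : ∀ n, ∑ᶠ s : G, P n s = 1 := by
    intro n
    induction n with
    | zero =>
      rw [hP]
      show ∑ᶠ s : G, convPow μ 0 s = 1
      rw [finsum_eq_single _ 1 (by intro x hx; simp [convPow, hx])]
      simp [convPow]
    | succ n ih =>
      have h1 : ∑ᶠ s : G, P (n+1) s = ∑ᶠ s : G, (1:ℝ) * convR μ (P n) s := by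
        apply finsum_congr; intro s; rw [one_mul]; rfl
      rw [h1, conv_sum_eq μ (P n) (fun _ => 1) hμfin (Pfin n)]
      simp only [one_mul]
      rw [μsum]
      simp only [one_mul]
      exact ih
  -- boundedness of g
  obtain ⟨C, hC0, hC⟩ : ∃ C : ℝ, 0 ≤ C ∧ ∀ s : G, |g s| ≤ C := by
    have hFin : {x : G | ¬ |g x| < 1}.Finite := by
      have h := hg0 (Metric.ball_mem_nhds (0:ℝ) one_pos)
      rw [Filter.mem_map, Filter.mem_cofinite] at h
      apply h.subset
      intro x hx
      simp only [Set.mem_compl_iff, Set.mem_preimage, Metric.mem_ball, Real.dist_eq, sub_zero]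
      exact hx
    refine ⟨1 + ∑ x ∈ hFin.toFinset, |g x|, by positivity, ?_⟩
    intro s
    by_cases hs : |g s| < 1
    · have h1 : (0:ℝ) ≤ ∑ x ∈ hFin.toFinset, |g x| :=
        Finset.sum_nonneg fun x _ => abs_nonneg _
      linarith
    · have hsD : s ∈ hFin.toFinset := by
        rw [Set.Finite.mem_toFinset]; exact hs
      have := Finset.single_le_sum (fun x (_ : x ∈ hFin.toFinset) => abs_nonneg (g x)) hsD
      linarith
  -- the tail operator
  set T : ℕ → G → ℝ := fun n w => ∑ᶠ s : G, g (w * s⁻¹) * P n s with hT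
  have T0 : ∀ w, T 0 w = g w := by
    intro w
    show ∑ᶠ s : G, g (w * s⁻¹) * convPow μ 0 s = g w
    rw [finsum_eq_single _ 1 (by intro x hx; simp [convPow, hx])]
    simp [convPow]
  have Trec : ∀ n w, T (n+1) w = T n w - (f 1)⁻¹ * P n w := by
    intro n w
    have h1 : T (n+1) w = ∑ᶠ y : G, (∑ᶠ t : G, g (w * (t * y)⁻¹) * μ t) * P n y :=
      conv_sum_eq μ (P n) (fun s => g (w * s⁻¹)) hμfin (Pfin n)
    have h2 : ∀ y : G, (∑ᶠ t : G, g (w * (t * y)⁻¹) * μ t)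
        = g (w * y⁻¹) - (f 1)⁻¹ * (if w * y⁻¹ = 1 then (1:ℝ) else 0) := by
      intro y
      rw [← keyid (w * y⁻¹)]
      apply finsum_congr
      intro t
      congr 2
      group
    have h3 : T (n+1) w = ∑ᶠ y : G,
        (g (w * y⁻¹) * P n y - (f 1)⁻¹ * ((if w * y⁻¹ = 1 then (1:ℝ) else 0) * P n y)) := by
      rw [h1]
      apply finsum_congr
      intro y
      rw [h2 y]
      ring
    have hfin1 : (support fun y : G => g (w * y⁻¹) * P n y).Finite := by
      apply (Pfin n).subset
      intro y hy
      rw [mem_support] at hy ⊢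
      intro h0; exact hy (by simp [h0])
    have hfin2 : (support fun y : G =>
        (f 1)⁻¹ * ((if w * y⁻¹ = 1 then (1:ℝ) else 0) * P n y)).Finite := by
      apply (Pfin n).subset
      intro y hy
      rw [mem_support] at hy ⊢
      intro h0; exact hy (by simp [h0])
    rw [h3, finsum_sub_distrib hfin1 hfin2]
    have h4 : ∑ᶠ y : G, (f 1)⁻¹ * ((if w * y⁻¹ = 1 then (1:ℝ) else 0) * P n y)
        = (f 1)⁻¹ * P n w := by
      have hz : ∀ y : G, y ≠ w → (f 1)⁻¹ * ((if w * y⁻¹ = 1 then (1:ℝ) else 0) * P n y) = 0 := by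
        intro y hy
        have hne : ¬ (w * y⁻¹ = 1) := fun h0 => hy (mul_inv_eq_one.mp h0).symm
        simp [hne]
      rw [finsum_eq_single _ w hz]
      simp
    rw [h4]
  have Tform : ∀ n w, T n w = g w - (f 1)⁻¹ * ∑ k ∈ Finset.range n, P k w := by
    intro n w
    induction n with
    | zero => simp [T0 w]
    | succ n ih =>
      rw [Trec n w, ih, Finset.sum_range_succ]
      ring
  have bdd : ∀ n, BddAbove (Set.range fun s : G => |P n s|) := by
    intro n
    apply Set.Finite.bddAbove
    apply Set.Finite.subset (Set.Finite.insert 0 ((Pfin n).image fun s => |P n s|))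
    rintro _ ⟨s, rfl⟩
    by_cases hs : P n s = 0
    · simp [hs]
    · exact Set.mem_insert_of_mem _ ⟨s, hs, rfl⟩
  have Ple : ∀ n s, P n s ≤ ⨆ s : G, |P n s| :=
    fun n s => (le_abs_self _).trans (le_ciSup (bdd n) s)
  have supnn : ∀ n, 0 ≤ ⨆ s : G, |P n s| :=
    fun n => (abs_nonneg _).trans (le_ciSup (bdd n) (1 : G))
  -- tail tends to zero
  have Ttail : ∀ w, Tendsto (fun n => T n w) atTop (𝓝 0) := by
    intro w
    rw [Metric.tendsto_atTop]
    intro ε hε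
    have hFin : {x : G | ¬ |g x| < ε / 2}.Finite := by
      have h := hg0 (Metric.ball_mem_nhds (0:ℝ) (by linarith : (0:ℝ) < ε / 2))
      rw [Filter.mem_map, Filter.mem_cofinite] at h
      apply h.subset
      intro x hx
      simp only [Set.mem_compl_iff, Set.mem_preimage, Metric.mem_ball, Real.dist_eq, sub_zero]
      exact hx
    set m : ℝ := (hFin.toFinset.card : ℝ) with hm
    have hm0 : 0 ≤ m := Nat.cast_nonneg _
    have hden : 0 < C * m + 1 := by linarith [mul_nonneg hC0 hm0]
    have hsup0 : Tendsto (fun n => ⨆ s : G, |P n s|) atTop (𝓝 0) :=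
      hsum.tendsto_atTop_zero
    have hev : ∀ᶠ n in atTop, ⨆ s : G, |P n s| < ε / (2 * (C * m + 1)) := by
      have := hsup0 (Metric.ball_mem_nhds (0:ℝ) (div_pos hε (mul_pos two_pos hden)))
      rw [Filter.mem_map] at this
      filter_upwards [this] with n hn
      simpa [Real.dist_eq, abs_of_nonneg (supnn n)] using hn
    obtain ⟨N, hN⟩ := Filter.eventually_atTop.mp hev
    refine ⟨N, fun n hn => ?_⟩
    rw [Real.dist_eq, sub_zero]
    set Bn := (Pfin n).toFinset with hBn
    have hTn : T n w = ∑ s ∈ Bn, g (w * s⁻¹) * P n s := by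
      apply finsum_eq_finset_sum_of_support_subset
      intro s hs
      rw [mem_support] at hs
      have : P n s ≠ 0 := fun h0 => hs (by simp [h0])
      simp [hBn, this]
    have hsn := hN n hn
    set sn := ⨆ s : G, |P n s| with hsn'
    have step1 : |T n w| ≤ ∑ s ∈ Bn, |g (w * s⁻¹)| * P n s := by
      rw [hTn]
      refine (Finset.abs_sum_le_sum_abs _ _).trans ?_
      apply Finset.sum_le_sum
      intro s _
      rw [abs_mul, abs_of_nonneg (Pnn n s)]
    have step2 : ∑ s ∈ Bn, |g (w * s⁻¹)| * P n s
        ≤ ∑ s ∈ Bn, (if w * s⁻¹ ∈ {x : G | ¬ |g x| < ε / 2} then C * P n s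
            else (ε / 2) * P n s) := by
      apply Finset.sum_le_sum
      intro s _
      by_cases hmem : w * s⁻¹ ∈ {x : G | ¬ |g x| < ε / 2}
      · rw [if_pos hmem]
        exact mul_le_mul_of_nonneg_right (hC _) (Pnn n s)
      · rw [if_neg hmem]
        simp only [Set.mem_setOf_eq, not_not] at hmem
        exact mul_le_mul_of_nonneg_right hmem.le (Pnn n s)
    have step3 : ∑ s ∈ Bn, (if w * s⁻¹ ∈ {x : G | ¬ |g x| < ε / 2} then C * P n s
            else (ε / 2) * P n s)
        ≤ C * m * sn + ε / 2 := by
      rw [Finset.sum_ite]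
      gcongr
      · -- filtered sum with C
        set Fl := Bn.filter (fun s => w * s⁻¹ ∈ {x : G | ¬ |g x| < ε / 2}) with hFl
        have hcard : (Fl.card : ℝ) ≤ m := by
          rw [hm]
          exact_mod_cast Finset.card_le_card_of_injOn (fun s => w * s⁻¹)
            (fun s hs => by
              rw [Finset.mem_coe, Set.Finite.mem_toFinset]
              exact (Finset.mem_filter.mp (Finset.mem_coe.mp hs)).2)
            (fun a _ b _ hab => by
              have : a⁻¹ = b⁻¹ := mul_left_cancel hab
              simpa using congrArg (·⁻¹) this)
        calc ∑ s ∈ Fl, C * P n s ≤ ∑ s ∈ Fl, C * sn := by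
              apply Finset.sum_le_sum
              intro s _
              exact mul_le_mul_of_nonneg_left (Ple n s) hC0
          _ = Fl.card * (C * sn) := by rw [Finset.sum_const, nsmul_eq_mul]
          _ ≤ m * (C * sn) := by
              apply mul_le_mul_of_nonneg_right hcard
              exact mul_nonneg hC0 (supnn n)
          _ = C * m * sn := by ring
      · -- rest with ε/2
        have hsub : ∑ s ∈ Bn.filter (fun s => ¬ w * s⁻¹ ∈ {x : G | ¬ |g x| < ε / 2}),
            (ε / 2) * P n s ≤ ∑ s ∈ Bn, (ε / 2) * P n s := by
          apply Finset.sum_le_sum_of_subset_of_nonneg (Finset.filter_subset _ _)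
          intro s _ _
          exact mul_nonneg (by linarith) (Pnn n s)
        refine hsub.trans ?_
        rw [← Finset.mul_sum]
        have hBsum : ∑ s ∈ Bn, P n s = 1 := by
          rw [← Psum n]
          symm
          apply finsum_eq_finset_sum_of_support_subset
          intro s hs
          simp [hBn, hs]
        rw [hBsum, mul_one]
    have final : C * m * sn + ε / 2 < ε := by
      have h1 : C * m * sn ≤ (C * m + 1) * sn := by
        have := supnn n
        nlinarith
      have h2 : (C * m + 1) * sn < (C * m + 1) * (ε / (2 * (C * m + 1))) := by
        apply mul_lt_mul_of_pos_left hsn hden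
      have h3 : (C * m + 1) * (ε / (2 * (C * m + 1))) = ε / 2 := by
        field_simp
      linarith
    calc |T n w| ≤ ∑ s ∈ Bn, |g (w * s⁻¹)| * P n s := step1
      _ ≤ _ := step2
      _ ≤ C * m * sn + ε / 2 := step3
      _ < ε := final
  -- summability and conclusion
  have Psummable : ∀ w : G, Summable (fun k => P k w) :=
    fun w => Summable.of_nonneg_of_le (fun k => Pnn k w) (fun k => Ple k w) hsum
  funext w
  have h2 : ∀ n, g w - T n w = (f 1)⁻¹ * ∑ k ∈ Finset.range n, P k w := by
    intro n
    rw [Tform n w]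
    ring
  have h1 : Tendsto (fun n => g w - T n w) atTop (𝓝 (g w - 0)) :=
    tendsto_const_nhds.sub (Ttail w)
  rw [sub_zero] at h1
  have h3 : Tendsto (fun n => (f 1)⁻¹ * ∑ k ∈ Finset.range n, P k w) atTop
      (𝓝 ((f 1)⁻¹ * ∑' k : ℕ, P k w)) :=
    ((Psummable w).hasSum.tendsto_sum_nat).const_mul _
  have h4 : Tendsto (fun n => g w - T n w) atTop (𝓝 ((f 1)⁻¹ * ∑' k : ℕ, P k w)) := by
    rw [show (fun n => g w - T n w) = fun n => (f 1)⁻¹ * ∑ k ∈ Finset.range n, P k w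
      from funext h2]
    exact h3
  exact tendsto_nhds_unique h1 h4
end
end

section
/- Let Γ be a countably infinite group and f ∈ ℤΓ well-balanced; let μ ∈ ℝΓ be given by μ_e = 0 and μ_s = −f_s/f_e for s ≠ e, assume Σ_{k=0}^∞ ‖μ^k‖_∞ < ∞, and set ω_s = f_e^{-1} Σ_{k=0}^∞ (μ^k)_s. Then for h ∈ ℤΓ one has Q(hω) = 0 in (ℝ/ℤ)^Γ if and only if h ∈ ℤΓf, i.e. h = uf for some u ∈ ℤΓ. (Consequently the map ℤΓ → (ℝ/ℤ)^Γ, h ↦ Q(hω), induces an isomorphism of the left ℤΓ-module ℤΓ/ℤΓf onto the homoclinic group of X_f.) -/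
open Filter Topology
open scoped Classical

noncomputable section

/-- `f ∈ ℤΓ` is well-balanced: finitely supported, coefficients sum to `0`,
nonpositive off the identity, symmetric, and with support generating `Γ`. -/
def WellBalancedZ {G : Type*} [Group G] (f : G → ℤ) : Prop :=
  (Function.support f).Finite ∧ (∑ᶠ s : G, f s) = 0 ∧
    (∀ s : G, s ≠ 1 → f s ≤ 0) ∧ (∀ s : G, f s⁻¹ = f s) ∧
    Subgroup.closure (Function.support f) = ⊤

/-- `X_f = {x ∈ (ℝ/ℤ)^Γ : ∀ t, ∑_s f_s · x_{ts} = 0}`. -/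
def XfSet {G : Type*} [Group G] (f : G → ℤ) : Set (G → UnitAddCircle) :=
  {x | ∀ t : G, (∑ᶠ s : G, f s • x (t * s)) = 0}

/-- The element `ω` associated to a well-balanced `f ∈ ℤΓ`. -/
def omegaOfZ {G : Type*} [Group G] (f : G → ℤ) : G → ℝ :=
  omegaOf (fun s => (f s : ℝ))

/-- `Q(hω) ∈ (ℝ/ℤ)^Γ` : the coordinatewise reduction mod `ℤ` of the convolution `hω`,
for `h ∈ ℤΓ`, where `(hω)_w = ∑_s h_s ω_{s⁻¹ w}`. -/
def homPt {G : Type*} [Group G] (f : G → ℤ) (h : G → ℤ) : G → UnitAddCircle :=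
  fun w => ((∑ᶠ s : G, (h s : ℝ) * omegaOfZ f (s⁻¹ * w) : ℝ) : UnitAddCircle)

open Function
open scoped Pointwise

namespace Stmt8Aux

variable {G : Type*} [Group G]

lemma supp_term (u v : G → ℝ) (w : G) :
    support (fun s => u s * v (s⁻¹ * w)) ⊆ support u := fun s hs => by
  simp only [mem_support] at hs ⊢
  intro hcon; apply hs; rw [hcon, zero_mul]

lemma convR_eq_sum (u v : G → ℝ) {T : Finset G} (hT : support u ⊆ T) (w : G) :
    convR u v w = ∑ s ∈ T, u s * v (s⁻¹ * w) :=
  finsum_eq_sum_of_support_subset _ (fun s hs => hT (supp_term u v w hs))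

lemma support_convR (u v : G → ℝ) :
    support (convR u v) ⊆ support u * support v := by
  intro w hw
  by_contra hmem
  apply hw
  apply finsum_eq_zero_of_forall_eq_zero
  intro s
  by_cases hu : u s = 0
  · rw [hu, zero_mul]
  · by_cases hv : v (s⁻¹ * w) = 0
    · rw [hv, mul_zero]
    · exact absurd ⟨s, hu, s⁻¹ * w, hv, by group⟩ hmem

lemma support_convPow_finite {u : G → ℝ} (hu : (support u).Finite) (k : ℕ) :
    (support (convPow u k)).Finite := by
  induction k with
  | zero =>
    apply Set.Finite.subset (Set.finite_singleton (1 : G))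
    intro s hs
    simp only [mem_support, convPow] at hs
    by_contra hcon
    exact hs (if_neg hcon)
  | succ k ih =>
    exact Set.Finite.subset (hu.mul ih) (support_convR u _)

lemma convR_delta_right (u : G → ℝ) :
    convR u (fun s => if s = 1 then 1 else 0) = u := by
  funext w
  rw [convR, finsum_eq_single _ w]
  · simp
  · intro s hs
    rw [if_neg, mul_zero]
    intro hcon
    exact hs (inv_mul_eq_one.mp hcon)

lemma convR_delta_left (u : G → ℝ) :
    convR (fun s => if s = 1 then 1 else 0) u = u := by
  funext w
  rw [convR, finsum_eq_single _ 1]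
  · simp
  · intro s hs; rw [if_neg hs, zero_mul]

lemma finsum_shift (v : G → ℝ) (t : G) : ∑ᶠ s : G, v (t⁻¹ * s) = ∑ᶠ r : G, v r := by
  rw [← finsum_comp_equiv (Equiv.mulLeft t) (f := fun s => v (t⁻¹ * s))]
  apply finsum_congr
  intro r
  simp [Equiv.coe_mulLeft]

lemma sum_shift (v : G → ℝ) {T : Finset G} (t : G)
    (hT : ∀ r : G, v (t⁻¹ * r) ≠ 0 → r ∈ T) :
    ∑ r ∈ T, v (t⁻¹ * r) = ∑ᶠ r : G, v r := by
  rw [← finsum_eq_sum_of_support_subset (fun r => v (t⁻¹ * r)) (fun r hr => hT r hr)]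
  exact finsum_shift v t

lemma convR_assoc (a b c : G → ℝ) (ha : (support a).Finite) (hb : (support b).Finite) :
    convR (convR a b) c = convR a (convR b c) := by
  funext w
  set A : Finset G := ha.toFinset with hA
  set B : Finset G := hb.toFinset with hB
  have hsa : support a ⊆ (A : Set G) := by simp [hA]
  have hsb : support b ⊆ (B : Set G) := by simp [hB]
  have hsab : support (convR a b) ⊆ ((A * B : Finset G) : Set G) := by
    intro x hx
    rcases support_convR a b hx with ⟨s, hs, t, ht, rfl⟩
    exact_mod_cast Finset.mul_mem_mul (by exact_mod_cast hsa hs) (by exact_mod_cast hsb ht)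
  rw [convR_eq_sum _ c hsab, convR_eq_sum a (convR b c) hsa]
  have step1 : ∀ r : G, convR a b r * c (r⁻¹ * w)
      = ∑ s ∈ A, a s * (b (s⁻¹ * r) * c (r⁻¹ * w)) := by
    intro r
    rw [convR_eq_sum a b hsa, Finset.sum_mul]
    exact Finset.sum_congr rfl fun s _ => by ring
  calc ∑ r ∈ A * B, convR a b r * c (r⁻¹ * w)
      = ∑ r ∈ A * B, ∑ s ∈ A, a s * (b (s⁻¹ * r) * c (r⁻¹ * w)) :=
        Finset.sum_congr rfl fun r _ => step1 r
    _ = ∑ s ∈ A, ∑ r ∈ A * B, a s * (b (s⁻¹ * r) * c (r⁻¹ * w)) := Finset.sum_comm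
    _ = ∑ s ∈ A, a s * convR b c (s⁻¹ * w) := by
        refine Finset.sum_congr rfl fun s hs => ?_
        rw [← Finset.mul_sum]
        congr 1
        have := sum_shift (fun t => b t * c (t⁻¹ * (s⁻¹ * w))) (T := A * B) s ?_
        · rw [convR]
          rw [← this]
          refine Finset.sum_congr rfl fun r _ => ?_
          congr 2
          group
        · intro r hr
          have hr' : b (s⁻¹ * r) * c ((s⁻¹ * r)⁻¹ * (s⁻¹ * w)) ≠ 0 := hr
          have hb' : b (s⁻¹ * r) ≠ 0 := fun hcon => hr' (by rw [hcon, zero_mul])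
          have : s⁻¹ * r ∈ B := by exact_mod_cast hsb hb'
          have : r = s * (s⁻¹ * r) := by group
          rw [this]
          exact Finset.mul_mem_mul hs ‹s⁻¹ * r ∈ B›

lemma convPow_succ' {u : G → ℝ} (hu : (support u).Finite) (k : ℕ) :
    convPow u (k + 1) = convR (convPow u k) u := by
  induction k with
  | zero =>
    rw [show convPow u (0 + 1) = convR u (convPow u 0) from rfl,
      show convPow u 0 = (fun s => if s = 1 then 1 else 0) from rfl,
      convR_delta_right, convR_delta_left]
  | succ k ih =>
    show convR u (convPow u (k + 1)) = convR (convR u (convPow u k)) u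
    rw [ih, convR_assoc u _ u hu (support_convPow_finite hu k)]

lemma convR_symm {u v : G → ℝ} (hus : ∀ s, u s⁻¹ = u s) (hvs : ∀ s, v s⁻¹ = v s) (w : G) :
    convR u v w⁻¹ = convR v u w := by
  rw [convR, convR,
    ← finsum_comp_equiv (Equiv.mulLeft w⁻¹) (f := fun t => u t * v (t⁻¹ * w⁻¹))]
  apply finsum_congr
  intro r
  have h1 : u ((Equiv.mulLeft w⁻¹) r) = u (r⁻¹ * w) := by
    rw [← hus (r⁻¹ * w)]
    congr 1
    simp [Equiv.coe_mulLeft]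
  have h2 : v (((Equiv.mulLeft w⁻¹) r)⁻¹ * w⁻¹) = v r := by
    rw [← hvs r]
    congr 1
    simp [Equiv.coe_mulLeft]
  rw [h1, h2]
  ring

lemma convPow_symm {u : G → ℝ} (hu : (support u).Finite) (hus : ∀ s, u s⁻¹ = u s) (k : ℕ) :
    ∀ s, convPow u k s⁻¹ = convPow u k s := by
  induction k with
  | zero => intro s; simp [convPow, inv_eq_one]
  | succ k ih =>
    intro s
    show convR u (convPow u k) s⁻¹ = convR u (convPow u k) s
    rw [convR_symm hus ih, ← convPow_succ' hu k]
    rfl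


section Analytic
variable {G : Type*} [Group G] [Infinite G] (f : G → ℤ) (hf : WellBalancedZ f)

local notation "F" => (fun s => ((f s : ℝ)) : G → ℝ)
local notation "μ" => muOf (fun s => ((f s : ℝ)))
local notation "ω" => omegaOfZ f

include hf

lemma f_one_pos : 0 < f 1 := by
  obtain ⟨hfin, hzero, hneg, _, hgen⟩ := hf
  -- there is s ≠ 1 in the support
  obtain ⟨s₀, hs₀supp, hs₀ne⟩ : ∃ s₀, s₀ ∈ support f ∧ s₀ ≠ 1 := by
    by_contra hcon
    push_neg at hcon
    have hsub : support f ⊆ {1} := fun s hs => hcon s hs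
    have : Subgroup.closure (support f) ≤ ⊥ := by
      rw [← Subgroup.closure_singleton_one]
      exact Subgroup.closure_mono hsub
    rw [hgen] at this
    obtain ⟨a, b, hab⟩ := exists_pair_ne G
    exact hab (((Subgroup.mem_bot).mp (this (Subgroup.mem_top a))).trans
      ((Subgroup.mem_bot).mp (this (Subgroup.mem_top b))).symm)
  set T : Finset G := insert 1 hfin.toFinset with hT
  have hsupT : support f ⊆ (T : Set G) := by
    intro x hx
    simp [hT, Set.Finite.mem_toFinset, hx]
  have hsum0 : ∑ s ∈ T, f s = 0 := by
    rw [← finsum_eq_sum_of_support_subset f hsupT, hzero]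
  have h1T : (1 : G) ∈ T := by simp [hT]
  have hs₀T : s₀ ∈ T.erase 1 := by
    refine Finset.mem_erase.mpr ⟨hs₀ne, ?_⟩
    simp [hT, Set.Finite.mem_toFinset, hs₀supp]
  have key : f 1 + ∑ s ∈ T.erase 1, f s = 0 := by
    rw [Finset.add_sum_erase T f h1T]; exact hsum0
  have hle : ∑ s ∈ T.erase 1, f s ≤ f s₀ := by
    have := Finset.add_sum_erase (T.erase 1) f hs₀T
    rw [← this]
    have : ∑ s ∈ (T.erase 1).erase s₀, f s ≤ 0 :=
      Finset.sum_nonpos fun s hs => hneg s (Finset.ne_of_mem_erase (Finset.mem_of_mem_erase hs))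
    omega
  have hs₀neg : f s₀ < 0 := lt_of_le_of_ne (hneg s₀ hs₀ne) hs₀supp
  omega

lemma F_one_pos : (0 : ℝ) < (f 1 : ℝ) := by exact_mod_cast f_one_pos f hf

lemma F_one_ne : ((f 1 : ℝ)) ≠ 0 := ne_of_gt (F_one_pos f hf)

lemma mu_support_sub : support μ ⊆ support f := by
  intro s hs
  simp only [muOf, mem_support] at hs
  by_cases h1 : s = 1
  · rw [if_pos h1] at hs; exact absurd rfl hs
  · rw [if_neg h1] at hs
    simp only [mem_support]
    intro hcon
    apply hs
    rw [hcon]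
    simp

lemma mu_support_finite : (support μ).Finite := hf.1.subset (mu_support_sub f hf)

lemma mu_symm : ∀ s : G, μ s⁻¹ = μ s := by
  intro s
  by_cases h1 : s = 1
  · rw [h1]; simp
  · have h1' : s⁻¹ ≠ 1 := fun hcon => h1 (inv_eq_one.mp hcon)
    simp only [muOf, if_neg h1, if_neg h1']
    rw [hf.2.2.2.1 s]

lemma F_eq (s : G) : (f s : ℝ) = (f 1 : ℝ) * ((if s = 1 then (1:ℝ) else 0) - μ s) := by
  by_cases h1 : s = 1
  · rw [h1]; simp [muOf]
  · simp only [muOf, if_neg h1]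
    field_simp
    rw [zero_sub, neg_neg, mul_comm, div_mul_cancel₀ _ (F_one_ne f hf)]

lemma bddAbove_abs_convPow (k : ℕ) :
    BddAbove (Set.range fun s : G => |convPow μ k s|) := by
  apply Set.Finite.bddAbove
  have : (Set.range fun s : G => |convPow μ k s|) ⊆
      insert 0 ((fun s => |convPow μ k s|) '' (support (convPow μ k))) := by
    rintro x ⟨s, rfl⟩
    by_cases hs : convPow μ k s = 0
    · left; simp [hs]
    · right; exact ⟨s, hs, rfl⟩
  exact Set.Finite.subset (Set.Finite.insert 0
    ((support_convPow_finite (mu_support_finite f hf) k).image _)) this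

lemma abs_convPow_le (k : ℕ) (s : G) :
    |convPow μ k s| ≤ ⨆ t : G, |convPow μ k t| :=
  le_ciSup (bddAbove_abs_convPow f hf k) s

variable (hsum : Summable (fun k : ℕ => ⨆ s : G, |convPow (muOf (fun s => (f s : ℝ))) k s|))
include hsum

lemma summable_abs_convPow (s : G) : Summable (fun k => |convPow μ k s|) :=
  Summable.of_nonneg_of_le (fun k => abs_nonneg _) (fun k => abs_convPow_le f hf k s) hsum

lemma summable_convPow (s : G) : Summable (fun k => convPow μ k s) := by
  have := summable_abs_convPow f hf hsum s
  exact this.of_abs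

omit hf hsum in
lemma omega_apply (s : G) : ω s = ((f 1 : ℝ))⁻¹ * ∑' k : ℕ, convPow μ k s := rfl

lemma omega_symm (s : G) : ω s⁻¹ = ω s := by
  rw [omega_apply, omega_apply]
  congr 1
  exact tsum_congr fun k => convPow_symm (mu_support_finite f hf) (mu_symm f hf) k s

lemma f_conv_omega (w : G) :
    ∑ᶠ s : G, (f s : ℝ) * ω (s⁻¹ * w) = if w = 1 then (1:ℝ) else 0 := by
  classical
  set T : Finset G := insert 1 hf.1.toFinset with hT
  have h1T : (1 : G) ∈ T := by simp [hT]
  have hsupF : support (fun s : G => (f s : ℝ)) ⊆ (T : Set G) := by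
    intro x hx
    have : f x ≠ 0 := by simpa [mem_support] using hx
    simp [hT, Set.Finite.mem_toFinset, mem_support, this]
  have hsupMu : support μ ⊆ (T : Set G) := by
    intro x hx
    have : x ∈ support f := mu_support_sub f hf hx
    simp [hT, Set.Finite.mem_toFinset]
    right; exact this
  -- reduce finsum to sum over T
  have step0 : ∑ᶠ s : G, (f s : ℝ) * ω (s⁻¹ * w) = ∑ s ∈ T, (f s : ℝ) * ω (s⁻¹ * w) :=
    finsum_eq_sum_of_support_subset _ (fun s hs => hsupF (supp_term _ _ w hs))
  have step1 : ∑ s ∈ T, (f s : ℝ) * ω (s⁻¹ * w)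
      = (f 1 : ℝ) * ((∑ s ∈ T, (if s = 1 then (1:ℝ) else 0) * ω (s⁻¹ * w))
          - ∑ s ∈ T, μ s * ω (s⁻¹ * w)) := by
    rw [mul_sub, Finset.mul_sum, Finset.mul_sum, ← Finset.sum_sub_distrib]
    refine Finset.sum_congr rfl fun s _ => ?_
    rw [F_eq f hf s]; ring
  have step2 : ∑ s ∈ T, (if s = 1 then (1:ℝ) else 0) * ω (s⁻¹ * w) = ω w := by
    rw [Finset.sum_eq_single_of_mem 1 h1T]
    · simp
    · intro s _ hs; rw [if_neg hs, zero_mul]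
  have step3 : ∑ s ∈ T, μ s * ω (s⁻¹ * w)
      = ((f 1 : ℝ))⁻¹ * (∑' k : ℕ, convPow μ k w - (if w = 1 then (1:ℝ) else 0)) := by
    have e1 : ∀ s ∈ T, μ s * ω (s⁻¹ * w)
        = ∑' k : ℕ, ((f 1 : ℝ))⁻¹ * (μ s * convPow μ k (s⁻¹ * w)) := by
      intro s _
      rw [omega_apply f]
      rw [tsum_mul_left, tsum_mul_left]
      ring
    rw [Finset.sum_congr rfl e1, ← Summable.tsum_finsetSum (fun s _ => by
      exact (Summable.mul_left _ ((summable_convPow f hf hsum (s⁻¹ * w)).mul_left (μ s))))]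
    have e2 : ∀ k : ℕ, ∑ s ∈ T, ((f 1 : ℝ))⁻¹ * (μ s * convPow μ k (s⁻¹ * w))
        = ((f 1 : ℝ))⁻¹ * convPow μ (k + 1) w := by
      intro k
      rw [← Finset.mul_sum]
      congr 1
      rw [show convPow μ (k+1) = convR μ (convPow μ k) from rfl,
        convR_eq_sum μ (convPow μ k) hsupMu w]
    rw [tsum_congr e2, tsum_mul_left]
    congr 1
    have hsw : Summable (fun k => convPow μ k w) := summable_convPow f hf hsum w
    have := Summable.tsum_eq_zero_add hsw
    have h0 : convPow μ 0 w = (if w = 1 then (1:ℝ) else 0) := rfl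
    rw [this, h0]
    ring
  rw [step0, step1, step2, step3, omega_apply f]
  rw [← mul_sub, ← mul_assoc, mul_inv_cancel₀ (F_one_ne f hf), one_mul]
  ring

lemma omega_conv_f (v : G) :
    ∑ᶠ r : G, ω r * (f (r⁻¹ * v) : ℝ) = if v = 1 then (1:ℝ) else 0 := by
  have hFsym : ∀ s : G, ((f s⁻¹ : ℤ) : ℝ) = ((f s : ℤ) : ℝ) := fun s => by
    exact_mod_cast congrArg (fun n : ℤ => (n : ℝ)) (hf.2.2.2.1 s)
  have hsym := convR_symm (u := fun s : G => ((f s : ℝ))) (v := fun s : G => ω s)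
    (fun s => hFsym s) (omega_symm f hf hsum) v
  have lhs_eq : (∑ᶠ r : G, ω r * (f (r⁻¹ * v) : ℝ))
      = convR (fun s : G => ω s) (fun s : G => (f s : ℝ)) v := rfl
  rw [lhs_eq, ← hsym]
  have h3 : convR (fun s : G => (f s : ℝ)) (fun s : G => ω s) v⁻¹
      = ∑ᶠ s : G, (f s : ℝ) * ω (s⁻¹ * v⁻¹) := rfl
  rw [h3, f_conv_omega f hf hsum v⁻¹]
  simp [inv_eq_one]

set_option maxHeartbeats 1000000 in
lemma omega_small {ε : ℝ} (hε : 0 < ε) : {s : G | ε ≤ |ω s|}.Finite := by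
  classical
  set M : ℕ → ℝ := fun k => ⨆ t : G, |convPow μ k t| with hM
  have htend : Tendsto (fun K => ∑' k : ℕ, M (k + K)) atTop (𝓝 0) := tendsto_sum_nat_add M
  have hpos : (0:ℝ) < ε * (f 1 : ℝ) := mul_pos hε (F_one_pos f hf)
  obtain ⟨K, hK⟩ := (htend.eventually (gt_mem_nhds hpos)).exists
  have hS : (⋃ k ∈ Finset.range K, support (convPow μ k)).Finite :=
    Set.Finite.biUnion (Finset.range K).finite_toSet
      (fun k _ => support_convPow_finite (mu_support_finite f hf) k)
  refine Set.Finite.subset hS ?_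
  intro s hs
  simp only [Set.mem_setOf_eq] at hs
  by_contra hcon
  simp only [Set.mem_iUnion, not_exists, mem_support, not_not] at hcon
  have hzero : ∀ k ∈ Finset.range K, convPow μ k s = 0 := fun k hk => hcon k hk
  have hsum_s : Summable (fun k => convPow μ k s) := summable_convPow f hf hsum s
  have hshift : ∑' k : ℕ, convPow μ k s = ∑' k : ℕ, convPow μ (k + K) s := by
    rw [← Summable.sum_add_tsum_nat_add K hsum_s, Finset.sum_eq_zero hzero, zero_add]
  have habs : Summable (fun k => |convPow μ (k + K) s|) :=
    (summable_nat_add_iff K).mpr (summable_abs_convPow f hf hsum s)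
  have hMsh : Summable (fun k => M (k + K)) := (summable_nat_add_iff K).mpr hsum
  have hb1 : |∑' k : ℕ, convPow μ (k + K) s| ≤ ∑' k : ℕ, |convPow μ (k + K) s| := by
    have := norm_tsum_le_tsum_norm (f := fun k => convPow μ (k + K) s) (by
      simpa [Real.norm_eq_abs] using habs)
    simpa [Real.norm_eq_abs] using this
  have hb2 : ∑' k : ℕ, |convPow μ (k + K) s| ≤ ∑' k : ℕ, M (k + K) :=
    Summable.tsum_le_tsum (fun k => abs_convPow_le f hf (k + K) s) habs hMsh
  have hlt : |∑' k : ℕ, convPow μ k s| < ε * (f 1 : ℝ) := by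
    rw [hshift]; exact lt_of_le_of_lt (le_trans hb1 hb2) hK
  have : |ω s| < ε := by
    rw [omega_apply f, abs_mul, abs_of_pos (inv_pos.mpr (F_one_pos f hf))]
    calc ((f 1 : ℝ))⁻¹ * |∑' k : ℕ, convPow μ k s|
        < ((f 1 : ℝ))⁻¹ * (ε * (f 1 : ℝ)) := by
          exact mul_lt_mul_of_pos_left hlt (inv_pos.mpr (F_one_pos f hf))
      _ = ε := by rw [mul_comm ε, ← mul_assoc, inv_mul_cancel₀ (F_one_ne f hf), one_mul]
  linarith

lemma psi_small (h : G → ℤ) (hh : (support h).Finite) {ε : ℝ} (hε : 0 < ε) :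
    {w : G | ε ≤ |∑ᶠ s : G, (h s : ℝ) * ω (s⁻¹ * w)|}.Finite := by
  classical
  set T : Finset G := hh.toFinset with hT
  set C : ℝ := ∑ s ∈ T, |(h s : ℝ)| with hC
  have hC0 : (0:ℝ) ≤ C := Finset.sum_nonneg fun _ _ => abs_nonneg _
  have hδ : (0:ℝ) < ε / (C + 1) := div_pos hε (by linarith)
  have hB := omega_small f hf hsum hδ
  refine Set.Finite.subset (Set.Finite.biUnion T.finite_toSet
    (fun s _ => hB.image (fun t => s * t))) ?_
  intro w hw
  simp only [Set.mem_setOf_eq] at hw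
  by_contra hcon
  simp only [Set.mem_iUnion, not_exists] at hcon
  have hsmall : ∀ s ∈ T, |ω (s⁻¹ * w)| < ε / (C + 1) := by
    intro s hs
    by_contra hge
    push_neg at hge
    exact hcon s hs ⟨s⁻¹ * w, hge, by group⟩
  have hsupp : support (fun s : G => (h s : ℝ) * ω (s⁻¹ * w)) ⊆ (T : Set G) := by
    intro s hs
    have : (h s : ℝ) ≠ 0 := fun hcon' =>
      (mem_support.mp hs) (by rw [hcon', zero_mul])
    have : h s ≠ 0 := fun hcon' => this (by exact_mod_cast congrArg (fun n : ℤ => (n:ℝ)) hcon')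
    simp [hT, Set.Finite.mem_toFinset, mem_support, this]
  have heq : ∑ᶠ s : G, (h s : ℝ) * ω (s⁻¹ * w) = ∑ s ∈ T, (h s : ℝ) * ω (s⁻¹ * w) :=
    finsum_eq_sum_of_support_subset _ hsupp
  have hbd : |∑ s ∈ T, (h s : ℝ) * ω (s⁻¹ * w)| ≤ C * (ε / (C + 1)) := by
    calc |∑ s ∈ T, (h s : ℝ) * ω (s⁻¹ * w)| ≤ ∑ s ∈ T, |(h s : ℝ) * ω (s⁻¹ * w)| :=
          Finset.abs_sum_le_sum_abs _ _
      _ ≤ ∑ s ∈ T, |(h s : ℝ)| * (ε / (C + 1)) := by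
          refine Finset.sum_le_sum fun s hs => ?_
          rw [abs_mul]
          exact mul_le_mul_of_nonneg_left (le_of_lt (hsmall s hs)) (abs_nonneg _)
      _ = C * (ε / (C + 1)) := by rw [← Finset.sum_mul]
  have hfin : C * (ε / (C + 1)) < ε := by
    rw [mul_div_assoc', div_lt_iff₀ (by linarith : (0:ℝ) < C + 1)]
    nlinarith
  rw [heq] at hw
  linarith


lemma inner_f_omega (t w : G) :
    ∑ᶠ s : G, (f (t⁻¹ * s) : ℝ) * ω (s⁻¹ * w) = if t = w then (1:ℝ) else 0 := by
  have hterm : ∀ s : G, (f (t⁻¹ * s) : ℝ) * ω (s⁻¹ * w)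
      = (fun r : G => (f r : ℝ) * ω (r⁻¹ * (t⁻¹ * w))) (t⁻¹ * s) := by
    intro s
    simp only []
    congr 2
    group
  rw [finsum_congr hterm, finsum_shift (fun r : G => (f r : ℝ) * ω (r⁻¹ * (t⁻¹ * w))) t,
    f_conv_omega f hf hsum (t⁻¹ * w)]
  simp only [inv_mul_eq_one]

lemma inner_omega_f (t w : G) :
    ∑ᶠ s : G, ω (t⁻¹ * s) * (f (s⁻¹ * w) : ℝ) = if t = w then (1:ℝ) else 0 := by
  have hterm : ∀ s : G, ω (t⁻¹ * s) * (f (s⁻¹ * w) : ℝ)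
      = (fun r : G => ω r * (f (r⁻¹ * (t⁻¹ * w)) : ℝ)) (t⁻¹ * s) := by
    intro s
    simp only []
    congr 2
    group
  rw [finsum_congr hterm, finsum_shift (fun r : G => ω r * (f (r⁻¹ * (t⁻¹ * w)) : ℝ)) t,
    omega_conv_f f hf hsum (t⁻¹ * w)]
  simp only [inv_mul_eq_one]


end Analytic
end Stmt8Aux

open Stmt8Aux

/-- For `h ∈ ℤΓ`, `Q(hω) = 0` iff `h ∈ ℤΓf`. -/
theorem stmt8 {G : Type*} [Group G] [Countable G] [Infinite G]
    (f : G → ℤ) (hf : WellBalancedZ f)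
    (hsum : Summable (fun k : ℕ => ⨆ s : G, |convPow (muOf (fun s => (f s : ℝ))) k s|))
    (h : G → ℤ) (hh : (Function.support h).Finite) :
    homPt f h = 0 ↔
      ∃ u : G → ℤ, (Function.support u).Finite ∧
        ∀ w : G, h w = ∑ᶠ s : G, u s * f (s⁻¹ * w) := by
  classical
  set ψ : G → ℝ := fun w => ∑ᶠ s : G, (h s : ℝ) * omegaOfZ f (s⁻¹ * w) with hψ
  have hsupp_psi_h : ∀ w : G, support (fun s : G => (h s : ℝ) * omegaOfZ f (s⁻¹ * w))
      ⊆ (hh.toFinset : Set G) := by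
    intro w s hs
    have h1 : (h s : ℝ) ≠ 0 := fun hcon => (mem_support.mp hs) (by rw [hcon, zero_mul])
    have h2 : h s ≠ 0 := fun hcon => h1 (by rw [hcon, Int.cast_zero])
    simpa [Set.Finite.mem_toFinset] using h2
  constructor
  · intro H
    have hint : ∀ w : G, ∃ n : ℤ, (n : ℝ) = ψ w := by
      intro w
      have hw : ((ψ w : ℝ) : UnitAddCircle) = 0 := by
        simpa [homPt, hψ] using congrFun H w
      rcases (AddCircle.coe_eq_zero_iff (1:ℝ)).mp hw with ⟨n, hn⟩
      exact ⟨n, by simpa using hn⟩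
    choose u hu using hint
    have hufin : (support u).Finite := by
      apply Set.Finite.subset (psi_small f hf hsum h hh one_pos)
      intro w hw
      have h1 : u w ≠ 0 := hw
      have h2 : (1:ℝ) ≤ |(u w : ℝ)| := by exact_mod_cast Int.one_le_abs h1
      rw [hu w] at h2
      exact h2
    refine ⟨u, hufin, fun w => ?_⟩
    set U : Finset G := hufin.toFinset with hU
    have hsupint : support (fun s : G => u s * f (s⁻¹ * w)) ⊆ (U : Set G) := by
      intro s hs
      have : u s ≠ 0 := fun hcon => (mem_support.mp hs) (by rw [hcon, zero_mul])
      simpa [hU, Set.Finite.mem_toFinset] using this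
    have hRHS : ∑ᶠ s : G, u s * f (s⁻¹ * w) = ∑ s ∈ U, u s * f (s⁻¹ * w) :=
      finsum_eq_sum_of_support_subset _ hsupint
    have hcastRHS : ((∑ s ∈ U, u s * f (s⁻¹ * w) : ℤ) : ℝ)
        = ∑ s ∈ U, (u s : ℝ) * (f (s⁻¹ * w) : ℝ) := by push_cast; ring
    -- the real computation
    have hW : {s : G | (f (s⁻¹ * w) : ℝ) ≠ 0}.Finite := by
      apply Set.Finite.subset (hf.1.image (fun q => w * q⁻¹))
      intro s hs
      refine ⟨s⁻¹ * w, ?_, by group⟩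
      have : f (s⁻¹ * w) ≠ 0 := fun hcon => hs (by rw [hcon, Int.cast_zero])
      simpa [mem_support] using this
    set Wfin : Finset G := hW.toFinset with hWfin
    have hreal : ∑ s ∈ U, (u s : ℝ) * (f (s⁻¹ * w) : ℝ) = (h w : ℝ) := by
      have e0 : ∑ s ∈ U, (u s : ℝ) * (f (s⁻¹ * w) : ℝ)
          = ∑ᶠ s : G, ψ s * (f (s⁻¹ * w) : ℝ) := by
        rw [Finset.sum_congr rfl (fun s _ => by rw [hu s])]
        refine (finsum_eq_sum_of_support_subset _ ?_).symm
        intro s hs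
        have hψs : ψ s ≠ 0 := fun hcon => (mem_support.mp hs) (by rw [hcon, zero_mul])
        have : (u s : ℝ) ≠ 0 := by rw [hu s]; exact hψs
        have : u s ≠ 0 := fun hcon => this (by rw [hcon, Int.cast_zero])
        simpa [hU, Set.Finite.mem_toFinset] using this
      have e1 : ∑ᶠ s : G, ψ s * (f (s⁻¹ * w) : ℝ)
          = ∑ s ∈ Wfin, ψ s * (f (s⁻¹ * w) : ℝ) := by
        refine finsum_eq_sum_of_support_subset _ ?_
        intro s hs
        have : (f (s⁻¹ * w) : ℝ) ≠ 0 := fun hcon => (mem_support.mp hs) (by rw [hcon, mul_zero])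
        simpa [hWfin, Set.Finite.mem_toFinset] using this
      have e2 : ∀ s ∈ Wfin, ψ s * (f (s⁻¹ * w) : ℝ)
          = ∑ t ∈ hh.toFinset, (h t : ℝ) * (omegaOfZ f (t⁻¹ * s) * (f (s⁻¹ * w) : ℝ)) := by
        intro s _
        rw [hψ]
        simp only []
        rw [finsum_eq_sum_of_support_subset _ (hsupp_psi_h s), Finset.sum_mul]
        exact Finset.sum_congr rfl fun t _ => by ring
      have e3 : ∑ s ∈ Wfin, ψ s * (f (s⁻¹ * w) : ℝ)
          = ∑ t ∈ hh.toFinset, (h t : ℝ) *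
              (∑ s ∈ Wfin, omegaOfZ f (t⁻¹ * s) * (f (s⁻¹ * w) : ℝ)) := by
        rw [Finset.sum_congr rfl e2, Finset.sum_comm]
        exact Finset.sum_congr rfl fun t _ => by rw [Finset.mul_sum]
      have e4 : ∀ t : G, ∑ s ∈ Wfin, omegaOfZ f (t⁻¹ * s) * (f (s⁻¹ * w) : ℝ)
          = if t = w then (1:ℝ) else 0 := by
        intro t
        rw [← inner_omega_f f hf hsum t w]
        refine (finsum_eq_sum_of_support_subset _ ?_).symm
        intro s hs
        have : (f (s⁻¹ * w) : ℝ) ≠ 0 := fun hcon => (mem_support.mp hs) (by rw [hcon, mul_zero])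
        simpa [hWfin, Set.Finite.mem_toFinset] using this
      rw [e0, e1, e3, Finset.sum_congr rfl (fun t _ => by rw [e4 t])]
      rw [Finset.sum_congr rfl (fun t _ => by rw [mul_ite, mul_one, mul_zero]),
        Finset.sum_ite_eq' hh.toFinset w (fun t => (h t : ℝ))]
      by_cases hwT : w ∈ hh.toFinset
      · rw [if_pos hwT]
      · rw [if_neg hwT]
        have : h w = 0 := by
          by_contra hcon
          exact hwT (by simpa [Set.Finite.mem_toFinset] using hcon)
        rw [this, Int.cast_zero]
    have : ((h w : ℤ) : ℝ) = ((∑ s ∈ U, u s * f (s⁻¹ * w) : ℤ) : ℝ) := by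
      rw [hcastRHS, hreal]
    rw [hRHS]
    exact_mod_cast this
  · rintro ⟨u, hufin, hform⟩
    funext w
    show ((ψ w : ℝ) : UnitAddCircle) = 0
    suffices hval : ψ w = ((u w : ℤ) : ℝ) by
      rw [hval]
      exact (AddCircle.coe_eq_zero_iff (1:ℝ)).mpr ⟨u w, by simp⟩
    set U : Finset G := hufin.toFinset with hU
    have hsuppu : ∀ s : G, support (fun t : G => u t * f (t⁻¹ * s)) ⊆ (U : Set G) := by
      intro s t ht
      have : u t ≠ 0 := fun hcon => (mem_support.mp ht) (by rw [hcon, zero_mul])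
      simpa [hU, Set.Finite.mem_toFinset] using this
    have hcast : ∀ s : G, (h s : ℝ) = ∑ t ∈ U, (u t : ℝ) * (f (t⁻¹ * s) : ℝ) := by
      intro s
      rw [hform s, finsum_eq_sum_of_support_subset _ (hsuppu s)]
      push_cast
      ring
    have hsupph : support h ⊆ support u * support f := by
      intro s hs
      have : ∑ᶠ t : G, u t * f (t⁻¹ * s) ≠ 0 := by rw [← hform s]; exact hs
      have hex : ∃ t : G, u t * f (t⁻¹ * s) ≠ 0 := by
        by_contra hcon
        push_neg at hcon
        exact this (finsum_eq_zero_of_forall_eq_zero hcon)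
      obtain ⟨t, ht⟩ := hex
      have hu' : u t ≠ 0 := fun hcon => ht (by rw [hcon, zero_mul])
      have hf' : f (t⁻¹ * s) ≠ 0 := fun hcon => ht (by rw [hcon, mul_zero])
      exact ⟨t, hu', t⁻¹ * s, hf', by group⟩
    set A : Finset G := (hufin.mul hf.1).toFinset with hA
    have hhA : support (fun s : G => (h s : ℝ) * omegaOfZ f (s⁻¹ * w)) ⊆ (A : Set G) := by
      intro s hs
      have h1 : (h s : ℝ) ≠ 0 := fun hcon => (mem_support.mp hs) (by rw [hcon, zero_mul])
      have h2 : h s ≠ 0 := fun hcon => h1 (by rw [hcon, Int.cast_zero])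
      simpa [hA, Set.Finite.mem_toFinset] using hsupph h2
    have e0 : ψ w = ∑ s ∈ A, (h s : ℝ) * omegaOfZ f (s⁻¹ * w) := by
      rw [hψ]
      exact finsum_eq_sum_of_support_subset _ hhA
    have e1 : ∑ s ∈ A, (h s : ℝ) * omegaOfZ f (s⁻¹ * w)
        = ∑ t ∈ U, (u t : ℝ) *
            (∑ s ∈ A, (f (t⁻¹ * s) : ℝ) * omegaOfZ f (s⁻¹ * w)) := by
      have : ∀ s ∈ A, (h s : ℝ) * omegaOfZ f (s⁻¹ * w)
          = ∑ t ∈ U, (u t : ℝ) * ((f (t⁻¹ * s) : ℝ) * omegaOfZ f (s⁻¹ * w)) := by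
        intro s _
        rw [hcast s, Finset.sum_mul]
        exact Finset.sum_congr rfl fun t _ => by ring
      rw [Finset.sum_congr rfl this, Finset.sum_comm]
      exact Finset.sum_congr rfl fun t _ => by rw [Finset.mul_sum]
    have e2 : ∀ t ∈ U, ∑ s ∈ A, (f (t⁻¹ * s) : ℝ) * omegaOfZ f (s⁻¹ * w)
        = if t = w then (1:ℝ) else 0 := by
      intro t ht
      rw [← inner_f_omega f hf hsum t w]
      refine (finsum_eq_sum_of_support_subset _ ?_).symm
      intro s hs
      have h1 : (f (t⁻¹ * s) : ℝ) ≠ 0 := fun hcon => (mem_support.mp hs) (by rw [hcon, zero_mul])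
      have h2 : f (t⁻¹ * s) ≠ 0 := fun hcon => h1 (by rw [hcon, Int.cast_zero])
      have hut : u t ≠ 0 := by simpa [hU, Set.Finite.mem_toFinset] using ht
      have : s ∈ support u * support f := ⟨t, hut, t⁻¹ * s, h2, by group⟩
      simpa [hA, Set.Finite.mem_toFinset] using this
    rw [e0, e1, Finset.sum_congr rfl (fun t ht => by rw [e2 t ht]),
      Finset.sum_congr rfl (fun t _ => by rw [mul_ite, mul_one, mul_zero]),
      Finset.sum_ite_eq' U w (fun t => (u t : ℝ))]
    by_cases hwU : w ∈ U
    · rw [if_pos hwU]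
    · rw [if_neg hwU]
      have : u w = 0 := by
        by_contra hcon
        exact hwU (by simpa [hU, Set.Finite.mem_toFinset] using hcon)
      rw [this, Int.cast_zero]
end
end

section
/- Let Γ be a countable group, f, g ∈ ℤΓ, and N a finite-index normal subgroup of Γ with quotient map π : ℤΓ → ℤ(Γ/N). Then Σ_{s∈Γ} g_s·x_s = 0 in ℝ/ℤ for every x ∈ Fix_N(X_f) if and only if π(g) ∈ ℤ(Γ/N)·π(f), i.e. π(g) = h·π(f) for some h in the integral group ring ℤ(Γ/N). -/
open Filter Topology
open scoped Classical

noncomputable section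

/-- `Fix_N(X_f) = {x ∈ X_f : x_{γt} = x_t for all γ ∈ N, t ∈ Γ}`. -/
def fixSet {G : Type*} [Group G] (f : G → ℤ) (N : Subgroup G) :
    Set (G → UnitAddCircle) :=
  {x | x ∈ XfSet f ∧ ∀ γ ∈ N, ∀ t : G, x (γ * t) = x t}

/-- The ring homomorphism `π : ℤΓ → ℤ(Γ/N)`, `π(g)_c = ∑_{sN = c} g_s`. -/
def quotPush {G : Type*} [Group G] (N : Subgroup G) (g : G → ℤ) : (G ⧸ N) → ℤ :=
  fun c => ∑ᶠ s : G, if (QuotientGroup.mk s : G ⧸ N) = c then g s else 0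

/-- Pushing a weighted sum over `G` down to the finite quotient. -/
lemma pushSum {G : Type*} [Group G] (N : Subgroup G) [Fintype (G ⧸ N)]
    {M : Type*} [AddCommGroup M] (g : G → ℤ) (hg : (Function.support g).Finite)
    (k : (G ⧸ N) → M) :
    (∑ᶠ s : G, g s • k (QuotientGroup.mk s)) = ∑ c : G ⧸ N, quotPush N g c • k c := by
  classical
  have h1 : ∀ c : G ⧸ N, quotPush N g c
      = ∑ s ∈ hg.toFinset, if (QuotientGroup.mk s : G ⧸ N) = c then g s else 0 := by
    intro c
    refine finsum_eq_sum_of_support_subset _ ?_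
    intro s hs
    simp only [Function.mem_support] at hs
    have : g s ≠ 0 := by
      intro h0; apply hs; simp [h0]
    simpa using this
  have h2 : (∑ᶠ s : G, g s • k (QuotientGroup.mk s))
      = ∑ s ∈ hg.toFinset, g s • k (QuotientGroup.mk s) := by
    refine finsum_eq_sum_of_support_subset _ ?_
    intro s hs
    simp only [Function.mem_support] at hs
    have : g s ≠ 0 := fun h0 => hs (by simp [h0])
    simpa using this
  rw [h2]
  simp_rw [h1, Finset.sum_smul, ite_smul, zero_smul]
  rw [Finset.sum_comm]
  refine Finset.sum_congr rfl fun s _ => ?_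
  simp [Finset.sum_ite_eq]

/-- The injection `ℚ/ℤ → ℝ/ℤ`. -/
def iotaQR : AddCircle (1 : ℚ) →+ AddCircle (1 : ℝ) :=
  QuotientAddGroup.map _ _ (Rat.castHom ℝ).toAddMonoidHom <| by
    intro x hx
    obtain ⟨k, hk⟩ := AddSubgroup.mem_zmultiples_iff.mp hx
    refine AddSubgroup.mem_comap.mpr (AddSubgroup.mem_zmultiples_iff.mpr ⟨k, ?_⟩)
    have : ((k : ℚ) : ℝ) = (x : ℝ) := by exact_mod_cast congrArg (fun q : ℚ => (q : ℝ)) (by simpa using hk)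
    simpa using this

lemma iotaQR_eq_zero {z : AddCircle (1 : ℚ)} (h : iotaQR z = 0) : z = 0 := by
  induction z using QuotientAddGroup.induction_on with
  | H x =>
    have hx : iotaQR (QuotientAddGroup.mk x) = QuotientAddGroup.mk ((x : ℝ)) := rfl
    rw [hx] at h
    have : (x : ℝ) ∈ AddSubgroup.zmultiples (1 : ℝ) := (QuotientAddGroup.eq_zero_iff _).mp h
    obtain ⟨k, hk⟩ := AddSubgroup.mem_zmultiples_iff.mp this
    have hxq : x = (k : ℚ) := by
      have : ((k : ℚ) : ℝ) = (x : ℝ) := by simpa using hk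
      exact_mod_cast this.symm
    refine (QuotientAddGroup.eq_zero_iff _).mpr ?_
    exact AddSubgroup.mem_zmultiples_iff.mpr ⟨k, by simp [hxq]⟩

/-- Separation: a character of `A` vanishing on a submodule but not on `v ∉ M`. -/
lemma exists_char {A : Type*} [AddCommGroup A] (M : Submodule ℤ A) {v : A} (hv : v ∉ M) :
    ∃ χ : A →+ AddCircle (1 : ℝ), (∀ m ∈ M, χ m = 0) ∧ χ v ≠ 0 := by
  have hne : (Submodule.Quotient.mk v : A ⧸ M) ≠ 0 := by
    simpa [Submodule.Quotient.mk_eq_zero] using hv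
  obtain ⟨c, hc⟩ := CharacterModule.exists_character_apply_ne_zero_of_ne_zero hne
  refine ⟨iotaQR.comp (c.comp (M.mkQ).toAddMonoidHom), ?_, ?_⟩
  · intro m hm
    have : M.mkQ m = 0 := by simpa [Submodule.Quotient.mk_eq_zero] using hm
    show iotaQR (c (M.mkQ m)) = 0
    rw [this, map_zero, map_zero]
  · intro h0
    exact hc (iotaQR_eq_zero h0)

/-- The finite-group version of the statement. -/
lemma keyFinite {Q : Type*} [Group Q] [Fintype Q] (F Gg : Q → ℤ) :
    (∀ y : Q → UnitAddCircle,
        (∀ t : Q, (∑ c : Q, F c • y (t * c)) = 0) → (∑ c : Q, Gg c • y c) = 0) ↔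
      ∃ h : Q → ℤ, ∀ a : Q, Gg a = ∑ c : Q, h (a * c⁻¹) * F c := by
  classical
  set v : Q → (Q → ℤ) := fun t a => F (t⁻¹ * a) with hv
  have hspan : (∃ h : Q → ℤ, ∀ a : Q, Gg a = ∑ c : Q, h (a * c⁻¹) * F c)
      ↔ Gg ∈ Submodule.span ℤ (Set.range v) := by
    rw [Submodule.mem_span_range_iff_exists_fun]
    have hsum : ∀ (h : Q → ℤ) (a : Q),
        (∑ t : Q, h t * F (t⁻¹ * a)) = ∑ c : Q, h (a * c⁻¹) * F c := by
      intro h a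
      refine Fintype.sum_equiv ((Equiv.inv Q).trans (Equiv.mulRight a)) _ _ fun t => ?_
      simp [mul_inv_rev]
    constructor
    · rintro ⟨h, hh⟩
      refine ⟨h, ?_⟩
      funext a
      have hva : (∑ t : Q, h t • v t) a = ∑ t : Q, h t * F (t⁻¹ * a) := by
        simp [hv]
      rw [hva, hh a, hsum]
    · rintro ⟨h, hh⟩
      refine ⟨h, fun a => ?_⟩
      have hva : (∑ t : Q, h t • v t) a = ∑ t : Q, h t * F (t⁻¹ * a) := by simp [hv]
      rw [← hh, hva, hsum]
  constructor
  · intro H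
    rw [hspan]
    by_contra hno
    obtain ⟨χ, hχ0, hχv⟩ := exists_char (Submodule.span ℤ (Set.range v)) hno
    set y : Q → UnitAddCircle := fun a => χ (Pi.single a (1 : ℤ)) with hy
    have hw : ∀ w : Q → ℤ, χ w = ∑ a : Q, w a • y a := by
      intro w
      conv_lhs => rw [← Finset.univ_sum_single w]
      rw [map_sum]
      refine Finset.sum_congr rfl fun a _ => ?_
      have hs : Pi.single a (w a) = w a • (Pi.single a (1 : ℤ) : Q → ℤ) := by
        rw [← Pi.single_smul]
        simp
      rw [hs, map_zsmul]
    have hyt : ∀ t : Q, (∑ c : Q, F c • y (t * c)) = 0 := by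
      intro t
      have h1 : (∑ c : Q, F c • y (t * c)) = ∑ a : Q, v t a • y a := by
        refine Fintype.sum_equiv (Equiv.mulLeft t) _ _ fun c => ?_
        simp [hv]
      rw [h1, ← hw (v t)]
      exact hχ0 _ (Submodule.subset_span ⟨t, rfl⟩)
    have := H y hyt
    rw [← hw Gg] at this
    exact absurd this hχv
  · rintro ⟨h, hh⟩ y hy
    calc (∑ c : Q, Gg c • y c)
        = ∑ a : Q, ∑ c : Q, (h (a * c⁻¹) * F c) • y a := by
          refine Finset.sum_congr rfl fun a _ => ?_
          rw [hh a, Finset.sum_smul]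
      _ = ∑ c : Q, ∑ a : Q, (h (a * c⁻¹) * F c) • y a := Finset.sum_comm
      _ = ∑ c : Q, ∑ t : Q, (h t * F c) • y (t * c) := by
          refine Finset.sum_congr rfl fun c _ => ?_
          refine (Fintype.sum_equiv (Equiv.mulRight c) _ _ fun t => ?_).symm
          simp
      _ = ∑ t : Q, ∑ c : Q, (h t * F c) • y (t * c) := Finset.sum_comm
      _ = ∑ t : Q, h t • ∑ c : Q, F c • y (t * c) := by
          refine Finset.sum_congr rfl fun t _ => ?_
          rw [Finset.smul_sum]
          exact Finset.sum_congr rfl fun c _ => (mul_smul _ _ _)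
      _ = 0 := by simp [hy]

/-- Rewriting the convolution with `π(f)` as a sum over the quotient. -/
lemma pushRHS {G : Type*} [Group G] (N : Subgroup G) [N.Normal] [Fintype (G ⧸ N)]
    (f : G → ℤ) (hf : (Function.support f).Finite) (h : (G ⧸ N) → ℤ) (a : G) :
    (∑ᶠ s : G, h (QuotientGroup.mk (a * s⁻¹)) * f s)
      = ∑ c : G ⧸ N, h ((QuotientGroup.mk a : G ⧸ N) * c⁻¹) * quotPush N f c := by
  have h1 : (∑ᶠ s : G, h (QuotientGroup.mk (a * s⁻¹)) * f s)
      = ∑ᶠ s : G, f s • (fun c : G ⧸ N => h ((QuotientGroup.mk a : G ⧸ N) * c⁻¹))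
          (QuotientGroup.mk s) := by
    refine finsum_congr fun s => ?_
    simp [smul_eq_mul, mul_comm, QuotientGroup.mk_mul, QuotientGroup.mk_inv]
  have h2 := pushSum N f hf (fun c : G ⧸ N => h ((QuotientGroup.mk a : G ⧸ N) * c⁻¹))
  rw [h1, h2]
  exact Finset.sum_congr rfl fun c _ => by simp [smul_eq_mul, mul_comm]

/-- `∑_s g_s·x_s = 0` for every `x ∈ Fix_N(X_f)` iff `π(g) ∈ ℤ(Γ/N)·π(f)`.
(The convolution `h·π(f)` is written at a coset `aN` as `∑_{s∈Γ} h(as⁻¹N)·f_s`.) -/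
theorem stmt10 {G : Type*} [Group G] [Countable G]
    (f g : G → ℤ) (hf : (Function.support f).Finite)
    (hg : (Function.support g).Finite)
    (N : Subgroup G) [N.Normal] [N.FiniteIndex] :
    (∀ x ∈ fixSet f N, (∑ᶠ s : G, g s • x s) = 0) ↔
      ∃ h : (G ⧸ N) → ℤ, ∀ a : G,
        quotPush N g (QuotientGroup.mk a) =
          ∑ᶠ s : G, h (QuotientGroup.mk (a * s⁻¹)) * f s := by
  classical
  haveI : Fintype (G ⧸ N) := Fintype.ofFinite _
  constructor
  · intro H
    have hkey : ∀ y : G ⧸ N → UnitAddCircle,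
        (∀ t : G ⧸ N, (∑ c : G ⧸ N, quotPush N f c • y (t * c)) = 0) →
          (∑ c : G ⧸ N, quotPush N g c • y c) = 0 := by
      intro y hy
      set x : G → UnitAddCircle := fun s => y (QuotientGroup.mk s) with hx
      have hxmem : x ∈ fixSet f N := by
        constructor
        · intro t
          have h1 : (∑ᶠ s : G, f s • x (t * s))
              = ∑ᶠ s : G, f s • (fun c => y ((QuotientGroup.mk t : G ⧸ N) * c))
                  (QuotientGroup.mk s) := by
            refine finsum_congr fun s => ?_
            simp [hx, QuotientGroup.mk_mul]
          have h2 := pushSum N f hf (fun c : G ⧸ N => y ((QuotientGroup.mk t : G ⧸ N) * c))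
          rw [h1, h2]
          exact hy (QuotientGroup.mk t)
        · intro γ hγ t
          have : (QuotientGroup.mk (γ * t) : G ⧸ N) = QuotientGroup.mk t := by
            simp [QuotientGroup.mk_mul, (QuotientGroup.eq_one_iff γ).mpr hγ]
          simp [hx, this]
      have h0 := H x hxmem
      calc (∑ c : G ⧸ N, quotPush N g c • y c) = ∑ᶠ s : G, g s • x s := (pushSum N g hg y).symm
        _ = 0 := h0
    obtain ⟨h, hh⟩ := (keyFinite (quotPush N f) (quotPush N g)).mp hkey
    refine ⟨h, fun a => ?_⟩
    rw [pushRHS N f hf h a]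
    exact hh (QuotientGroup.mk a)
  · rintro ⟨h, hh⟩ x hx
    set y : G ⧸ N → UnitAddCircle := fun c => x c.out with hy
    have hxy : ∀ s : G, x s = y (QuotientGroup.mk s) := by
      intro s
      have h1 : QuotientGroup.mk ((QuotientGroup.mk s : G ⧸ N).out)
          = (QuotientGroup.mk s : G ⧸ N) := QuotientGroup.out_eq' _
      have h2 : ((QuotientGroup.mk s : G ⧸ N).out)⁻¹ * s ∈ N := QuotientGroup.eq.mp h1
      have h3 : (QuotientGroup.mk s : G ⧸ N).out * s⁻¹ ∈ N := by
        have h4 : s⁻¹ * ((QuotientGroup.mk s : G ⧸ N).out) ∈ N := by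
          have := N.inv_mem h2; simpa using this
        have := Subgroup.Normal.conj_mem ‹N.Normal› _ h4 s
        simpa [mul_assoc] using this
      have h5 := hx.2 _ h3 s
      simp only [inv_mul_cancel_right] at h5
      simp [hy, h5]
    have hmp : ∀ a : G ⧸ N, quotPush N g a = ∑ c : G ⧸ N, h (a * c⁻¹) * quotPush N f c := by
      intro a
      obtain ⟨b, rfl⟩ := QuotientGroup.mk_surjective a
      rw [hh b, pushRHS N f hf h b]
    have hyt : ∀ t : G ⧸ N, (∑ c : G ⧸ N, quotPush N f c • y (t * c)) = 0 := by
      intro t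
      obtain ⟨u, rfl⟩ := QuotientGroup.mk_surjective t
      have h2 : (∑ᶠ s : G, f s • x (u * s)) = ∑ᶠ s : G, f s •
          (fun c => y ((QuotientGroup.mk u : G ⧸ N) * c)) (QuotientGroup.mk s) := by
        refine finsum_congr fun s => ?_
        rw [hxy (u * s)]
        simp [QuotientGroup.mk_mul]
      have h1 := pushSum N f hf (fun c : G ⧸ N => y ((QuotientGroup.mk u : G ⧸ N) * c))
      have h0 := hx.1 u
      rw [h2, h1] at h0
      exact h0
    have := (keyFinite (quotPush N f) (quotPush N g)).mpr ⟨h, hmp⟩ y hyt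
    calc (∑ᶠ s : G, g s • x s)
        = ∑ᶠ s : G, g s • y (QuotientGroup.mk s) := finsum_congr fun s => by rw [hxy s]
      _ = ∑ c : G ⧸ N, quotPush N g c • y c := pushSum N g hg y
      _ = 0 := this
end
end

section
/- Let Γ be a finitely generated infinite group, S ⊆ Γ \ {e} a finite symmetric generating set, and (Γ_n)_{n≥1} a sequence of finite-index normal subgroups of Γ with ⋂_{n≥1} ⋃_{i≥n} Γ_i = {e}; let π_n : Γ → Γ/Γ_n be the quotient maps. Then for every finite subset A ⊆ Γ there exists a finite subset B ⊆ Γ containing A such that for all sufficiently large n, the set (Γ/Γ_n) \ π_n(B) is nonempty and the subgraph of the Cayley graph C(Γ/Γ_n, π_n(S)) induced on (Γ/Γ_n) \ π_n(B) is connected. -/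
set_option linter.unusedSectionVars false
set_option maxHeartbeats 1000000

open Filter Topology

open Relation Pointwise

open Filter Topology

section Generic
variable {V : Type*}

/-- Reachability avoiding a set `X` (both endpoints of each step outside `X`). -/
def RAav (Adj : V → V → Prop) (X : Set V) : V → V → Prop :=
  Relation.ReflTransGen (fun a b => Adj a b ∧ a ∉ X ∧ b ∉ X)

/-- Reachability within a set `X`. -/
def RIin (Adj : V → V → Prop) (X : Set V) : V → V → Prop :=
  Relation.ReflTransGen (fun a b => Adj a b ∧ a ∈ X ∧ b ∈ X)

variable {Adj : V → V → Prop} {X Y : Set V} {a b c : V}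

lemma RAav.refl : RAav Adj X a a := Relation.ReflTransGen.refl

lemma RAav.trans (h1 : RAav Adj X a b) (h2 : RAav Adj X b c) : RAav Adj X a c :=
  Relation.ReflTransGen.trans h1 h2

lemma RAav.symm (hs : Symmetric Adj) (h : RAav Adj X a b) : RAav Adj X b a :=
  (@Relation.ReflTransGen.stdSymm _ _ ⟨fun _ _ hab => ⟨hs hab.1, hab.2.2, hab.2.1⟩⟩).symm _ _ h

lemma RIin.symm (hs : Symmetric Adj) (h : RIin Adj X a b) : RIin Adj X b a :=
  (@Relation.ReflTransGen.stdSymm _ _ ⟨fun _ _ hab => ⟨hs hab.1, hab.2.2, hab.2.1⟩⟩).symm _ _ h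

lemma RIin.trans (h1 : RIin Adj X a b) (h2 : RIin Adj X b c) : RIin Adj X a c :=
  Relation.ReflTransGen.trans h1 h2

lemma RAav_out (h : RAav Adj X a b) (ha : a ∉ X) : b ∉ X := by
  induction h with
  | refl => exact ha
  | tail _ h2 _ => exact h2.2.2

lemma RAav_change (h : RAav Adj X a b) (hc : ∀ c, RAav Adj X a c → c ∉ Y) :
    RAav Adj Y a b := by
  induction h with
  | refl => exact RAav.refl
  | tail h1 h2 ih => exact ih.tail ⟨h2.1, hc _ h1, hc _ (h1.tail h2)⟩

lemma RAav_to_RIin (h : RAav Adj X a b) (hc : ∀ c, RAav Adj X a c → c ∈ Y) :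
    RIin Adj Y a b := by
  induction h with
  | refl => exact Relation.ReflTransGen.refl
  | tail h1 h2 ih => exact ih.tail ⟨h2.1, hc _ h1, hc _ (h1.tail h2)⟩

lemma RIin_to_RAav (h : RIin Adj Y a b) (hd : ∀ c ∈ Y, c ∉ X) : RAav Adj X a b := by
  induction h with
  | refl => exact RAav.refl
  | tail _ h2 ih => exact ih.tail ⟨h2.1, hd _ h2.2.1, hd _ h2.2.2⟩

lemma RIin_mono (h : RIin Adj X a b) (hXY : X ⊆ Y) : RIin Adj Y a b :=
  Relation.ReflTransGen.mono (fun _ _ hab => ⟨hab.1, hXY hab.2.1, hXY hab.2.2⟩) _ _ h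

lemma RAav_adj_mono {Adj' : V → V → Prop} (hA : ∀ a b, Adj a b → Adj' a b)
    (h : RAav Adj X a b) : RAav Adj' X a b :=
  Relation.ReflTransGen.mono (fun _ _ hab => ⟨hA _ _ hab.1, hab.2⟩) _ _ h

lemma RAav_enter {u w : V} (h : Relation.ReflTransGen Adj u w) (hu : u ∉ X) (hw : w ∈ X) :
    ∃ x y, RAav Adj X u x ∧ x ∉ X ∧ y ∈ X ∧ Adj x y := by
  revert hu
  induction h using Relation.ReflTransGen.head_induction_on with
  | refl => exact fun hu => absurd hw hu
  | head h' hr ih =>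
    rename_i a' c'
    intro hu
    by_cases hc : c' ∈ X
    · exact ⟨a', c', RAav.refl, hu, hc, h'⟩
    · obtain ⟨x, y, h1, h2, h3, h4⟩ := ih hc
      exact ⟨x, y, Relation.ReflTransGen.head ⟨h', hu, hc⟩ h1, h2, h3, h4⟩

/-- The component of `u` in the complement of `X`. -/
def Dset (Adj : V → V → Prop) (X : Set V) (u : V) : Set V := {w | RAav Adj X u w}

lemma mem_Dset {u w : V} : w ∈ Dset Adj X u ↔ RAav Adj X u w := Iff.rfl

lemma Dset_eq (hs : Symmetric Adj) {u v : V} (h : RAav Adj X u v) :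
    Dset Adj X u = Dset Adj X v := by
  ext w
  exact ⟨fun hw => (RAav.symm hs h).trans hw, fun hw => h.trans hw⟩

end Generic

section CCsec

variable {Q : Type*} [Group Q] [Finite Q] {Adj : Q → Q → Prop} {X : Set Q}

lemma RAav_smul (hinv : ∀ (q a b : Q), Adj a b → Adj (q * a) (q * b)) (q : Q) {a b : Q}
    (h : RAav Adj X a b) : RAav Adj ((q * ·) '' X) (q * a) (q * b) := by
  induction h with
  | refl => exact RAav.refl
  | tail _ h2 ih =>
    refine ih.tail ⟨hinv q _ _ h2.1, ?_, ?_⟩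
    · rintro ⟨x, hx, he⟩; exact h2.2.1 (mul_left_cancel he ▸ hx)
    · rintro ⟨x, hx, he⟩; exact h2.2.2 (mul_left_cancel he ▸ hx)

lemma RIin_smul (hinv : ∀ (q a b : Q), Adj a b → Adj (q * a) (q * b)) (q : Q) {a b : Q}
    (h : RIin Adj X a b) : RIin Adj ((q * ·) '' X) (q * a) (q * b) := by
  induction h with
  | refl => exact Relation.ReflTransGen.refl
  | tail _ h2 ih =>
    exact ih.tail ⟨hinv q _ _ h2.1, ⟨_, h2.2.1, rfl⟩, ⟨_, h2.2.2, rfl⟩⟩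

/-- The key counting lemma: in a finite group with a left-invariant graph, if `P` is a
connected set containing `1` such that every vertex outside `P` can reach, avoiding `P`,
some `q` whose translate `q • P` is disjoint from `P`, then the complement of `P` is
connected. -/
lemma CC (hs : Symmetric Adj) (hinv : ∀ (q a b : Q), Adj a b → Adj (q * a) (q * b))
    (hconn : ∀ v : Q, Relation.ReflTransGen Adj v 1)
    (P : Set Q) (h1P : (1 : Q) ∈ P) (hPconn : ∀ p ∈ P, RIin Adj P 1 p)
    (hPc : Pᶜ.Nonempty)
    (hdeep : ∀ u ∉ P, ∃ q, RAav Adj P u q ∧ ∀ p ∈ P, q * p ∉ P) :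
    ∀ u v, u ∉ P → v ∉ P → RAav Adj P u v := by
  obtain ⟨u₀, hu₀, hmin⟩ := Set.exists_min_image Pᶜ (fun x => (Dset Adj P x).ncard)
    (Set.toFinite _) hPc
  have hdisjP : ∀ z ∉ P, ∀ c ∈ P, c ∉ Dset Adj P z := by
    intro z hz c hc hmem
    exact (RAav_out hmem hz) hc
  have main : ∀ w, w ∉ P → RAav Adj P u₀ w := by
    intro w hw
    by_contra hvw
    obtain ⟨q, hq, hqP⟩ := hdeep u₀ hu₀
    have hqnotP : q ∉ P := RAav_out hq hu₀
    set QP : Set Q := (q * ·) '' P with hQPdef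
    have hQPdisj : ∀ c ∈ QP, c ∉ P := by rintro c ⟨p, hp, rfl⟩; exact hqP p hp
    have hdisj2 : ∀ c ∈ P, c ∉ QP := fun c hc hcQ => hQPdisj c hcQ hc
    have h1QP : (1 : Q) ∉ QP := hdisj2 1 h1P
    -- q • P is inside the component of u₀
    have hQPreach : ∀ y ∈ QP, RAav Adj P q y := by
      rintro y ⟨p, hp, rfl⟩
      have h2 : RIin Adj QP (q * 1) (q * p) := RIin_smul hinv q (hPconn p hp)
      have h3 : RAav Adj P (q * 1) (q * p) := RIin_to_RAav h2 hQPdisj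
      simpa using h3
    have hQPsub : QP ⊆ Dset Adj P u₀ := fun y hy => hq.trans (hQPreach y hy)
    set Aset : Set Q := {w | RAav Adj QP 1 w} with hAdef
    have hPsubA : P ⊆ Aset := fun p hp => RIin_to_RAav (hPconn p hp) hdisj2
    -- Aset is the q-translate of the component of q⁻¹
    have himgP : ((q⁻¹ * ·) '' QP) = P := by
      rw [hQPdef, Set.image_image]
      simp
    have himgQP : ((q * ·) '' P) = QP := rfl
    have hAeq : Aset = (q * ·) '' (Dset Adj P q⁻¹) := by
      ext w
      constructor
      · intro hw
        have h2 := RAav_smul hinv q⁻¹ (hw : RAav Adj QP 1 w)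
        rw [himgP] at h2
        refine ⟨q⁻¹ * w, ?_, by simp⟩
        exact (by simpa using h2 : RAav Adj P q⁻¹ (q⁻¹ * w))
      · rintro ⟨x, hx, rfl⟩
        have h2 := RAav_smul hinv q (hx : RAav Adj P q⁻¹ x)
        rw [himgQP] at h2
        exact (by simpa using h2 : RAav Adj QP 1 (q * x))
    have hqinv : q⁻¹ ∉ P := by
      intro h
      exact h1QP ⟨q⁻¹, h, by simp⟩
    -- the alpha claim
    have alpha : ∀ z, z ∉ P → ¬ RAav Adj P u₀ z → Dset Adj P z ⊆ Aset := by
      intro z hz hnr y hy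
      have hdisjDz : ∀ c, RAav Adj P z c → c ∉ QP := by
        intro c hc hcQ
        exact hnr ((hQPsub hcQ).trans (RAav.symm hs hc))
      obtain ⟨x, p₁, hzx, hxP, hp₁, hadj⟩ := RAav_enter (hconn z) hz h1P
      have hx' : RAav Adj QP z x := RAav_change hzx hdisjDz
      have hxy : RAav Adj QP p₁ x :=
        Relation.ReflTransGen.single ⟨hs hadj, hdisj2 p₁ hp₁, hdisjDz x hzx⟩
      have hxw : RAav Adj QP x y := by
        have hPxy : RAav Adj P x y := (RAav.symm hs hzx).trans hy
        exact RAav_change hPxy (fun c hc => hdisjDz c ((hzx).trans hc))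
      exact (hPsubA hp₁).trans (hxy.trans hxw)
    by_cases hcase : RAav Adj P u₀ q⁻¹
    · have hDq : Dset Adj P q⁻¹ = Dset Adj P u₀ := (Dset_eq hs hcase).symm
      have hcard : Aset.ncard = (Dset Adj P u₀).ncard := by
        rw [hAeq, hDq, Set.ncard_image_of_injective _ (mul_right_injective q)]
      have hDw : Dset Adj P w ⊆ Aset := alpha w hw hvw
      have hdisjPD : Disjoint P (Dset Adj P w) := by
        rw [Set.disjoint_left]
        exact fun p hp hpD => hdisjP w hw p hp hpD
      have hsub : P ∪ Dset Adj P w ⊆ Aset := Set.union_subset hPsubA hDw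
      have hle : P.ncard + (Dset Adj P w).ncard ≤ Aset.ncard := by
        rw [← Set.ncard_union_eq hdisjPD (Set.toFinite _) (Set.toFinite _)]
        exact Set.ncard_le_ncard hsub (Set.toFinite _)
      have hmin' : (Dset Adj P u₀).ncard ≤ (Dset Adj P w).ncard := hmin w hw
      have hP1 : 0 < P.ncard := (Set.ncard_pos (Set.toFinite _)).mpr ⟨1, h1P⟩
      omega
    · have hsub : Dset Adj P q⁻¹ ⊆ Aset := alpha q⁻¹ hqinv hcase
      have hcard : Aset.ncard = (Dset Adj P q⁻¹).ncard := by
        rw [hAeq, Set.ncard_image_of_injective _ (mul_right_injective q)]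
      have heq : Dset Adj P q⁻¹ = Aset :=
        Set.eq_of_subset_of_ncard_le hsub (le_of_eq hcard) (Set.toFinite _)
      have h1D : (1 : Q) ∈ Dset Adj P q⁻¹ := heq ▸ hPsubA h1P
      exact hdisjP q⁻¹ hqinv 1 h1P h1D
  intro u v hu hv
  exact (RAav.symm hs (main u hu)).trans (main v hv)

end CCsec


section Gside
variable {G : Type*} [Group G] [DecidableEq G]

/-- Word balls for the generating set `S`. -/
def Wball (S : Finset G) : ℕ → Finset G
  | 0 => {1}
  | (k+1) => Wball S k ∪ Wball S k * S

variable {S : Finset G}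

lemma one_mem_Wball (k : ℕ) : (1 : G) ∈ Wball S k := by
  induction k with
  | zero => simp [Wball]
  | succ k ih => exact Finset.mem_union_left _ ih

lemma Wball_subset_succ (k : ℕ) : Wball S k ⊆ Wball S (k+1) :=
  Finset.subset_union_left

lemma Wball_mono {k l : ℕ} (h : k ≤ l) : Wball S k ⊆ Wball S l := by
  induction l with
  | zero => simpa [Nat.le_zero.mp h]
  | succ l ih =>
    rcases Nat.lt_or_ge k (l+1) with h' | h'
    · exact (ih (Nat.lt_succ_iff.mp h')).trans (Wball_subset_succ l)
    · have : k = l + 1 := le_antisymm h h'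
      subst this; exact subset_rfl

lemma mul_mem_Wball {g s : G} {k : ℕ} (hg : g ∈ Wball S k) (hs : s ∈ S) :
    g * s ∈ Wball S (k+1) :=
  Finset.mem_union_right _ (Finset.mul_mem_mul hg hs)

lemma Wball_mul {a b : G} {k l : ℕ} (ha : a ∈ Wball S k) (hb : b ∈ Wball S l) :
    a * b ∈ Wball S (k + l) := by
  induction l generalizing b with
  | zero =>
    have : b = 1 := by simpa [Wball] using hb
    subst this; simpa using ha
  | succ l ih =>
    rcases Finset.mem_union.mp hb with h | h
    · exact Wball_mono (by omega) (ih h)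
    · obtain ⟨y, hy, z, hz, rfl⟩ := Finset.mem_mul.mp h
      have h2 := mul_mem_Wball (ih hy) hz
      rw [mul_assoc] at h2
      exact h2

lemma mem_Wball_one {s : G} (hs : s ∈ S) : s ∈ Wball S 1 := by
  have : (1 : G) * s ∈ Wball S 1 := mul_mem_Wball (one_mem_Wball 0) hs
  simpa using this

lemma Wball_inv (hSsymm : ∀ s ∈ S, s⁻¹ ∈ S) {g : G} {k : ℕ} (hg : g ∈ Wball S k) :
    g⁻¹ ∈ Wball S k := by
  induction k generalizing g with
  | zero =>
    have : g = 1 := by simpa [Wball] using hg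
    subst this; simp [Wball]
  | succ k ih =>
    rcases Finset.mem_union.mp hg with h | h
    · exact Wball_subset_succ k (ih h)
    · obtain ⟨y, hy, z, hz, rfl⟩ := Finset.mem_mul.mp h
      have h1 : z⁻¹ ∈ Wball S 1 := mem_Wball_one (hSsymm z hz)
      have := Wball_mul h1 (ih hy)
      rw [mul_inv_rev]
      simpa [Nat.add_comm] using this

lemma Wball_exists (hSsymm : ∀ s ∈ S, s⁻¹ ∈ S) (hSgen : Subgroup.closure (S : Set G) = ⊤)
    (g : G) : ∃ k, g ∈ Wball S k := by
  have hg : g ∈ Subgroup.closure (S : Set G) := by rw [hSgen]; exact Subgroup.mem_top g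
  induction hg using Subgroup.closure_induction with
  | mem x hx => exact ⟨1, mem_Wball_one hx⟩
  | one => exact ⟨0, one_mem_Wball 0⟩
  | mul x y _ _ hx hy =>
    obtain ⟨k, hk⟩ := hx; obtain ⟨l, hl⟩ := hy
    exact ⟨k + l, Wball_mul hk hl⟩
  | inv x _ hx =>
    obtain ⟨k, hk⟩ := hx
    exact ⟨k, Wball_inv hSsymm hk⟩

lemma Finset_Wball_bound (hSsymm : ∀ s ∈ S, s⁻¹ ∈ S)
    (hSgen : Subgroup.closure (S : Set G) = ⊤) (F : Finset G) :
    ∃ m, ∀ g ∈ F, g ∈ Wball S m := by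
  choose f hf using Wball_exists hSsymm hSgen (S := S)
  exact ⟨F.sup f, fun g hg => Wball_mono (Finset.le_sup hg) (hf g)⟩

lemma Wball_strict [Infinite G] (hSsymm : ∀ s ∈ S, s⁻¹ ∈ S)
    (hSgen : Subgroup.closure (S : Set G) = ⊤) (m : ℕ) :
    ∃ g, g ∈ Wball S (m+1) ∧ g ∉ Wball S m := by
  by_contra h
  push_neg at h
  have heq : Wball S (m+1) = Wball S m :=
    Finset.Subset.antisymm (fun g hg => h g hg) (Wball_subset_succ m)
  have hall : ∀ l, Wball S (m + l) ⊆ Wball S m := by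
    intro l
    induction l with
    | zero => exact subset_rfl
    | succ l ih =>
      intro g hg
      rcases Finset.mem_union.mp hg with h' | h'
      · exact ih h'
      · obtain ⟨y, hy, z, hz, rfl⟩ := Finset.mem_mul.mp h'
        have : y * z ∈ Wball S (m+1) := mul_mem_Wball (ih hy) hz
        exact heq ▸ this
  have : ∀ g : G, g ∈ Wball S m := by
    intro g
    obtain ⟨k, hk⟩ := Wball_exists hSsymm hSgen g
    exact hall k (Wball_mono (by omega : k ≤ m + k) hk)
  have hfin : (Set.univ : Set G).Finite :=
    Set.Finite.subset (Wball S m).finite_toSet (fun g _ => this g)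
  exact Set.infinite_univ hfin

/-- adjacency in the Cayley graph of `G` -/
def adjS (S : Finset G) (g h : G) : Prop := g⁻¹ * h ∈ S

lemma adjS_symm (hSsymm : ∀ s ∈ S, s⁻¹ ∈ S) : Symmetric (adjS S) := by
  intro a b hab
  have := hSsymm _ hab
  simpa [adjS, mul_inv_rev] using this

lemma adjS_mul_left {q a b : G} (h : adjS S a b) : adjS S (q * a) (q * b) := by
  simpa [adjS, mul_assoc] using h

lemma reach_one (hSsymm : ∀ s ∈ S, s⁻¹ ∈ S) (hSgen : Subgroup.closure (S : Set G) = ⊤)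
    (g : G) : Relation.ReflTransGen (adjS S) g 1 := by
  have hsym : Symmetric (Relation.ReflTransGen (adjS S)) :=
    fun _ _ h => (@Relation.ReflTransGen.stdSymm _ _ ⟨fun _ _ h' => adjS_symm hSsymm h'⟩).symm _ _ h
  suffices h : Relation.ReflTransGen (adjS S) 1 g from hsym h
  have hg : g ∈ Subgroup.closure (S : Set G) := by rw [hSgen]; exact Subgroup.mem_top g
  induction hg using Subgroup.closure_induction with
  | mem x hx => exact Relation.ReflTransGen.single (by simpa [adjS] using hx)
  | one => exact Relation.ReflTransGen.refl
  | mul x y _ _ hx hy =>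
    have h2 : Relation.ReflTransGen (adjS S) x (x * y) := by
      have := Relation.ReflTransGen.lift (f := (x * ·)) (r := adjS S) (p := adjS S)
        (fun a b hab => adjS_mul_left hab) _ _ hy
      simpa [Function.onFun] using this
    exact hx.trans h2
  | inv x _ hx =>
    have h2 : Relation.ReflTransGen (adjS S) x⁻¹ 1 := by
      have := Relation.ReflTransGen.lift (f := (x⁻¹ * ·)) (r := adjS S) (p := adjS S)
        (fun a b hab => adjS_mul_left hab) _ _ hx
      simpa [Function.onFun] using this
    exact hsym h2

end Gside


section Gside2
variable {G : Type*} [Group G] [DecidableEq G] {S : Finset G}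

lemma Wball_conn (hS1 : (1 : G) ∉ S) (k : ℕ) :
    ∀ g ∈ Wball S k, RIin (adjS S) (↑(Wball S k) : Set G) 1 g := by
  induction k with
  | zero =>
    intro g hg
    have : g = 1 := by simpa [Wball] using hg
    subst this; exact Relation.ReflTransGen.refl
  | succ k ih =>
    intro g hg
    rcases Finset.mem_union.mp hg with h | h
    · exact RIin_mono (ih g h) (by exact_mod_cast Wball_subset_succ k)
    · obtain ⟨y, hy, z, hz, rfl⟩ := Finset.mem_mul.mp h
      refine (RIin_mono (ih y hy) (by exact_mod_cast Wball_subset_succ k)).tail ?_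
      refine ⟨by simp [adjS, hz], ?_, ?_⟩
      · exact_mod_cast Wball_subset_succ k hy
      · exact_mod_cast hg

lemma RAav_bounded (hSsymm : ∀ s ∈ S, s⁻¹ ∈ S)
    (hSgen : Subgroup.closure (S : Set G) = ⊤) {X : Set G} {a b : G}
    (h : RAav (adjS S) X a b) :
    ∃ ρ, a ∈ Wball S ρ ∧ b ∈ Wball S ρ ∧
      RAav (fun u v => adjS S u v ∧ u ∈ Wball S ρ ∧ v ∈ Wball S ρ) X a b := by
  induction h with
  | refl =>
    obtain ⟨k, hk⟩ := Wball_exists hSsymm hSgen a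
    exact ⟨k, hk, hk, RAav.refl⟩
  | tail h1 h2 ih =>
    rename_i b' c'
    obtain ⟨ρ₁, ha, hb, w1⟩ := ih
    obtain ⟨k, hk⟩ := Wball_exists hSsymm hSgen c'
    refine ⟨max ρ₁ k, Wball_mono (le_max_left _ _) ha, Wball_mono (le_max_right _ _) hk, ?_⟩
    have w2 : RAav (fun u v => adjS S u v ∧ u ∈ Wball S (max ρ₁ k) ∧ v ∈ Wball S (max ρ₁ k)) X a b' :=
      RAav_adj_mono (fun u v huv =>
      ⟨huv.1, Wball_mono (le_max_left ρ₁ k) huv.2.1, Wball_mono (le_max_left ρ₁ k) huv.2.2⟩) w1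
    exact w2.tail ⟨⟨h2.1, Wball_mono (le_max_left ρ₁ k) hb, Wball_mono (le_max_right ρ₁ k) hk⟩,
      h2.2.1, h2.2.2⟩

end Gside2

section Reach
variable {V : Type*} {𝒢 : SimpleGraph V} {X : Set V}

lemma reach_of_RAav {a b : V} (h : RAav 𝒢.Adj X a b) :
    ∀ (ha : a ∉ X) (hb : b ∉ X), (𝒢.induce Xᶜ).Reachable ⟨a, ha⟩ ⟨b, hb⟩ := by
  induction h with
  | refl => intro ha hb; rfl
  | tail h1 h2 ih =>
    intro ha hb
    have hmid := h2.2.1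
    refine (ih ha hmid).trans (SimpleGraph.Adj.reachable ?_)
    exact SimpleGraph.comap_adj.mpr h2.1

end Reach

/-- The Cayley graph of `Γ/N` with respect to the image of a symmetric generating set
`S ⊆ Γ \ {e}`: distinct cosets `u, v` are adjacent iff `u⁻¹v` lies in the image of `S`. -/
def cayleyQuot {G : Type*} [Group G] (N : Subgroup G) (S : Finset G) :
    SimpleGraph (G ⧸ N) :=
  SimpleGraph.fromRel (fun u v =>
    ∃ a : G, ∃ s ∈ S, (QuotientGroup.mk a : G ⧸ N) = u ∧
      (QuotientGroup.mk (a * s) : G ⧸ N) = v)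

lemma cayleyQuot_adj {G : Type*} [Group G] (Nsub : Subgroup G) [Nsub.Normal] (S : Finset G)
    (hSsymm : ∀ s ∈ S, s⁻¹ ∈ S) (u v : G ⧸ Nsub) :
    (cayleyQuot Nsub S).Adj u v ↔ u ≠ v ∧ ∃ s ∈ S, u * QuotientGroup.mk s = v := by
  unfold cayleyQuot
  rw [SimpleGraph.fromRel_adj]
  constructor
  · rintro ⟨hne, h | h⟩
    · obtain ⟨a, s, hs, ha, hv⟩ := h
      exact ⟨hne, s, hs, by rw [← ha, ← QuotientGroup.mk_mul, hv]⟩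
    · obtain ⟨a, s, hs, ha, hu⟩ := h
      refine ⟨hne, s⁻¹, hSsymm s hs, ?_⟩
      rw [← ha, ← hu, ← QuotientGroup.mk_mul]
      congr 1
      group
  · rintro ⟨hne, s, hs, hv⟩
    obtain ⟨a, rfl⟩ := QuotientGroup.mk_surjective u
    exact ⟨hne, Or.inl ⟨a, s, hs, rfl, by rw [QuotientGroup.mk_mul]; exact hv⟩⟩

/-- For any finite `A ⊆ Γ` there is a finite `B ⊇ A` such that for all large `n`, the
complement of the image of `B` in `Γ/Γ_n` is nonempty and induces a connected subgraph
of the Cayley graph `C(Γ/Γ_n, π_n(S))`. -/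
theorem stmt11 {G : Type*} [Group G] [Infinite G]
    (S : Finset G) (hS1 : (1 : G) ∉ S) (hSsymm : ∀ s ∈ S, s⁻¹ ∈ S)
    (hSgen : Subgroup.closure (S : Set G) = ⊤)
    (N : ℕ → Subgroup G) (hnorm : ∀ n, (N n).Normal) (hfin : ∀ n, (N n).FiniteIndex)
    (hconv : (⋂ n : ℕ, ⋃ i : ℕ, ⋃ (_ : n ≤ i), ((N i : Set G))) = {1})
    (A : Finset G) :
    ∃ B : Finset G, A ⊆ B ∧ ∃ n₀ : ℕ, ∀ n ≥ n₀,
      ((QuotientGroup.mk '' (B : Set G))ᶜ : Set (G ⧸ N n)).Nonempty ∧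
      ((cayleyQuot (N n) S).induce
        ((QuotientGroup.mk '' (B : Set G))ᶜ : Set (G ⧸ N n))).Connected := by
  classical
  obtain ⟨R, hR⟩ := Finset_Wball_bound hSsymm hSgen A
  have hsym : Symmetric (adjS S) := adjS_symm hSsymm
  have hconnG : ∀ g : G, Relation.ReflTransGen (adjS S) g 1 := reach_one hSsymm hSgen
  set WR : Finset G := Wball S R with hWRdef
  set J : Set G := {g | g ∉ (WR : Set G) ∧ (Dset (adjS S) (↑WR) g).Finite} with hJdef
  have h1WR : (1 : G) ∈ (WR : Set G) := by exact_mod_cast one_mem_Wball R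
  -- J is finite
  have key : ∀ g ∈ J, ∃ x, x ∈ WR * S ∧ x ∉ (WR : Set G) ∧ (Dset (adjS S) (↑WR) x).Finite
      ∧ g ∈ Dset (adjS S) (↑WR) x := by
    intro g hg
    obtain ⟨x, y, hgx, hx, hy, hxy⟩ := RAav_enter (hconnG g) hg.1 h1WR
    refine ⟨x, ?_, hx, ?_, RAav.symm hsym hgx⟩
    · have hs' : (x⁻¹ * y)⁻¹ ∈ S := hSsymm _ hxy
      have hyy : y ∈ WR := by exact_mod_cast hy
      have heq : y * (x⁻¹ * y)⁻¹ = x := by group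
      exact heq ▸ Finset.mul_mem_mul hyy hs'
    · rw [← Dset_eq hsym hgx]; exact hg.2
  have hE : {x : G | x ∈ WR * S ∧ x ∉ (WR : Set G) ∧ (Dset (adjS S) (↑WR) x).Finite}.Finite :=
    Set.Finite.subset (WR * S).finite_toSet (fun x hx => hx.1)
  have hJfin : J.Finite := by
    refine Set.Finite.subset (Set.Finite.biUnion hE (fun x hx => hx.2.2)) ?_
    intro g hg
    obtain ⟨x, h1, h2, h3, h4⟩ := key g hg
    exact Set.mem_biUnion ⟨h1, h2, h3⟩ h4
  set Bs : Set G := (↑WR : Set G) ∪ J with hBsdef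
  have hBsfin : Bs.Finite := (WR.finite_toSet).union hJfin
  have h1Bs : (1 : G) ∈ Bs := Or.inl h1WR
  have hWRsubBs : (↑WR : Set G) ⊆ Bs := Set.subset_union_left
  -- B is connected
  have hBconn : ∀ b ∈ Bs, RIin (adjS S) Bs 1 b := by
    intro b hb
    rcases hb with hb | hb
    · exact RIin_mono (Wball_conn hS1 R b (by exact_mod_cast hb)) hWRsubBs
    · obtain ⟨x, y, hbx, hx, hy, hxy⟩ := RAav_enter (hconnG b) hb.1 h1WR
      have hcsub : ∀ c, RAav (adjS S) (↑WR) b c → c ∈ Bs := by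
        intro c hc
        exact Or.inr ⟨RAav_out hc hb.1, (Dset_eq hsym hc) ▸ hb.2⟩
      have h1 : RIin (adjS S) Bs b x := RAav_to_RIin hbx hcsub
      have h2 : RIin (adjS S) Bs x y :=
        Relation.ReflTransGen.single ⟨hxy, hcsub x hbx, hWRsubBs hy⟩
      have h3 : RIin (adjS S) Bs 1 y :=
        RIin_mono (Wball_conn hS1 R y (by exact_mod_cast hy)) hWRsubBs
      exact (h3.trans (h2.symm hsym)).trans (h1.symm hsym)
  -- bound B by a ball
  obtain ⟨M, hM⟩ := Finset_Wball_bound hSsymm hSgen hBsfin.toFinset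
  have hMBs : ∀ g ∈ Bs, g ∈ Wball S M := fun g hg => hM g (hBsfin.mem_toFinset.mpr hg)
  set L0 : ℕ := 2*M+1 with hL0def
  set Zf : Finset G := (Wball S L0).filter (fun z => z ∉ Bs) with hZfdef
  -- from each boundary-ish point, a far walk avoiding Bs
  have hfar : ∀ z ∈ Zf, ∃ ρ' w, (RAav (fun u v => adjS S u v ∧ u ∈ Wball S ρ' ∧ v ∈ Wball S ρ') Bs z w)
      ∧ w ∉ Wball S L0 ∧ w ∈ Wball S ρ' := by
    intro z hz
    obtain ⟨hzW, hzB⟩ := Finset.mem_filter.mp hz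
    have hzWR : z ∉ (WR : Set G) := fun h => hzB (hWRsubBs h)
    have hzJ : z ∉ J := fun h => hzB (Or.inr h)
    have hzInf : (Dset (adjS S) (↑WR) z).Infinite := by
      by_contra h
      rw [Set.not_infinite] at h
      exact hzJ ⟨hzWR, h⟩
    have hDsub : Dset (adjS S) (↑WR) z ⊆ Dset (adjS S) Bs z := by
      intro h hh
      refine RAav_change hh ?_
      intro c hc hcBs
      rcases hcBs with hcW | hcJ
      · exact (RAav_out hc hzWR) hcW
      · exact ((Dset_eq hsym hc) ▸ hzInf) hcJ.2
    have hinf2 : (Dset (adjS S) Bs z).Infinite := hzInf.mono hDsub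
    obtain ⟨w, hwD, hwL⟩ := hinf2.exists_notMem_finset (Wball S L0)
    obtain ⟨ρ', _, hwρ, hwalk⟩ := RAav_bounded hSsymm hSgen hwD
    exact ⟨ρ', w, hwalk, hwL, hwρ⟩
  choose! ρf wf hwalk hwnot hwρ using hfar
  set ρ : ℕ := max (Zf.sup ρf) (L0+1) with hρdef
  have hρsup : ∀ z ∈ Zf, ρf z ≤ ρ := fun z hz => le_trans (Finset.le_sup hz) (le_max_left _ _)
  have hwalkρ : ∀ z ∈ Zf,
      RAav (fun u v => adjS S u v ∧ u ∈ Wball S ρ ∧ v ∈ Wball S ρ) Bs z (wf z) := by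
    intro z hz
    exact RAav_adj_mono (fun u v huv => ⟨huv.1, Wball_mono (hρsup z hz) huv.2.1,
      Wball_mono (hρsup z hz) huv.2.2⟩) (hwalk z hz)
  have hwρ' : ∀ z ∈ Zf, wf z ∈ Wball S ρ := fun z hz => Wball_mono (hρsup z hz) (hwρ z hz)
  set K : ℕ := ρ + 2*M + 2 with hKdef
  have hMK : M ≤ K := by omega
  have hρK : ρ ≤ K := by omega
  have hρ2K : ρ + M ≤ 2*K := by omega
  -- choose n₀
  have hEv : ∀ g : G, g ≠ 1 → ∃ m, ∀ i, m ≤ i → g ∉ N i := by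
    intro g hg
    by_contra h
    push_neg at h
    have hgmem : g ∈ ⋂ n : ℕ, ⋃ i : ℕ, ⋃ (_ : n ≤ i), ((N i : Set G)) := by
      refine Set.mem_iInter.mpr ?_
      intro m
      obtain ⟨i, hmi, hgi⟩ := h m
      exact Set.mem_iUnion.mpr ⟨i, Set.mem_iUnion.mpr ⟨hmi, hgi⟩⟩
    rw [hconv] at hgmem
    exact hg hgmem
  have hEv' : ∀ g : G, ∃ m, g ≠ 1 → ∀ i, m ≤ i → g ∉ N i := by
    intro g
    by_cases hg : g = 1
    · exact ⟨0, fun h => absurd hg h⟩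
    · obtain ⟨m, hm⟩ := hEv g hg; exact ⟨m, fun _ => hm⟩
  choose m0 hm0 using hEv'
  refine ⟨hBsfin.toFinset, ?_, (Wball S (2*K)).sup m0, ?_⟩
  · intro a ha
    exact hBsfin.mem_toFinset.mpr (Or.inl (by exact_mod_cast hR a ha))
  intro n hn
  have hNn : ∀ g ∈ Wball S (2*K), g ∈ N n → g = 1 := by
    intro g hgW hgN
    by_contra hg1
    exact hm0 g hg1 n (le_trans (Finset.le_sup hgW) hn) hgN
  haveI := hnorm n
  haveI := hfin n
  rw [Set.Finite.coe_toFinset]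
  set P : Set (G ⧸ N n) := QuotientGroup.mk '' Bs with hPdef
  -- injectivity on the K-ball
  have hinj : ∀ a b : G, a ∈ Wball S K → b ∈ Wball S K →
      (QuotientGroup.mk a : G ⧸ N n) = QuotientGroup.mk b → a = b := by
    intro a b ha hb hab
    have h1 : a⁻¹ * b ∈ N n := QuotientGroup.eq.mp hab
    have h2 : a⁻¹ * b ∈ Wball S (K + K) := Wball_mul (Wball_inv hSsymm ha) hb
    have h3 : a⁻¹ * b = 1 := hNn _ (by rw [two_mul]; exact h2) h1
    exact inv_mul_eq_one.mp h3
  have hnotP : ∀ (ρ' : ℕ) (g : G), ρ' + M ≤ 2*K → g ∈ Wball S ρ' → g ∉ Bs →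
      (QuotientGroup.mk g : G ⧸ N n) ∉ P := by
    rintro ρ' g hle hgW hgB ⟨b, hbBs, hbe⟩
    have h1 : b⁻¹ * g ∈ N n := QuotientGroup.eq.mp hbe
    have h2 : b⁻¹ * g ∈ Wball S (M + ρ') := Wball_mul (Wball_inv hSsymm (hMBs b hbBs)) hgW
    have h3 : b⁻¹ * g = 1 := hNn _ (Wball_mono (by omega) h2) h1
    exact hgB (inv_mul_eq_one.mp h3 ▸ hbBs)
  set 𝒢 := cayleyQuot (N n) S with h𝒢def
  have hAdjQ : ∀ u v, 𝒢.Adj u v ↔ u ≠ v ∧ ∃ s ∈ S, u * QuotientGroup.mk s = v :=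
    cayleyQuot_adj (N n) S hSsymm
  have hsymQ : Symmetric 𝒢.Adj := fun a b h => h.symm
  have hinvQ : ∀ (q a b : G ⧸ N n), 𝒢.Adj a b → 𝒢.Adj (q*a) (q*b) := by
    intro q a b hab
    rw [hAdjQ] at hab ⊢
    obtain ⟨hne, s, hs, hv⟩ := hab
    exact ⟨fun h => hne (mul_left_cancel h), s, hs, by rw [mul_assoc, hv]⟩
  -- connectivity of the quotient graph
  have hmapQ : ∀ a b : G, Relation.ReflTransGen (adjS S) a b →
      Relation.ReflTransGen 𝒢.Adj (QuotientGroup.mk a) (QuotientGroup.mk b) := by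
    intro a b h
    induction h with
    | refl => exact Relation.ReflTransGen.refl
    | tail h1 h2 ih =>
      rename_i b' c'
      by_cases he : (QuotientGroup.mk b' : G ⧸ N n) = QuotientGroup.mk c'
      · rw [← he]; exact ih
      · refine ih.tail ?_
        rw [hAdjQ]
        refine ⟨he, b'⁻¹ * c', h2, ?_⟩
        rw [← QuotientGroup.mk_mul]
        congr 1
        group
  have hQconn : ∀ v : G ⧸ N n, Relation.ReflTransGen 𝒢.Adj v 1 := by
    intro v
    obtain ⟨g, rfl⟩ := QuotientGroup.mk_surjective v
    have := hmapQ g 1 (hconnG g)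
    simpa using this
  have h1P : (1 : G ⧸ N n) ∈ P := ⟨1, h1Bs, by simp⟩
  -- P is connected
  have hPconnQ : ∀ p ∈ P, RIin 𝒢.Adj P 1 p := by
    rintro p ⟨b, hb, rfl⟩
    have hmap : ∀ a b : G, RIin (adjS S) Bs a b →
        RIin 𝒢.Adj P (QuotientGroup.mk a) (QuotientGroup.mk b) := by
      intro a b h
      induction h with
      | refl => exact Relation.ReflTransGen.refl
      | tail h1 h2 ih =>
        rename_i b' c'
        refine ih.tail ⟨?_, ⟨b', h2.2.1, rfl⟩, ⟨c', h2.2.2, rfl⟩⟩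
        rw [hAdjQ]
        have hne : b' ≠ c' := by
          intro he
          have := h2.1
          rw [he] at this
          simp [adjS] at this
          exact hS1 this
        refine ⟨fun he => hne (hinj _ _ (Wball_mono hMK (hMBs _ h2.2.1))
          (Wball_mono hMK (hMBs _ h2.2.2)) he), b'⁻¹ * c', h2.1, ?_⟩
        rw [← QuotientGroup.mk_mul]
        congr 1
        group
    have := hmap 1 b (hBconn b hb)
    simpa using this
  -- complement of P is nonempty
  obtain ⟨g1, hg1W, hg1n⟩ := Wball_strict hSsymm hSgen M
  have hg1B : g1 ∉ Bs := fun h => hg1n (hMBs g1 h)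
  have hg1P : (QuotientGroup.mk g1 : G ⧸ N n) ∉ P := hnotP (M+1) g1 (by omega) hg1W hg1B
  have hPcne : Pᶜ.Nonempty := ⟨QuotientGroup.mk g1, hg1P⟩
  -- deepness
  have hdeepQ : ∀ u ∉ P, ∃ q, RAav 𝒢.Adj P u q ∧ ∀ p ∈ P, q * p ∉ P := by
    intro u hu
    by_cases hufar : ∀ p ∈ P, u * p ∉ P
    · exact ⟨u, RAav.refl, hufar⟩
    · push_neg at hufar
      obtain ⟨p, hp, hup⟩ := hufar
      obtain ⟨b, hb, rfl⟩ := hp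
      obtain ⟨b', hb', hbe⟩ := hup
      have hu_eq : u = QuotientGroup.mk (b' * b⁻¹) := by
        rw [QuotientGroup.mk_mul, QuotientGroup.mk_inv]
        exact eq_mul_inv_iff_mul_eq.mpr hbe.symm
      set z := b' * b⁻¹ with hzdef
      have hzW : z ∈ Wball S L0 :=
        Wball_mono (by omega : M + M ≤ L0) (Wball_mul (hMBs b' hb') (Wball_inv hSsymm (hMBs b hb)))
      have hzB : z ∉ Bs := by
        intro h
        rw [hu_eq] at hu
        exact hu ⟨z, h, rfl⟩
      have hzZ : z ∈ Zf := Finset.mem_filter.mpr ⟨hzW, hzB⟩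
      have hproj : ∀ a b : G,
          RAav (fun u v => adjS S u v ∧ u ∈ Wball S ρ ∧ v ∈ Wball S ρ) Bs a b →
          RAav 𝒢.Adj P (QuotientGroup.mk a) (QuotientGroup.mk b) := by
        intro a b h
        induction h with
        | refl => exact RAav.refl
        | tail h1 h2 ih =>
          rename_i d' c'
          obtain ⟨⟨hadj, hbW, hcW⟩, hbB, hcB⟩ := h2
          refine ih.tail ⟨?_, hnotP ρ _ hρ2K hbW hbB, hnotP ρ _ hρ2K hcW hcB⟩
          rw [hAdjQ]
          have hne : d' ≠ c' := by
            intro he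
            rw [he] at hadj
            simp [adjS] at hadj
            exact hS1 hadj
          refine ⟨fun he => hne (hinj _ _ (Wball_mono hρK hbW) (Wball_mono hρK hcW) he),
            d'⁻¹ * c', hadj, ?_⟩
          rw [← QuotientGroup.mk_mul]
          congr 1
          group
      have hzw : RAav 𝒢.Adj P u (QuotientGroup.mk (wf z)) := by
        rw [hu_eq]
        exact hproj _ _ (hwalkρ z hzZ)
      refine ⟨QuotientGroup.mk (wf z), hzw, ?_⟩
      rintro p ⟨b2, hb2, rfl⟩ ⟨b3, hb3, hb3e⟩
      have h1 : (QuotientGroup.mk (wf z * b2) : G ⧸ N n) = QuotientGroup.mk b3 := by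
        rw [QuotientGroup.mk_mul]
        exact hb3e.symm
      have h2 : wf z * b2 = b3 := hinj _ _
        (Wball_mono (by omega : ρ + M ≤ K) (Wball_mul (hwρ' z hzZ) (hMBs _ hb2)))
        (Wball_mono hMK (hMBs _ hb3)) h1
      have hwf : wf z = b3 * b2⁻¹ := by rw [← h2]; group
      apply hwnot z hzZ
      rw [hwf]
      exact Wball_mono (by omega : M + M ≤ L0)
        (Wball_mul (hMBs _ hb3) (Wball_inv hSsymm (hMBs _ hb2)))
  -- apply the counting lemma
  have hCC := CC hsymQ hinvQ hQconn P h1P hPconnQ hPcne hdeepQ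
  refine ⟨hPcne, ?_⟩
  haveI : Nonempty ↥(Pᶜ) := hPcne.to_subtype
  refine ⟨?_⟩
  rintro ⟨x, hx⟩ ⟨y, hy⟩
  exact reach_of_RAav (hCC x y hx hy) hx hy
end

section
/- Let Γ be a countable group, f ∈ ℝΓ well-balanced and g ∈ ℝΓ. Then there exists C > 0 such that for every finite-index normal subgroup N of Γ and every h : Γ/N → ℝ, if π_N(g) = h·π_N(f) in ℝ(Γ/N), then max_{c ∈ Γ/N} h(c) − min_{c ∈ Γ/N} h(c) ≤ C. -/
open Filter Topology
open scoped Classical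
noncomputable section

def quotPushR {G : Type*} [Group G] (N : Subgroup G) (g : G → ℝ) : (G ⧸ N) → ℝ :=
  fun c => ∑ᶠ s : G, if (QuotientGroup.mk s : G ⧸ N) = c then g s else 0

private lemma reach_all {G : Type*} [Group G] (S : Set G) (hsym : ∀ s ∈ S, s⁻¹ ∈ S)
    (htop : Subgroup.closure S = ⊤) (Q : G → Prop)
    (hQ : ∀ a, Q a → ∀ s ∈ S, Q (a * s⁻¹)) (a₀ : G) (h0 : Q a₀) : ∀ b, Q b := by
  have key : ∀ x : G, ∀ a, Q a → Q (a * x) := by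
    intro x
    have hx : x ∈ Subgroup.closure S := by rw [htop]; exact Subgroup.mem_top x
    induction hx using Subgroup.closure_induction'' with
    | mem t ht =>
        intro a ha
        have : Q (a * (t⁻¹)⁻¹) := hQ a ha t⁻¹ (hsym t ht)
        simpa using this
    | inv_mem t ht => intro a ha; exact hQ a ha t ht
    | one => intro a ha; simpa using ha
    | mul x y hx hy ihx ihy =>
        intro a ha
        have := ihy (a * x) (ihx a ha)
        simpa [mul_assoc] using this
  intro b
  have := key (a₀⁻¹ * b) a₀ h0
  simpa using this

private lemma exists_word {G : Type*} [Group G] (S : Set G) (hsym : ∀ s ∈ S, s⁻¹ ∈ S)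
    (htop : Subgroup.closure S = ⊤) (z : G) :
    ∃ l : List G, (∀ t ∈ l, t ∈ S) ∧ l.prod = z := by
  have hz : z ∈ Subgroup.closure S := by rw [htop]; exact Subgroup.mem_top z
  induction hz using Subgroup.closure_induction'' with
  | mem t ht => exact ⟨[t], by simpa using ht, by simp⟩
  | inv_mem t ht => exact ⟨[t⁻¹], by simpa using hsym t ht, by simp⟩
  | one => exact ⟨[], by simp, by simp⟩
  | mul x y hx hy ihx ihy =>
      obtain ⟨l1, hl1, hp1⟩ := ihx
      obtain ⟨l2, hl2, hp2⟩ := ihy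
      refine ⟨l1 ++ l2, ?_, by simp [hp1, hp2]⟩
      intro t ht
      rcases List.mem_append.1 ht with h | h
      exacts [hl1 t h, hl2 t h]

set_option maxHeartbeats 2000000 in
/-- If `π_N(g) = h·π_N(f)` for some finite-index normal `N` and `h : Γ/N → ℝ`, then
`max h − min h ≤ C` for a constant `C` depending only on `f` and `g`.
(The convolution `h·π_N(f)` is written at a coset `aN` as `∑_{s∈Γ} h(as⁻¹N)·f_s`.) -/
theorem stmt12 {G : Type*} [Group G] [Countable G]
    (f : G → ℝ) (hf : WellBalancedR f)
    (g : G → ℝ) (hg : (Function.support g).Finite) :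
    ∃ C : ℝ, 0 < C ∧
      ∀ (N : Subgroup G), N.Normal → N.FiniteIndex →
        ∀ h : (G ⧸ N) → ℝ,
          (∀ a : G, quotPushR N g (QuotientGroup.mk a) =
            ∑ᶠ s : G, h (QuotientGroup.mk (a * s⁻¹)) * f s) →
          (⨆ c : G ⧸ N, h c) - (⨅ c : G ⧸ N, h c) ≤ C := by
  classical
  obtain ⟨hfin, hsum0, hnonpos, hsymm, htop⟩ := hf
  set F : Finset G := hfin.toFinset with hF
  set Gg : Finset G := hg.toFinset with hGgdef
  have hsymS : ∀ s ∈ Function.support f, s⁻¹ ∈ Function.support f := by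
    intro s hs
    simp only [Function.mem_support, hsymm s]
    exact hs
  set gL1 : ℝ := ∑ s ∈ Gg, |g s| with hgL1
  have gL1nn : 0 ≤ gL1 := Finset.sum_nonneg fun _ _ => abs_nonneg _
  by_cases hne : (F.erase 1).Nonempty
  case neg =>
    -- degenerate: G is trivial
    have hsubS : Function.support f ⊆ {1} := by
      intro s hs
      by_contra hs1
      exact hne ⟨s, Finset.mem_erase.2 ⟨by simpa using hs1, hfin.mem_toFinset.2 hs⟩⟩
    have hbot : (⊤ : Subgroup G) ≤ ⊥ := by
      rw [← htop]
      calc Subgroup.closure (Function.support f) ≤ Subgroup.closure {1} :=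
            Subgroup.closure_mono hsubS
        _ = ⊥ := by simp
    have hGsub : Subsingleton G := ⟨fun a b => by
      have ha : a ∈ (⊥ : Subgroup G) := hbot (Subgroup.mem_top a)
      have hb : b ∈ (⊥ : Subgroup G) := hbot (Subgroup.mem_top b)
      rw [Subgroup.mem_bot] at ha hb
      rw [ha, hb]⟩
    refine ⟨1, one_pos, ?_⟩
    intro N _ _ h _
    have hq : Subsingleton (G ⧸ N) := Quotient.instSubsingletonQuotient _
    haveI : Nonempty (G ⧸ N) := ⟨QuotientGroup.mk 1⟩
    have hconst : ∀ c : G ⧸ N, h c = h (QuotientGroup.mk 1) := fun c =>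
      congrArg h (Subsingleton.elim _ _)
    have hsup : (⨆ c : G ⧸ N, h c) = h (QuotientGroup.mk 1) := by
      apply le_antisymm
      · exact ciSup_le fun c => le_of_eq (hconst c)
      · exact le_ciSup (Set.Finite.bddAbove ((Set.finite_range h))) _
    have hinf : (⨅ c : G ⧸ N, h c) = h (QuotientGroup.mk 1) := by
      apply le_antisymm
      · exact ciInf_le (Set.Finite.bddBelow ((Set.finite_range h))) _
      · exact le_ciInf fun c => ge_of_eq (hconst c)
    rw [hsup, hinf]
    norm_num
  case pos =>
  set F' : Finset G := F.erase 1 with hF'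
  have hmemF' : ∀ s ∈ F', f s < 0 := by
    intro s hs
    rcases Finset.mem_erase.1 hs with ⟨hs1, hsF⟩
    have : f s ≠ 0 := by
      have := hfin.mem_toFinset.1 hsF
      exact this
    exact lt_of_le_of_ne (hnonpos s hs1) this
  set w : ℝ := F'.inf' hne (fun s => -f s) with hw
  have wpos : 0 < w := by
    rw [hw, Finset.lt_inf'_iff]
    intro s hs
    linarith [hmemF' s hs]
  -- words
  have hwords := fun z => exists_word (Function.support f) hsymS htop z
  choose wlist hw1 hw2 using hwords
  set L : ℕ := (Gg ×ˢ Gg).sup (fun p => (wlist (p.2⁻¹ * p.1)).length) with hL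
  set D : ℝ := 2 * (L : ℝ) ^ 2 * gL1 / w with hD
  have hDnn : 0 ≤ D := by
    apply div_nonneg _ (le_of_lt wpos)
    positivity
  refine ⟨D + 1, by linarith, ?_⟩
  intro N hNorm hFI h hrel
  haveI := hNorm
  haveI := hFI
  haveI : Finite (G ⧸ N) := N.finite_quotient_of_finiteIndex
  haveI : Fintype (G ⧸ N) := Fintype.ofFinite _
  haveI : Nonempty (G ⧸ N) := ⟨QuotientGroup.mk 1⟩
  set u : (G ⧸ N) → ℝ := quotPushR N g with hu
  have mkmul : ∀ a s : G,
      (QuotientGroup.mk (a * s⁻¹) : G ⧸ N) = QuotientGroup.mk a * (QuotientGroup.mk s)⁻¹ := by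
    intro a s; rfl
  -- finsum to Finset sums
  have key0 : ∀ a : G, u (QuotientGroup.mk a) = ∑ s ∈ F, h (QuotientGroup.mk (a * s⁻¹)) * f s := by
    intro a
    rw [hrel a]
    apply finsum_eq_sum_of_support_subset
    intro s hs
    have hfs : f s ≠ 0 := by
      intro h0
      apply hs
      simp [Function.mem_support, h0]
    simpa [hF, hfin.coe_toFinset] using hfs
  have sumf : ∑ s ∈ F, f s = 0 := by
    rw [← finsum_eq_sum_of_support_subset f (by simp [hF, hfin.coe_toFinset])]
    exact hsum0
  have key1 : ∀ c : G ⧸ N,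
      ∑ s ∈ F', (-f s) * (h c - h (c * (QuotientGroup.mk s)⁻¹)) = u c := by
    intro c
    obtain ⟨a, rfl⟩ := QuotientGroup.mk_surjective c
    have e1 : ∑ s ∈ F, (-f s) * (h (QuotientGroup.mk a) - h (QuotientGroup.mk a * (QuotientGroup.mk s)⁻¹))
        = u (QuotientGroup.mk a) := by
      have expand : ∀ s ∈ F, (-f s) * (h (QuotientGroup.mk a) - h (QuotientGroup.mk a * (QuotientGroup.mk s)⁻¹))
          = h (QuotientGroup.mk (a * s⁻¹)) * f s - h (QuotientGroup.mk a) * f s := by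
        intro s _
        rw [mkmul]
        ring
      rw [Finset.sum_congr rfl expand, Finset.sum_sub_distrib, ← Finset.mul_sum, sumf,
        mul_zero, sub_zero, ← key0 a]
    rw [← e1, hF']
    apply Finset.sum_erase
    simp
  have wei : ∀ s ∈ F', (0:ℝ) ≤ -f s := fun s hs => by linarith [hmemF' s hs]
  -- u as finite sum and L1 bound
  have ueq : ∀ c : G ⧸ N, u c = ∑ s ∈ Gg, (if (QuotientGroup.mk s : G ⧸ N) = c then g s else 0) := by
    intro c
    show quotPushR N g c = _
    simp only [quotPushR]
    apply finsum_eq_sum_of_support_subset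
    intro s hs
    have hgs : g s ≠ 0 := by
      intro h0
      apply hs
      simp [Function.mem_support, h0]
    simpa [hGgdef, hg.coe_toFinset] using hgs
  have uabs : ∑ c : G ⧸ N, |u c| ≤ gL1 := by
    calc ∑ c : G ⧸ N, |u c|
        ≤ ∑ c : G ⧸ N, ∑ s ∈ Gg, |if (QuotientGroup.mk s : G ⧸ N) = c then g s else 0| := by
          apply Finset.sum_le_sum
          intro c _
          rw [ueq c]
          exact Finset.abs_sum_le_sum_abs _ _
      _ = ∑ s ∈ Gg, ∑ c : G ⧸ N, |if (QuotientGroup.mk s : G ⧸ N) = c then g s else 0| :=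
          Finset.sum_comm
      _ = gL1 := by
          apply Finset.sum_congr rfl
          intro s _
          simp [apply_ite abs]
  -- reindexing
  have reindex : ∀ (t : G ⧸ N) (φ : (G ⧸ N) → ℝ), ∑ c : G ⧸ N, φ (c * t) = ∑ c : G ⧸ N, φ c := by
    intro t φ
    exact Fintype.sum_equiv (Equiv.mulRight t) _ _ (fun c => rfl)
  have usum0 : ∑ c : G ⧸ N, u c = 0 := by
    have e1 : ∑ c : G ⧸ N, u c
        = ∑ c : G ⧸ N, ∑ s ∈ F', (-f s) * (h c - h (c * (QuotientGroup.mk s)⁻¹)) :=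
      (Finset.sum_congr rfl fun c _ => (key1 c).symm)
    rw [e1, Finset.sum_comm]
    apply Finset.sum_eq_zero
    intro s _
    have : ∑ c : G ⧸ N, (-f s) * (h c - h (c * (QuotientGroup.mk s)⁻¹))
        = (-f s) * (∑ c : G ⧸ N, h c - ∑ c : G ⧸ N, h (c * (QuotientGroup.mk s)⁻¹)) := by
      rw [← Finset.sum_sub_distrib, Finset.mul_sum]
    rw [this, reindex, sub_self, mul_zero]
  -- energy
  set E : ℝ := ∑ c : G ⧸ N, ∑ s ∈ F', (-f s) * (h c - h (c * (QuotientGroup.mk s)⁻¹)) ^ 2 with hE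
  have Etermnn : ∀ (c : G ⧸ N), ∀ s ∈ F', 0 ≤ (-f s) * (h c - h (c * (QuotientGroup.mk s)⁻¹)) ^ 2 :=
    fun c s hs => mul_nonneg (wei s hs) (sq_nonneg _)
  have Enn : 0 ≤ E :=
    Finset.sum_nonneg fun c _ => Finset.sum_nonneg (Etermnn c)
  have Eeq : E = 2 * ∑ c : G ⧸ N, h c * u c := by
    have expand : ∀ (c : G ⧸ N), ∀ s ∈ F',
        (-f s) * (h c - h (c * (QuotientGroup.mk s)⁻¹)) ^ 2
          = 2 * (h c * ((-f s) * (h c - h (c * (QuotientGroup.mk s)⁻¹))))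
            - ((-f s) * (h c * h c) - (-f s) * (h (c * (QuotientGroup.mk s)⁻¹) * h (c * (QuotientGroup.mk s)⁻¹))) := by
      intro c s _
      ring
    calc E = ∑ c : G ⧸ N, ∑ s ∈ F',
          (2 * (h c * ((-f s) * (h c - h (c * (QuotientGroup.mk s)⁻¹))))
            - ((-f s) * (h c * h c) - (-f s) * (h (c * (QuotientGroup.mk s)⁻¹) * h (c * (QuotientGroup.mk s)⁻¹)))) := by
          rw [hE]
          exact Finset.sum_congr rfl fun c _ => Finset.sum_congr rfl (expand c)
      _ = (∑ c : G ⧸ N, ∑ s ∈ F', 2 * (h c * ((-f s) * (h c - h (c * (QuotientGroup.mk s)⁻¹)))))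
          - ∑ c : G ⧸ N, ∑ s ∈ F',
              ((-f s) * (h c * h c) - (-f s) * (h (c * (QuotientGroup.mk s)⁻¹) * h (c * (QuotientGroup.mk s)⁻¹))) := by
          rw [← Finset.sum_sub_distrib]
          exact Finset.sum_congr rfl fun c _ => Finset.sum_sub_distrib _ _
      _ = 2 * ∑ c : G ⧸ N, h c * u c := by
          have second : ∑ c : G ⧸ N, ∑ s ∈ F',
              ((-f s) * (h c * h c) - (-f s) * (h (c * (QuotientGroup.mk s)⁻¹) * h (c * (QuotientGroup.mk s)⁻¹))) = 0 := by
            rw [Finset.sum_comm]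
            apply Finset.sum_eq_zero
            intro s _
            rw [Finset.sum_sub_distrib]
            have r1 : ∑ c : G ⧸ N, (-f s) * (h (c * (QuotientGroup.mk s)⁻¹) * h (c * (QuotientGroup.mk s)⁻¹))
                = ∑ c : G ⧸ N, (-f s) * (h c * h c) := reindex _ (fun c => (-f s) * (h c * h c))
            rw [r1, sub_self]
          rw [second, sub_zero, Finset.mul_sum]
          apply Finset.sum_congr rfl
          intro c _
          rw [← Finset.mul_sum, ← Finset.mul_sum, key1 c]
  -- max and min
  obtain ⟨c₀, hc₀⟩ := Finite.exists_max h
  obtain ⟨c₁, hc₁⟩ := Finite.exists_min h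
  have hsup : (⨆ c : G ⧸ N, h c) = h c₀ :=
    le_antisymm (ciSup_le hc₀) (le_ciSup (Set.Finite.bddAbove (Set.finite_range h)) c₀)
  have hinf : (⨅ c : G ⧸ N, h c) = h c₁ :=
    le_antisymm (ciInf_le (Set.Finite.bddBelow (Set.finite_range h)) c₁) (le_ciInf hc₁)
  rw [hsup, hinf]
  have oscnn : 0 ≤ h c₀ - h c₁ := sub_nonneg.2 (hc₁ c₀)
  -- energy bound
  have Ebound : E ≤ 2 * ((h c₀ - h c₁) * gL1) := by
    have e1 : ∑ c : G ⧸ N, h c * u c = ∑ c : G ⧸ N, (h c - h c₁) * u c := by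
      have e0 : ∑ c : G ⧸ N, (h c - h c₁) * u c
          = ∑ c : G ⧸ N, h c * u c - h c₁ * ∑ c : G ⧸ N, u c := by
        rw [Finset.mul_sum, ← Finset.sum_sub_distrib]
        exact Finset.sum_congr rfl fun c _ => by ring
      rw [e0, usum0, mul_zero, sub_zero]
    have e2 : ∑ c : G ⧸ N, (h c - h c₁) * u c ≤ (h c₀ - h c₁) * gL1 := by
      calc ∑ c : G ⧸ N, (h c - h c₁) * u c ≤ ∑ c : G ⧸ N, (h c₀ - h c₁) * |u c| := by
            apply Finset.sum_le_sum
            intro c _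
            calc (h c - h c₁) * u c ≤ (h c - h c₁) * |u c| :=
                  mul_le_mul_of_nonneg_left (le_abs_self _) (sub_nonneg.2 (hc₁ c))
              _ ≤ (h c₀ - h c₁) * |u c| :=
                  mul_le_mul_of_nonneg_right (by linarith [hc₀ c]) (abs_nonneg _)
        _ = (h c₀ - h c₁) * ∑ c : G ⧸ N, |u c| := (Finset.mul_sum _ _ _).symm
        _ ≤ (h c₀ - h c₁) * gL1 := mul_le_mul_of_nonneg_left uabs oscnn
    rw [Eeq, e1]
    linarith [e2]
  -- single step bound
  set B : ℝ := Real.sqrt (E / w) with hB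
  have hBnn : 0 ≤ B := Real.sqrt_nonneg _
  have stepb : ∀ (a t : G), t ∈ Function.support f →
      |h (QuotientGroup.mk (a * t)) - h (QuotientGroup.mk a)| ≤ B := by
    intro a t ht
    by_cases h1 : t = 1
    · subst h1
      simp only [mul_one, sub_self, abs_zero]
      exact hBnn
    · have htF : t⁻¹ ∈ F' := by
        rw [hF']
        exact Finset.mem_erase.2 ⟨inv_ne_one.2 h1, hfin.mem_toFinset.2 (hsymS t ht)⟩
      have hcos : (QuotientGroup.mk a : G ⧸ N) * (QuotientGroup.mk (t⁻¹ : G))⁻¹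
          = QuotientGroup.mk (a * t) := by
        rw [← mkmul, inv_inv]
      have single : w * (h (QuotientGroup.mk a) - h (QuotientGroup.mk (a * t))) ^ 2 ≤ E := by
        have t1 : w ≤ -f t⁻¹ := Finset.inf'_le _ htF
        have t2 : (-f t⁻¹) * (h (QuotientGroup.mk a)
              - h ((QuotientGroup.mk a : G ⧸ N) * (QuotientGroup.mk (t⁻¹ : G))⁻¹)) ^ 2
            ≤ ∑ s ∈ F', (-f s) * (h (QuotientGroup.mk a)
              - h ((QuotientGroup.mk a : G ⧸ N) * (QuotientGroup.mk s)⁻¹)) ^ 2 :=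
          Finset.single_le_sum (Etermnn _) htF
        have t3 : ∑ s ∈ F', (-f s) * (h (QuotientGroup.mk a)
              - h ((QuotientGroup.mk a : G ⧸ N) * (QuotientGroup.mk s)⁻¹)) ^ 2 ≤ E := by
          rw [hE]
          exact Finset.single_le_sum (fun c _ => Finset.sum_nonneg (Etermnn c)) (Finset.mem_univ _)
        rw [hcos] at t2
        nlinarith [sq_nonneg (h (QuotientGroup.mk a) - h (QuotientGroup.mk (a * t)))]
      have sq1 : (h (QuotientGroup.mk (a * t)) - h (QuotientGroup.mk a)) ^ 2 ≤ E / w := by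
        rw [le_div_iff₀ wpos]
        nlinarith [single]
      calc |h (QuotientGroup.mk (a * t)) - h (QuotientGroup.mk a)|
          = Real.sqrt ((h (QuotientGroup.mk (a * t)) - h (QuotientGroup.mk a)) ^ 2) :=
            (Real.sqrt_sq_eq_abs _).symm
        _ ≤ B := Real.sqrt_le_sqrt sq1
  -- path bound
  have pathb : ∀ (l : List G), (∀ t ∈ l, t ∈ Function.support f) → ∀ a : G,
      |h (QuotientGroup.mk (a * l.prod)) - h (QuotientGroup.mk a)| ≤ l.length * B := by
    intro l
    induction l with
    | nil => intro _ a; simp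
    | cons t l ih =>
        intro hmem a
        have h1 := stepb a t (hmem t List.mem_cons_self)
        have h2 := ih (fun x hx => hmem x (List.mem_cons_of_mem _ hx)) (a * t)
        have e0 : a * (t :: l).prod = (a * t) * l.prod := by
          rw [List.prod_cons, mul_assoc]
        rw [e0]
        calc |h (QuotientGroup.mk ((a * t) * l.prod)) - h (QuotientGroup.mk a)|
            ≤ |h (QuotientGroup.mk ((a * t) * l.prod)) - h (QuotientGroup.mk (a * t))|
              + |h (QuotientGroup.mk (a * t)) - h (QuotientGroup.mk a)| := abs_sub_le _ _ _
          _ ≤ l.length * B + B := add_le_add h2 h1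
          _ = ((t :: l).length : ℝ) * B := by
              push_cast [List.length_cons]
              ring
  -- dichotomy for the maximum
  have dmax : h c₀ = h c₁ ∨ ∃ x ∈ Gg, h (QuotientGroup.mk x) = h c₀ := by
    by_cases hex : ∃ x ∈ Gg, h (QuotientGroup.mk x) = h c₀
    · exact Or.inr hex
    · left
      have hQ : ∀ a : G, h (QuotientGroup.mk a) = h c₀ →
          ∀ s ∈ Function.support f, h (QuotientGroup.mk (a * s⁻¹)) = h c₀ := by
        intro a ha s hs
        have hu0 : u (QuotientGroup.mk a) = 0 := by
          rw [ueq]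
          apply Finset.sum_eq_zero
          intro x hx
          by_cases hmk : (QuotientGroup.mk x : G ⧸ N) = QuotientGroup.mk a
          · exact absurd ⟨x, hx, by rw [hmk, ha]⟩ hex
          · simp [hmk]
        have sum0 : ∑ s' ∈ F', (-f s') * (h (QuotientGroup.mk a)
            - h ((QuotientGroup.mk a : G ⧸ N) * (QuotientGroup.mk s')⁻¹)) = 0 := by
          rw [key1]
          exact hu0
        have eachnn : ∀ s' ∈ F', 0 ≤ (-f s') * (h (QuotientGroup.mk a)
            - h ((QuotientGroup.mk a : G ⧸ N) * (QuotientGroup.mk s')⁻¹)) := by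
          intro s' hs'
          apply mul_nonneg (wei s' hs')
          have hle := hc₀ ((QuotientGroup.mk a : G ⧸ N) * (QuotientGroup.mk s')⁻¹)
          rw [← ha] at hle
          linarith
        have each0 := (Finset.sum_eq_zero_iff_of_nonneg eachnn).1 sum0
        by_cases hs1 : s = 1
        · subst hs1; simpa using ha
        · have hsF : s ∈ F' := by
            rw [hF']; exact Finset.mem_erase.2 ⟨hs1, hfin.mem_toFinset.2 hs⟩
          have h0 := each0 s hsF
          have hfs : (0:ℝ) < -f s := by linarith [hmemF' s hsF]
          have hdz : h (QuotientGroup.mk a)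
              - h ((QuotientGroup.mk a : G ⧸ N) * (QuotientGroup.mk s)⁻¹) = 0 := by
            rcases mul_eq_zero.1 h0 with h' | h'
            · exact absurd h' (ne_of_gt hfs)
            · exact h'
          rw [mkmul]
          linarith [hdz, ha]
      obtain ⟨a₀, ha₀⟩ := QuotientGroup.mk_surjective c₀
      have hall := reach_all (Function.support f) hsymS htop
        (fun a => h (QuotientGroup.mk a) = h c₀) hQ a₀
        (show h (QuotientGroup.mk a₀) = h c₀ by rw [ha₀])
      obtain ⟨b₁, hb₁⟩ := QuotientGroup.mk_surjective c₁
      rw [← hb₁]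
      exact (hall b₁).symm
  -- dichotomy for the minimum
  have dmin : h c₀ = h c₁ ∨ ∃ y ∈ Gg, h (QuotientGroup.mk y) = h c₁ := by
    by_cases hex : ∃ y ∈ Gg, h (QuotientGroup.mk y) = h c₁
    · exact Or.inr hex
    · left
      have hQ : ∀ a : G, h (QuotientGroup.mk a) = h c₁ →
          ∀ s ∈ Function.support f, h (QuotientGroup.mk (a * s⁻¹)) = h c₁ := by
        intro a ha s hs
        have hu0 : u (QuotientGroup.mk a) = 0 := by
          rw [ueq]
          apply Finset.sum_eq_zero
          intro x hx
          by_cases hmk : (QuotientGroup.mk x : G ⧸ N) = QuotientGroup.mk a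
          · exact absurd ⟨x, hx, by rw [hmk, ha]⟩ hex
          · simp [hmk]
        have sum0 : ∑ s' ∈ F', (-f s') * (h (QuotientGroup.mk a)
            - h ((QuotientGroup.mk a : G ⧸ N) * (QuotientGroup.mk s')⁻¹)) = 0 := by
          rw [key1]
          exact hu0
        have eachnp : ∀ s' ∈ F', (-f s') * (h (QuotientGroup.mk a)
            - h ((QuotientGroup.mk a : G ⧸ N) * (QuotientGroup.mk s')⁻¹)) ≤ 0 := by
          intro s' hs'
          have hge := hc₁ ((QuotientGroup.mk a : G ⧸ N) * (QuotientGroup.mk s')⁻¹)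
          rw [← ha] at hge
          have hwnn := wei s' hs'
          nlinarith
        have each0 := (Finset.sum_eq_zero_iff_of_nonpos eachnp).1 sum0
        by_cases hs1 : s = 1
        · subst hs1; simpa using ha
        · have hsF : s ∈ F' := by
            rw [hF']; exact Finset.mem_erase.2 ⟨hs1, hfin.mem_toFinset.2 hs⟩
          have h0 := each0 s hsF
          have hfs : (0:ℝ) < -f s := by linarith [hmemF' s hsF]
          have hdz : h (QuotientGroup.mk a)
              - h ((QuotientGroup.mk a : G ⧸ N) * (QuotientGroup.mk s)⁻¹) = 0 := by
            rcases mul_eq_zero.1 h0 with h' | h'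
            · exact absurd h' (ne_of_gt hfs)
            · exact h'
          rw [mkmul]
          linarith [hdz, ha]
      obtain ⟨a₀, ha₀⟩ := QuotientGroup.mk_surjective c₁
      have hall := reach_all (Function.support f) hsymS htop
        (fun a => h (QuotientGroup.mk a) = h c₁) hQ a₀
        (show h (QuotientGroup.mk a₀) = h c₁ by rw [ha₀])
      obtain ⟨b₀, hb₀⟩ := QuotientGroup.mk_surjective c₀
      rw [← hb₀]
      exact hall b₀
  rcases dmax with heq | ⟨x, hxG, hx⟩
  · rw [heq]; linarith
  rcases dmin with heq | ⟨y, hyG, hy⟩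
  · rw [heq]; linarith
  have hpath := pathb (wlist (y⁻¹ * x)) (hw1 _) y
  rw [hw2 (y⁻¹ * x)] at hpath
  have hyx : y * (y⁻¹ * x) = x := by group
  rw [hyx] at hpath
  have hlen : ((wlist (y⁻¹ * x)).length : ℝ) ≤ (L : ℝ) := by
    have hlen' : (wlist (y⁻¹ * x)).length ≤ L := by
      have hmemp : ((x, y) : G × G) ∈ Gg ×ˢ Gg := Finset.mem_product.2 ⟨hxG, hyG⟩
      exact Finset.le_sup (f := fun p : G × G => (wlist (p.2⁻¹ * p.1)).length) hmemp
    exact_mod_cast hlen'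
  have osle : h c₀ - h c₁ ≤ (L : ℝ) * B := by
    calc h c₀ - h c₁ = h (QuotientGroup.mk x) - h (QuotientGroup.mk y) := by rw [hx, hy]
      _ ≤ |h (QuotientGroup.mk x) - h (QuotientGroup.mk y)| := le_abs_self _
      _ ≤ ((wlist (y⁻¹ * x)).length : ℝ) * B := hpath
      _ ≤ (L : ℝ) * B := mul_le_mul_of_nonneg_right hlen hBnn
  have hB2 : B ^ 2 ≤ 2 * ((h c₀ - h c₁) * gL1) / w := by
    rw [hB, Real.sq_sqrt (div_nonneg Enn (le_of_lt wpos))]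
    exact (div_le_div_iff_of_pos_right wpos).2 Ebound
  have hfinal : h c₀ - h c₁ ≤ D := by
    rcases eq_or_lt_of_le oscnn with h0 | hpos
    · rw [← h0]; exact hDnn
    · have sq : (h c₀ - h c₁) ^ 2 ≤ (L : ℝ) ^ 2 * (2 * ((h c₀ - h c₁) * gL1) / w) := by
        calc (h c₀ - h c₁) ^ 2 ≤ ((L : ℝ) * B) ^ 2 := by
              apply pow_le_pow_left₀ oscnn osle
          _ = (L : ℝ) ^ 2 * B ^ 2 := by ring
          _ ≤ (L : ℝ) ^ 2 * (2 * ((h c₀ - h c₁) * gL1) / w) :=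
              mul_le_mul_of_nonneg_left hB2 (by positivity)
      have keyq : (h c₀ - h c₁) * (h c₀ - h c₁) ≤ D * (h c₀ - h c₁) := by
        have e : (L : ℝ) ^ 2 * (2 * ((h c₀ - h c₁) * gL1) / w) = D * (h c₀ - h c₁) := by
          rw [hD]
          field_simp
        nlinarith [sq]
      exact le_of_mul_le_mul_right keyq hpos
  linarith
end
end

section
/- Let Γ be a countable group and f ∈ ℤΓ well-balanced. Let x : Γ → ℝ be bounded with xf = 0, i.e. Σ_{s∈Γ} x_{ws⁻¹} f_s = 0 for every w ∈ Γ, and suppose there is a finite-index subgroup Γ' ≤ Γ such that x_{γt} = x_t for all γ ∈ Γ' and t ∈ Γ. Then x is constant. -/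
open Filter Topology

theorem stmt15 {G : Type*} [Group G] [Countable G]
    (f : G → ℤ) (hf : WellBalancedZ f)
    (x : G → ℝ) (hbd : ∃ M : ℝ, ∀ s : G, |x s| ≤ M)
    (hxf : ∀ w : G, (∑ᶠ s : G, x (w * s⁻¹) * (f s : ℝ)) = 0)
    (Γ' : Subgroup G) (hfin : Γ'.FiniteIndex)
    (hper : ∀ γ ∈ Γ', ∀ t : G, x (γ * t) = x t) :
    ∃ c : ℝ, ∀ t : G, x t = c := by
  obtain ⟨hsupp, hsum, hnonpos, hsymm, hgen⟩ := hf
  -- the range of x is finite since x factors through the finite coset space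
  haveI : Finite (G ⧸ Γ') := Subgroup.finite_quotient_of_finiteIndex
  have hfac : ∀ g : G, x g = x (Quotient.out (QuotientGroup.mk (s := Γ') g⁻¹))⁻¹ := by
    intro g
    set a := Quotient.out (QuotientGroup.mk (s := Γ') g⁻¹) with ha
    have h1 : QuotientGroup.mk (s := Γ') g⁻¹ = QuotientGroup.mk a := by
      exact (QuotientGroup.out_eq' (QuotientGroup.mk (s := Γ') g⁻¹)).symm
    have h2 : (g⁻¹)⁻¹ * a ∈ Γ' := QuotientGroup.eq.mp h1
    have h3 : (g * a)⁻¹ ∈ Γ' := by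
      rw [inv_inv] at h2; exact Γ'.inv_mem h2
    have := hper _ h3 g
    rw [← this]
    congr 1
    group
  have hrange : (Set.range x).Finite := by
    have : Set.range x ⊆ Set.range (fun q : G ⧸ Γ' => x (Quotient.out q)⁻¹) := by
      rintro _ ⟨g, rfl⟩
      exact ⟨QuotientGroup.mk g⁻¹, (hfac g).symm⟩
    exact (Set.finite_range _).subset this
  obtain ⟨M, ⟨w₀, hw₀⟩, hMmax⟩ :=
    Set.Finite.exists_maximalFor id (Set.range x) hrange ⟨x 1, 1, rfl⟩
  have hle : ∀ t : G, x t ≤ M := by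
    intro t
    by_contra h
    push_neg at h
    exact absurd (hMmax (j := x t) ⟨t, rfl⟩ h.le) (not_le.mpr h)
  -- set up finite sums
  set T := hsupp.toFinset with hT
  have hsubT : Function.support f ⊆ ↑T := by simp [hT]
  have hsumT : (∑ s ∈ T, (f s : ℝ)) = 0 := by
    have := (finsum_eq_sum_of_support_subset f hsubT).symm.trans hsum
    exact_mod_cast congrArg (Int.cast : ℤ → ℝ) this
  have hxfT : ∀ w : G, (∑ s ∈ T, x (w * s⁻¹) * (f s : ℝ)) = 0 := by
    intro w
    rw [← hxf w]
    refine (finsum_eq_sum_of_support_subset _ ?_).symm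
    intro s hs
    apply hsubT
    intro h0
    simp [h0] at hs
  -- maximum principle
  have hmax : ∀ w : G, x w = M → ∀ s ∈ Function.support f, x (w * s⁻¹) = M := by
    intro w hw s hs
    have key : (∑ s ∈ T, (M - x (w * s⁻¹)) * (f s : ℝ)) = 0 := by
      have : (∑ s ∈ T, (M - x (w * s⁻¹)) * (f s : ℝ)) =
          M * (∑ s ∈ T, (f s : ℝ)) - (∑ s ∈ T, x (w * s⁻¹) * (f s : ℝ)) := by
        rw [Finset.mul_sum, ← Finset.sum_sub_distrib]
        exact Finset.sum_congr rfl (fun s _ => by ring)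
      rw [this, hsumT, hxfT, mul_zero, sub_zero]
    have hnp : ∀ s ∈ T, (M - x (w * s⁻¹)) * (f s : ℝ) ≤ 0 := by
      intro s _
      rcases eq_or_ne s 1 with rfl | hs1
      · simp [hw]
      · have h1 : (0:ℝ) ≤ M - x (w * s⁻¹) := by linarith [hle (w * s⁻¹)]
        have h2 : (f s : ℝ) ≤ 0 := by exact_mod_cast hnonpos s hs1
        exact mul_nonpos_of_nonneg_of_nonpos h1 h2
    have hall := (Finset.sum_eq_zero_iff_of_nonpos hnp).mp key
    have hsT : s ∈ T := hsupp.mem_toFinset.mpr hs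
    have := hall s hsT
    have hfs : (f s : ℝ) ≠ 0 := by exact_mod_cast hs
    have := mul_eq_zero.mp this
    rcases this with h | h
    · linarith [sub_eq_zero.mp h]
    · exact absurd h hfs
  -- the set of directions preserving the max value
  have hP : ∀ g : G, (∀ w : G, x w = M → x (w * g) = M) ∧
      (∀ w : G, x w = M → x (w * g⁻¹) = M) := by
    intro g
    have hg : g ∈ Subgroup.closure (Function.support f) := by rw [hgen]; trivial
    induction hg using Subgroup.closure_induction with
    | mem s hs =>
      constructor
      · intro w hw
        have hs' : s⁻¹ ∈ Function.support f := by
          simp only [Function.mem_support] at hs ⊢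
          rw [hsymm]; exact hs
        have := hmax w hw s⁻¹ hs'
        rwa [inv_inv] at this
      · intro w hw
        exact hmax w hw s hs
    | one => simp
    | mul a b _ _ ha hb =>
      constructor
      · intro w hw
        rw [← mul_assoc]
        exact hb.1 _ (ha.1 _ hw)
      · intro w hw
        rw [mul_inv_rev, ← mul_assoc]
        exact ha.2 _ (hb.2 _ hw)
    | inv a _ ha =>
      exact ⟨fun w hw => ha.2 w hw, fun w hw => by rw [inv_inv]; exact ha.1 w hw⟩
  refine ⟨M, fun t => ?_⟩
  have := (hP (w₀⁻¹ * t)).1 w₀ hw₀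
  rwa [mul_inv_cancel_left] at this
end

section
/- Let Γ be a countable group and f ∈ ℤΓ well-balanced. Then there exists C > 0 such that for every finite-index subgroup Γ' ≤ Γ and every x ∈ X_f with x_{γt} = x_t for all γ ∈ Γ', t ∈ Γ: if ‖x_s‖ < C for every s ∈ Γ (where ‖·‖ denotes the distance to 0 in ℝ/ℤ, i.e. ‖t + ℤ‖ = min_{m∈ℤ} |t − m|), then x is constant. -/
open Filter Topology

noncomputable def uLift' (u : UnitAddCircle) : ℝ := u.out - round u.out

lemma uLift'_coe (u : UnitAddCircle) : ((uLift' u : ℝ) : UnitAddCircle) = u := by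
  have h0 : (((round u.out : ℤ) : ℝ) : UnitAddCircle) = 0 := by
    rw [AddCircle.coe_eq_zero_iff]
    exact ⟨round u.out, by simp⟩
  calc ((uLift' u : ℝ) : UnitAddCircle)
      = ((u.out : ℝ) : UnitAddCircle) - (((round u.out : ℤ) : ℝ) : UnitAddCircle) :=
        QuotientAddGroup.mk_sub _ _ _
    _ = u := by rw [h0, sub_zero, QuotientAddGroup.out_eq']

lemma abs_uLift' (u : UnitAddCircle) : |uLift' u| = ‖u‖ := by
  conv_rhs => rw [← QuotientAddGroup.out_eq' u]
  rw [UnitAddCircle.norm_eq]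
  rfl

/-- There is `C > 0` such that every point of `X_f` fixed by a finite-index subgroup and
with all coordinates at distance `< C` from `0` in `ℝ/ℤ` is constant. -/
theorem stmt16 {G : Type*} [Group G] [Countable G]
    (f : G → ℤ) (hf : WellBalancedZ f) :
    ∃ C : ℝ, 0 < C ∧
      ∀ (Γ' : Subgroup G), Γ'.FiniteIndex →
        ∀ x ∈ XfSet f, (∀ γ ∈ Γ', ∀ t : G, x (γ * t) = x t) →
          (∀ s : G, ‖x s‖ < C) → ∃ c : UnitAddCircle, ∀ t : G, x t = c := by
  classical
  obtain ⟨hfin, hsum, hnonpos, hsymm, hgen⟩ := hf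
  by_cases hdeg : ∀ s : G, f s = 0
  · refine ⟨1, one_pos, fun Γ' _ x _ _ _ => ⟨x 1, fun t => ?_⟩⟩
    have hsupp : Function.support f = ∅ := Function.support_eq_empty_iff.mpr (funext hdeg)
    have hbot : (⊥ : Subgroup G) = ⊤ := by
      rw [← Subgroup.closure_empty, ← hsupp]; exact hgen
    have ht : t ∈ (⊥ : Subgroup G) := by rw [hbot]; trivial
    rw [Subgroup.mem_bot.mp ht]
  push_neg at hdeg
  obtain ⟨s₀, hs₀⟩ := hdeg
  set T : Finset G := hfin.toFinset with hT
  set T' : Finset G := insert 1 T with hT'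
  set N : ℤ := ∑ s ∈ T, |f s| with hN
  have hN1 : 1 ≤ N := by
    have hmem : s₀ ∈ T := hfin.mem_toFinset.mpr hs₀
    calc (1 : ℤ) ≤ |f s₀| := Int.one_le_abs hs₀
      _ ≤ N := Finset.single_le_sum (f := fun s => |f s|) (fun i _ => abs_nonneg _) hmem
  have hNpos : (0 : ℝ) < (N : ℝ) + 1 := by positivity
  set C : ℝ := 1 / ((N : ℝ) + 1) with hC
  have hss : Function.support f ⊆ (T' : Set G) := fun s hs =>
    Finset.mem_coe.mpr (Finset.mem_insert_of_mem (hfin.mem_toFinset.mpr hs))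
  have hsum' : ∑ s ∈ T', (f s : ℝ) = 0 := by
    have : ∑ s ∈ T', f s = 0 := by
      rw [← finsum_eq_sum_of_support_subset f hss]; exact hsum
    exact_mod_cast congrArg (fun n : ℤ => (n : ℝ)) this
  have habsN : ∑ s ∈ T', |(f s : ℝ)| = (N : ℝ) := by
    by_cases h1 : (1 : G) ∈ T
    · rw [hT', Finset.insert_eq_self.mpr h1, hN]
      push_cast
      rfl
    · have hf1 : f 1 = 0 := by
        by_contra h
        exact h1 (hfin.mem_toFinset.mpr h)
      rw [hT', Finset.sum_insert h1, hf1, hN]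
      push_cast
      simp
  refine ⟨C, by positivity, fun Γ' hΓ' x hxX hxinv hxnorm => ?_⟩
  haveI := hΓ'
  set r : G → ℝ := fun t => uLift' (x t) with hr
  have hrc : ∀ t, ((r t : ℝ) : UnitAddCircle) = x t := fun t => uLift'_coe (x t)
  have habs : ∀ t, |r t| < C := fun t => by rw [hr]; rw [abs_uLift']; exact hxnorm t
  -- real harmonicity
  have key0 : ∀ t : G, ∑ s ∈ T', (f s : ℝ) * r (t * s) = 0 := by
    intro t
    set Sm : ℝ := ∑ s ∈ T', (f s : ℝ) * r (t * s) with hSm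
    have hcoe : ((Sm : ℝ) : UnitAddCircle) = 0 := by
      have hterm : ∀ s ∈ T', (((f s : ℝ) * r (t * s) : ℝ) : UnitAddCircle) = f s • x (t * s) := by
        intro s _
        rw [← zsmul_eq_mul, QuotientAddGroup.mk_zsmul, hrc]
      have hmap : ((Sm : ℝ) : UnitAddCircle) = ∑ s ∈ T', f s • x (t * s) := by
        rw [hSm]
        rw [show ((↑(∑ s ∈ T', (f s : ℝ) * r (t * s)) : UnitAddCircle))
          = (QuotientAddGroup.mk' (AddSubgroup.zmultiples (1:ℝ)))
              (∑ s ∈ T', (f s : ℝ) * r (t * s)) from rfl]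
        rw [map_sum]
        exact Finset.sum_congr rfl fun s hs => hterm s hs
      rw [hmap]
      have hss2 : (Function.support fun s => f s • x (t * s)) ⊆ (T' : Set G) := by
        intro s hs
        apply hss
        intro h0
        apply hs
        simp only [h0, zero_zsmul]
      rw [← finsum_eq_sum_of_support_subset _ hss2]
      exact hxX t
    obtain ⟨n, hn⟩ := (AddCircle.coe_eq_zero_iff (1:ℝ)).mp hcoe
    have hb : |Sm| < 1 := by
      have h1 : |Sm| ≤ ∑ s ∈ T', |(f s : ℝ)| * |r (t * s)| := by
        refine (Finset.abs_sum_le_sum_abs _ _).trans ?_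
        refine le_of_eq (Finset.sum_congr rfl fun s _ => abs_mul _ _)
      have h2 : ∑ s ∈ T', |(f s : ℝ)| * |r (t * s)| ≤ ∑ s ∈ T', |(f s : ℝ)| * C :=
        Finset.sum_le_sum fun s _ =>
          mul_le_mul_of_nonneg_left (le_of_lt (habs _)) (abs_nonneg _)
      have h3 : ∑ s ∈ T', |(f s : ℝ)| * C = (N : ℝ) * C := by
        rw [← Finset.sum_mul, habsN]
      have h4 : (N : ℝ) * C < 1 := by
        rw [hC]
        rw [mul_one_div, div_lt_one hNpos]
        linarith
      linarith
    have hn0 : n = 0 := by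
      have : |(n : ℝ)| < 1 := by
        rw [show ((n : ℝ)) = Sm by rw [← hn]; simp]
        exact hb
      exact_mod_cast by
        have := abs_lt.mp this
        have h5 : -1 < (n : ℝ) := this.1
        have h6 : (n : ℝ) < 1 := this.2
        have : (-1 : ℤ) < n := by exact_mod_cast h5
        have : n < 1 := by exact_mod_cast h6
        omega
    rw [hn0] at hn
    simp at hn
    exact hn.symm
  -- finiteness of the range of r
  have hrange : (Set.range r).Finite := by
    apply Set.Finite.subset (Set.finite_range fun q : G ⧸ Γ' => r (Quotient.out q)⁻¹)
    rintro _ ⟨t, rfl⟩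
    refine ⟨QuotientGroup.mk t⁻¹, ?_⟩
    set o := (QuotientGroup.mk t⁻¹ : G ⧸ Γ').out with ho'
    have ho : (QuotientGroup.mk o : G ⧸ Γ') = QuotientGroup.mk t⁻¹ := QuotientGroup.out_eq' _
    have hmem : t * o ∈ Γ' := by
      have h := QuotientGroup.eq.mp ho.symm
      simpa using h
    have hx1 : x ((t * o)⁻¹ * t) = x t := hxinv _ (inv_mem hmem) t
    have h2 : (t * o)⁻¹ * t = o⁻¹ := by group
    show r o⁻¹ = r t
    rw [hr]
    simp only
    rw [← hx1, h2]
  obtain ⟨M, hMmem, hMmax⟩ := Set.exists_max_image (Set.range r) id hrange ⟨r 1, ⟨1, rfl⟩⟩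
  obtain ⟨t₀, ht₀⟩ := hMmem
  have hmax : ∀ t, r t ≤ r t₀ := fun t => ht₀ ▸ hMmax (r t) ⟨t, rfl⟩
  -- maximum principle step
  have step : ∀ t : G, r t = r t₀ → ∀ s ∈ T', r (t * s) = r t₀ := by
    intro t ht s hs
    have hzero : ∑ s ∈ T', (f s : ℝ) * (r t₀ - r (t * s)) = 0 := by
      have hexp : ∑ s ∈ T', (f s : ℝ) * (r t₀ - r (t * s))
          = (∑ s ∈ T', (f s : ℝ)) * r t₀ - ∑ s ∈ T', (f s : ℝ) * r (t * s) := by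
        rw [Finset.sum_mul, ← Finset.sum_sub_distrib]
        exact Finset.sum_congr rfl fun s _ => by ring
      rw [hexp, hsum', key0 t, zero_mul, sub_zero]
    have hnp : ∀ s ∈ T', (f s : ℝ) * (r t₀ - r (t * s)) ≤ 0 := by
      intro s _
      rcases eq_or_ne s 1 with rfl | hne
      · rw [mul_one, ht]
        simp
      · have h1 : (f s : ℝ) ≤ 0 := by exact_mod_cast hnonpos s hne
        exact mul_nonpos_of_nonpos_of_nonneg h1 (sub_nonneg.mpr (hmax _))
    have hterm := (Finset.sum_eq_zero_iff_of_nonpos hnp).mp hzero s hs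
    rcases Finset.mem_insert.mp hs with rfl | hsT
    · rw [mul_one, ht]
    · have hfs : f s ≠ 0 := hfin.mem_toFinset.mp hsT
      have hfs' : (f s : ℝ) ≠ 0 := by exact_mod_cast hfs
      rcases mul_eq_zero.mp hterm with h | h
      · exact absurd h hfs'
      · linarith [sub_eq_zero.mp h]
  -- propagate via generation
  have main : ∀ g : G, ∀ t : G, r t = r t₀ → r (t * g) = r t₀ ∧ r (t * g⁻¹) = r t₀ := by
    intro g
    have hg : g ∈ Subgroup.closure (Function.support f) := by rw [hgen]; trivial
    refine Subgroup.closure_induction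
      (p := fun g _ => ∀ t : G, r t = r t₀ → r (t * g) = r t₀ ∧ r (t * g⁻¹) = r t₀)
      ?_ ?_ ?_ ?_ hg
    · intro s hsupp t ht
      constructor
      · exact step t ht s (Finset.mem_insert_of_mem (hfin.mem_toFinset.mpr hsupp))
      · have hinv : s⁻¹ ∈ Function.support f := by
          rw [Function.mem_support, hsymm]
          exact hsupp
        exact step t ht s⁻¹ (Finset.mem_insert_of_mem (hfin.mem_toFinset.mpr hinv))
    · intro t ht
      exact ⟨by simpa using ht, by simpa using ht⟩
    · intro a b _ _ iha ihb t ht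
      constructor
      · rw [← mul_assoc]
        exact (ihb _ ((iha t ht).1)).1
      · rw [mul_inv_rev, ← mul_assoc]
        exact (iha _ ((ihb t ht).2)).2
    · intro a _ iha t ht
      exact ⟨(iha t ht).2, by rw [inv_inv]; exact (iha t ht).1⟩
  refine ⟨x t₀, fun t => ?_⟩
  have hrt : r t = r t₀ := by
    have h := (main (t₀⁻¹ * t) t₀ rfl).1
    rwa [mul_inv_cancel_left] at h
  rw [← hrc t, ← hrc t₀, hrt]
end

section
/- Let Γ be a countable group and f ∈ ℝΓ well-balanced. Then f has no left inverse in ℓ¹(Γ): there is no summable function g : Γ → ℝ (Σ_{s∈Γ} |g_s| < ∞) such that for every w ∈ Γ, Σ_{s∈Γ} g_{ws⁻¹} f_s equals 1 if w = e and 0 otherwise. Likewise there is no summable h : Γ → ℝ with, for every w ∈ Γ, Σ_{s∈Γ} f_s h_{s⁻¹w} equal to 1 if w = e and 0 otherwise. In particular f is not invertible in the convolution Banach algebra ℓ¹(Γ). -/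
open Filter Topology
open scoped Classical

/-- A well-balanced `f` has no left and no right inverse in `ℓ¹(Γ)`; in particular it is
not invertible in the convolution Banach algebra `ℓ¹(Γ)`.  (In each convolution below the
sum runs over the support of `f` and hence has only finitely many nonzero terms.) -/
theorem stmt19 {G : Type*} [Group G] [Countable G]
    (f : G → ℝ) (hf : WellBalancedR f) :
    (¬ ∃ g : G → ℝ, Summable (fun s : G => |g s|) ∧
        ∀ w : G, (∑ᶠ s : G, g (w * s⁻¹) * f s) = if w = 1 then 1 else 0) ∧
    (¬ ∃ h : G → ℝ, Summable (fun s : G => |h s|) ∧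
        ∀ w : G, (∑ᶠ s : G, f s * h (s⁻¹ * w)) = if w = 1 then 1 else 0) := by
  obtain ⟨hfin, hsum, -, -, -⟩ := hf
  classical
  set S : Finset G := hfin.toFinset with hS
  have hfS : ∑ s ∈ S, f s = 0 := by
    rw [← finsum_eq_sum f hfin]; exact hsum
  have hone : (∑' w : G, (if w = 1 then (1:ℝ) else 0)) = 1 := tsum_ite_eq (1 : G) (fun _ => (1 : ℝ))
  constructor
  · rintro ⟨g, hg, hconv⟩
    have hgsum : Summable g := hg.of_abs
    have key : ∀ w : G, (∑ s ∈ S, g (w * s⁻¹) * f s) = if w = 1 then 1 else 0 := by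
      intro w
      rw [← hconv w]
      refine (finsum_eq_sum_of_support_subset _ ?_).symm
      intro s hs
      simp only [Function.mem_support] at hs
      have : f s ≠ 0 := fun h => hs (by simp [h])
      simpa [hS] using this
    have hterm : ∀ s : G, Summable (fun w : G => g (w * s⁻¹) * f s) := fun s =>
      (((Equiv.mulRight s⁻¹).summable_iff.mpr hgsum).mul_right (f s))
    have htsum : ∀ s : G, (∑' w : G, g (w * s⁻¹) * f s) = (∑' w : G, g w) * f s := by
      intro s
      rw [tsum_mul_right]
      congr 1
      exact (Equiv.mulRight s⁻¹).tsum_eq g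
    have hsummable : Summable (fun w : G => ∑ s ∈ S, g (w * s⁻¹) * f s) :=
      summable_sum (fun s _ => hterm s)
    have h0 : (∑' w : G, ∑ s ∈ S, g (w * s⁻¹) * f s) = 0 := by
      rw [Summable.tsum_finsetSum (fun s _ => hterm s)]
      calc ∑ s ∈ S, ∑' w : G, g (w * s⁻¹) * f s
          = ∑ s ∈ S, (∑' w : G, g w) * f s := by
            exact Finset.sum_congr rfl (fun s _ => htsum s)
        _ = (∑' w : G, g w) * ∑ s ∈ S, f s := by rw [Finset.mul_sum]
        _ = 0 := by rw [hfS, mul_zero]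
    have : (0:ℝ) = 1 := by
      rw [← h0, ← hone]
      exact tsum_congr key
    norm_num at this
  · rintro ⟨h, hh, hconv⟩
    have hhsum : Summable h := hh.of_abs
    have key : ∀ w : G, (∑ s ∈ S, f s * h (s⁻¹ * w)) = if w = 1 then 1 else 0 := by
      intro w
      rw [← hconv w]
      refine (finsum_eq_sum_of_support_subset _ ?_).symm
      intro s hs
      simp only [Function.mem_support] at hs
      have : f s ≠ 0 := fun h0 => hs (by simp [h0])
      simpa [hS] using this
    have hterm : ∀ s : G, Summable (fun w : G => f s * h (s⁻¹ * w)) := fun s =>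
      (((Equiv.mulLeft s⁻¹).summable_iff.mpr hhsum).mul_left (f s))
    have htsum : ∀ s : G, (∑' w : G, f s * h (s⁻¹ * w)) = f s * (∑' w : G, h w) := by
      intro s
      rw [tsum_mul_left]
      congr 1
      exact (Equiv.mulLeft s⁻¹).tsum_eq h
    have h0 : (∑' w : G, ∑ s ∈ S, f s * h (s⁻¹ * w)) = 0 := by
      rw [Summable.tsum_finsetSum (fun s _ => hterm s)]
      calc ∑ s ∈ S, ∑' w : G, f s * h (s⁻¹ * w)
          = ∑ s ∈ S, f s * (∑' w : G, h w) := by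
            exact Finset.sum_congr rfl (fun s _ => htsum s)
        _ = (∑ s ∈ S, f s) * (∑' w : G, h w) := by rw [Finset.sum_mul]
        _ = 0 := by rw [hfS, zero_mul]
    have : (0:ℝ) = 1 := by
      rw [← h0, ← hone]
      exact tsum_congr key
    norm_num at this
end
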